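/- arXiv:0903.1453 — 6 statements merged into one kernel-verified Lean document; each statement's English description precedes it below -/
import Mathlib

section
/- There is a bijection between pairs of words w_0 ⪯ w_1 in W(n-k, k) (words of length n with k plus signs) and monotone increasing functions f : {1,...,n+1} → {1,...,n+1} satisfying f(i) ≤ i for all i and taking exactly k+1 distinct values. -/
/-- Positions (0-indexed, left to right) of the minus signs (`false`) in a word. -/
def minusPos (w : List Bool) : List ℕ :=
  (List.range w.length).filter (fun i => w.getD i true = false)

/-- `w ∈ W(n₋, n₊)`: the word has `n₋` minus signs and `n₊` plus signs. -/
def memW (nm np : ℕ) (w : List Bool) : Prop :=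
  w.count false = nm ∧ w.count true = np

/-- The partial order `⪯`: the i'th minus sign of `w₀` occurs at a position
less than or equal to the position of the i'th minus sign of `w₁`. -/
def wle (w₀ w₁ : List Bool) : Prop :=
  ∀ i, (minusPos w₀).getD i 0 ≤ (minusPos w₁).getD i 0

namespace Stmt5

lemma count_true_add_count_false (w : List Bool) : w.count true + w.count false = w.length := by
  induction w with
  | nil => rfl
  | cons x w ih => cases x <;> simp [List.count_cons] <;> omega

lemma mem_minusPos {w : List Bool} {i : ℕ} :
    i ∈ minusPos w ↔ i < w.length ∧ w.getD i true = false := by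
  simp [minusPos, List.mem_filter]

lemma sorted_minusPos (w : List Bool) : (minusPos w).Pairwise (· < ·) :=
  List.pairwise_lt_range.filter _

lemma minusPos_cons (x : Bool) (w : List Bool) :
    minusPos (x :: w) = (if x = false then [0] else []) ++ (minusPos w).map Nat.succ := by
  unfold minusPos
  rw [List.length_cons, List.range_succ_eq_map, List.filter_cons, List.filter_map]
  simp only [List.getD_cons_zero, List.getD_cons_succ]
  cases x <;> simp [Function.comp_def]

lemma length_minusPos (w : List Bool) : (minusPos w).length = w.count false := by
  induction w with
  | nil => rfl
  | cons x w ih =>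
    rw [minusPos_cons]
    cases x <;> simp [List.count_cons, ih]

/-- the word with minus signs exactly at the values of `a`. -/
def wordOf (n : ℕ) {m : ℕ} (a : Fin m → Fin n) : List Bool :=
  (List.range n).map (fun i => decide (∀ j, (a j : ℕ) ≠ i))

lemma length_wordOf (n : ℕ) {m : ℕ} (a : Fin m → Fin n) : (wordOf n a).length = n := by
  simp [wordOf]

lemma getElem_wordOf (n : ℕ) {m : ℕ} (a : Fin m → Fin n) (i : ℕ) (hi : i < (wordOf n a).length) :
    (wordOf n a)[i] = decide (∀ j, (a j : ℕ) ≠ i) := by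
  simp [wordOf]

lemma minusPos_wordOf (n : ℕ) {m : ℕ} (a : Fin m → Fin n) (ha : StrictMono a) :
    minusPos (wordOf n a) = List.ofFn (fun j => (a j : ℕ)) := by
  have hnodup1 : (minusPos (wordOf n a)).Nodup := (sorted_minusPos _).nodup
  have hnodup2 : (List.ofFn (fun j => (a j : ℕ))).Nodup := by
    rw [List.nodup_ofFn]
    exact fun i j h => ha.injective (Fin.val_injective h)
  have hmem : ∀ x, x ∈ minusPos (wordOf n a) ↔ x ∈ List.ofFn (fun j => (a j : ℕ)) := by
    intro x
    rw [mem_minusPos, List.mem_ofFn]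
    constructor
    · rintro ⟨hx, hx2⟩
      rw [length_wordOf] at hx
      rw [List.getD_eq_getElem _ _ (by simpa [length_wordOf] using hx),
        getElem_wordOf] at hx2
      simp only [decide_eq_false_iff_not, not_forall, not_not] at hx2
      obtain ⟨j, hj⟩ := hx2
      exact ⟨j, hj⟩
    · rintro ⟨j, hj⟩
      have hx : x < n := hj ▸ (a j).isLt
      refine ⟨by simpa [length_wordOf] using hx, ?_⟩
      rw [List.getD_eq_getElem _ _ (by simpa [length_wordOf] using hx), getElem_wordOf]
      simp only [decide_eq_false_iff_not, not_forall, not_not]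
      exact ⟨j, hj⟩
  have hperm : (minusPos (wordOf n a)).Perm (List.ofFn (fun j => (a j : ℕ))) :=
    (List.perm_ext_iff_of_nodup hnodup1 hnodup2).2 hmem
  have : IsAntisymm ℕ (· < ·) := ⟨fun _ _ h h' => absurd h (by omega)⟩
  refine List.Perm.eq_of_pairwise (fun _ _ _ _ h h' => absurd h (by omega)) (sorted_minusPos _) ?_ hperm
  rw [List.pairwise_ofFn]
  exact fun i j h => ha h

lemma count_false_wordOf (n : ℕ) {m : ℕ} (a : Fin m → Fin n) (ha : StrictMono a) :
    (wordOf n a).count false = m := by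
  rw [← length_minusPos, minusPos_wordOf n a ha, List.length_ofFn]

end Stmt5

namespace Stmt5

/-- The intermediate type: pairs of strictly monotone sequences with `a ≤ b`. -/
def Sp (m n : ℕ) : Type :=
  {ab : (Fin m → Fin n) × (Fin m → Fin n) //
    StrictMono ab.1 ∧ StrictMono ab.2 ∧ ∀ j, ab.1 j ≤ ab.2 j}

lemma exists_seq {n m : ℕ} (w : List Bool) (hf : w.count false = m) (hlen : w.length = n) :
    ∃ a : Fin m → Fin n, StrictMono a ∧
      (∀ j : Fin m, (a j : ℕ) = (minusPos w).getD j 0) ∧ wordOf n a = w := by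
  have hlm : (minusPos w).length = m := by rw [length_minusPos, hf]
  have hb : ∀ j : Fin m, (minusPos w).getD (j : ℕ) 0 < n := by
    intro j
    have hj : (j : ℕ) < (minusPos w).length := by omega
    rw [List.getD_eq_getElem _ _ hj]
    have := (mem_minusPos.1 (List.getElem_mem hj)).1
    omega
  refine ⟨fun j => ⟨(minusPos w).getD (j : ℕ) 0, hb j⟩, ?_, fun j => rfl, ?_⟩
  · intro i j hij
    have hi : (i : ℕ) < (minusPos w).length := by omega
    have hj : (j : ℕ) < (minusPos w).length := by omega
    have := (List.pairwise_iff_getElem.1 (sorted_minusPos w)) i j hi hj hij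
    simp only [Fin.mk_lt_mk]
    rwa [List.getD_eq_getElem _ _ hi, List.getD_eq_getElem _ _ hj]
  · apply List.ext_getElem (by rw [length_wordOf, hlen])
    intro i hi hi'
    rw [getElem_wordOf]
    have hin : i < n := by rwa [length_wordOf] at hi
    have key : (∃ j : Fin m, (minusPos w).getD (j : ℕ) 0 = i) ↔ w[i] = false := by
      constructor
      · rintro ⟨j, hj⟩
        have hjl : (j : ℕ) < (minusPos w).length := by omega
        rw [List.getD_eq_getElem _ _ hjl] at hj
        have := mem_minusPos.1 (hj ▸ List.getElem_mem hjl)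
        rw [List.getD_eq_getElem _ _ hi'] at this
        exact this.2
      · intro hw
        have : i ∈ minusPos w := by
          rw [mem_minusPos, List.getD_eq_getElem _ _ hi']
          exact ⟨hi', hw⟩
        obtain ⟨t, ht, hti⟩ := List.getElem_of_mem this
        exact ⟨⟨t, by omega⟩, by rw [List.getD_eq_getElem _ _ ht, hti]⟩
    cases hwi : w[i] with
    | false =>
      simp only [decide_eq_false_iff_not, not_forall, not_not]
      obtain ⟨j, hj⟩ := key.2 hwi
      exact ⟨j, hj⟩
    | true =>
      simp only [decide_eq_true_eq]
      intro j hj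
      have := key.1 ⟨j, hj⟩
      rw [hwi] at this; exact Bool.true_eq_false.mp this

/-- map from sequence pairs to word pairs -/
def toL (n k m : ℕ) (hmk : m + k = n) (s : Sp m n) :
    {p : List Bool × List Bool //
        memW (n - k) k p.1 ∧ memW (n - k) k p.2 ∧ wle p.1 p.2} := by
  obtain ⟨⟨a, b⟩, ha, hb, hab⟩ := s
  have key : ∀ (c : Fin m → Fin n), StrictMono c → memW (n - k) k (wordOf n c) := by
    intro c hc
    have h1 := count_true_add_count_false (wordOf n c)
    rw [count_false_wordOf n c hc, length_wordOf] at h1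
    exact ⟨by rw [count_false_wordOf n c hc]; omega, by omega⟩
  exact ⟨(wordOf n a, wordOf n b), key a ha, key b hb, by
    intro i
    rw [minusPos_wordOf n a ha, minusPos_wordOf n b hb]
    by_cases him : i < m
    · rw [List.getD_eq_getElem _ _ (by simpa using him),
        List.getD_eq_getElem _ _ (by simpa using him)]
      simp only [List.getElem_ofFn]
      exact hab _
    · rw [List.getD_eq_default _ _ (by simpa using not_lt.1 him)]
      exact Nat.zero_le _⟩

lemma toL_bijective (n k m : ℕ) (hmk : m + k = n) : Function.Bijective (toL n k m hmk) := by
  constructor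
  · rintro ⟨⟨a, b⟩, ha, hb, hab⟩ ⟨⟨a', b'⟩, ha', hb', hab'⟩ h
    simp only [toL, Subtype.mk.injEq, Prod.mk.injEq] at h
    have h1 : minusPos (wordOf n a) = minusPos (wordOf n a') := by rw [h.1]
    have h2 : minusPos (wordOf n b) = minusPos (wordOf n b') := by rw [h.2]
    rw [minusPos_wordOf n a ha, minusPos_wordOf n a' ha'] at h1
    rw [minusPos_wordOf n b hb, minusPos_wordOf n b' hb'] at h2
    have e1 : a = a' := by
      funext j
      exact Fin.val_injective (congrFun (List.ofFn_injective h1) j)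
    have e2 : b = b' := by
      funext j
      exact Fin.val_injective (congrFun (List.ofFn_injective h2) j)
    subst e1; subst e2; rfl
  · rintro ⟨⟨w0, w1⟩, h0, h1, h01⟩
    have hl0 : w0.length = n := by
      have := count_true_add_count_false w0
      rw [h0.1, h0.2] at this; omega
    have hl1 : w1.length = n := by
      have := count_true_add_count_false w1
      rw [h1.1, h1.2] at this; omega
    have hf0 : w0.count false = m := by rw [h0.1]; omega
    have hf1 : w1.count false = m := by rw [h1.1]; omega
    obtain ⟨a, ha, haD, haw⟩ := exists_seq w0 hf0 hl0
    obtain ⟨b, hb, hbD, hbw⟩ := exists_seq w1 hf1 hl1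
    refine ⟨⟨(a, b), ha, hb, fun j => ?_⟩, ?_⟩
    · have := h01 (j : ℕ)
      rw [← haD j, ← hbD j] at this
      exact this
    · simp only [toL]
      exact Subtype.ext (Prod.ext haw hbw)

end Stmt5

namespace Stmt5

open Finset

variable {n m : ℕ}

/-- number of "plus" positions (positions not hit by `x`) below `t`. -/
def pcount (x : Fin m → Fin n) (t : ℕ) : ℕ :=
  ((Finset.range t).filter (fun i => ∀ j, (x j : ℕ) ≠ i)).card

/-- number of indices `j` with `x j < t`. -/
def cIdx (x : Fin m → Fin n) (t : ℕ) : ℕ :=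
  (Finset.univ.filter (fun j : Fin m => (x j : ℕ) < t)).card

lemma pcount_zero (x : Fin m → Fin n) : pcount x 0 = 0 := by simp [pcount]

lemma pcount_succ (x : Fin m → Fin n) (t : ℕ) :
    pcount x (t + 1) = pcount x t + (if ∀ j, (x j : ℕ) ≠ t then 1 else 0) := by
  unfold pcount
  rw [Finset.range_add_one, Finset.filter_insert]
  split
  · rw [Finset.card_insert_of_notMem (by simp), Nat.add_comm]
  · rw [Nat.add_zero]

lemma pcount_mono (x : Fin m → Fin n) : Monotone (pcount x) := by
  intro s t hst
  exact Finset.card_le_card (Finset.filter_subset_filter _ (Finset.range_subset_range.2 hst))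

lemma pcount_succ_le (x : Fin m → Fin n) (t : ℕ) : pcount x (t + 1) ≤ pcount x t + 1 := by
  rw [pcount_succ]; split <;> omega

lemma cIdx_eq (x : Fin m → Fin n) (hx : Function.Injective x) (t : ℕ) :
    ((Finset.range t).filter (fun i => ∃ j, (x j : ℕ) = i)).card = cIdx x t := by
  unfold cIdx
  rw [← Finset.card_image_of_injOn (f := fun j => (x j : ℕ))
    (fun j _ j' _ h => hx (Fin.val_injective h))]
  congr 1
  ext i
  simp only [Finset.mem_image, Finset.mem_filter, Finset.mem_range, Finset.mem_univ, true_and]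
  constructor
  · rintro ⟨hit, j, hj⟩; exact ⟨j, by omega, hj⟩
  · rintro ⟨j, hjt, hj⟩; exact ⟨by omega, j, hj⟩

lemma pcount_add_cIdx (x : Fin m → Fin n) (hx : Function.Injective x) (t : ℕ) :
    pcount x t + cIdx x t = t := by
  rw [← cIdx_eq x hx]
  unfold pcount
  have := Finset.card_filter_add_card_filter_not
    (s := Finset.range t) (p := fun i => ∀ j, (x j : ℕ) ≠ i)
  rw [Finset.card_range] at this
  have heq : (Finset.range t).filter (fun i => ∃ j, (x j : ℕ) = i)
      = (Finset.range t).filter (fun i => ¬ ∀ j, (x j : ℕ) ≠ i) := by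
    ext i; simp
  rw [heq]
  exact this

lemma pcount_top (x : Fin m → Fin n) (hx : Function.Injective x) :
    pcount x n + m = n := by
  have h := pcount_add_cIdx x hx n
  have : cIdx x n = m := by
    unfold cIdx
    rw [Finset.filter_true_of_mem (fun j _ => (x j).isLt), Finset.card_univ, Fintype.card_fin]
  omega

lemma cIdx_le_cIdx (a b : Fin m → Fin n) (hab : ∀ j, a j ≤ b j) (t : ℕ) :
    cIdx b t ≤ cIdx a t := by
  apply Finset.card_le_card
  intro j hj
  simp only [cIdx, Finset.mem_filter, Finset.mem_univ, true_and] at hj ⊢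
  exact lt_of_le_of_lt (hab j) hj

lemma pcount_le_pcount (a b : Fin m → Fin n) (ha : Function.Injective a)
    (hb : Function.Injective b) (hab : ∀ j, a j ≤ b j) (t : ℕ) :
    pcount a t ≤ pcount b t := by
  have h1 := pcount_add_cIdx a ha t
  have h2 := pcount_add_cIdx b hb t
  have := cIdx_le_cIdx a b hab t
  omega

/-- discrete intermediate value theorem -/
lemma ivt (g : ℕ → ℕ) (h0 : g 0 = 0) (hstep : ∀ t, g (t + 1) ≤ g t + 1) :
    ∀ t c, c ≤ g t → ∃ s, s ≤ t ∧ g s = c := by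
  intro t
  induction t with
  | zero => intro c hc; exact ⟨0, le_refl _, by omega⟩
  | succ t ih =>
    intro c hc
    by_cases h : c ≤ g t
    · obtain ⟨s, hs1, hs2⟩ := ih c h
      exact ⟨s, by omega, hs2⟩
    · exact ⟨t + 1, le_refl _, by have := hstep t; omega⟩

/-- pointwise domination from counting domination -/
lemma ptwise_of_counts (a b : Fin m → Fin n) (ha : StrictMono a) (hb : StrictMono b)
    (h : ∀ t : ℕ, cIdx b t ≤ cIdx a t) : ∀ j, a j ≤ b j := by
  intro j
  by_contra hcon
  push_neg at hcon
  set t := (b j : ℕ) + 1 with ht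
  have h1 : (j : ℕ) + 1 ≤ cIdx b t := by
    have : Finset.Iic j ⊆ Finset.univ.filter (fun x : Fin m => (b x : ℕ) < t) := by
      intro x hx
      simp only [Finset.mem_Iic] at hx
      simp only [Finset.mem_filter, Finset.mem_univ, true_and]
      have := hb.monotone hx
      omega
    have := Finset.card_le_card this
    rwa [Fin.card_Iic] at this
  have h2 : cIdx a t ≤ (j : ℕ) := by
    have : Finset.univ.filter (fun x : Fin m => (a x : ℕ) < t) ⊆ Finset.Iio j := by
      intro x hx
      simp only [Finset.mem_filter, Finset.mem_univ, true_and] at hx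
      simp only [Finset.mem_Iio]
      have hax : a x < a j := by
        have : (a x : ℕ) < (a j : ℕ) := by omega
        exact this
      exact ha.lt_iff_lt.1 hax
    have := Finset.card_le_card this
    rwa [Fin.card_Iio] at this
  have := h t
  omega

end Stmt5

namespace Stmt5

variable {n k m : ℕ}

/-- least `t` with `pcount b t = c`. -/
noncomputable def vv (b : Fin m → Fin n) (c : ℕ) : ℕ := sInf {t | pcount b t = c}

/-- the monotone function associated to a pair of sequences. -/
noncomputable def Ffun (a b : Fin m → Fin n) : Fin (n+1) → Fin (n+1) :=
  fun i => ⟨min (vv b (pcount a (i : ℕ))) (i : ℕ), by have := i.isLt; omega⟩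

lemma pcount_eq_k (hmk : m + k = n) (x : Fin m → Fin n) (hx : Function.Injective x) :
    pcount x n = k := by
  have := pcount_top x hx; omega

lemma pcount_le_k (hmk : m + k = n) (x : Fin m → Fin n) (hx : Function.Injective x)
    {t : ℕ} (ht : t ≤ n) : pcount x t ≤ k := by
  have h1 := pcount_mono x ht
  have := pcount_eq_k hmk x hx
  omega

lemma vv_le (b : Fin m → Fin n) {c t : ℕ} (h : c ≤ pcount b t) : vv b c ≤ t := by
  obtain ⟨s, hs1, hs2⟩ := ivt (pcount b) (pcount_zero b) (pcount_succ_le b) t c h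
  exact le_trans (Nat.sInf_le hs2) hs1

lemma vv_zero (b : Fin m → Fin n) : vv b 0 = 0 :=
  Nat.le_zero.1 (Nat.sInf_le (pcount_zero b))

lemma vv_spec (hmk : m + k = n) (b : Fin m → Fin n) (hb : Function.Injective b)
    {c : ℕ} (hc : c ≤ k) : pcount b (vv b c) = c ∧ vv b c ≤ n := by
  have hk : pcount b n = k := pcount_eq_k hmk b hb
  obtain ⟨s, hs1, hs2⟩ := ivt (pcount b) (pcount_zero b) (pcount_succ_le b) n c (by omega)
  exact ⟨Nat.sInf_mem (⟨s, hs2⟩ : {t | pcount b t = c}.Nonempty),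
    le_trans (Nat.sInf_le hs2) hs1⟩

section FF

variable (hmk : m + k = n) (a b : Fin m → Fin n)
  (ha : StrictMono a) (hb : StrictMono b) (hab : ∀ j, a j ≤ b j)

include hmk ha hb hab

lemma vv_pcount_le_self (i : ℕ) (hi : i ≤ n) : vv b (pcount a i) ≤ i :=
  vv_le b (pcount_le_pcount a b ha.injective hb.injective hab i)

lemma Ffun_val (i : Fin (n+1)) : (Ffun a b i : ℕ) = vv b (pcount a (i : ℕ)) := by
  have h := vv_pcount_le_self hmk a b ha hb hab (i : ℕ) (by have := i.isLt; omega)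
  simp only [Ffun]
  omega

lemma Ffun_le (i : Fin (n+1)) : Ffun a b i ≤ i := by
  have h := vv_pcount_le_self hmk a b ha hb hab (i : ℕ) (by have := i.isLt; omega)
  rw [Fin.le_def, Ffun_val hmk a b ha hb hab]
  exact h

lemma Ffun_mono : Monotone (Ffun a b) := by
  intro i i' hii
  rw [Fin.le_def, Ffun_val hmk a b ha hb hab, Ffun_val hmk a b ha hb hab]
  have hc' : pcount a (i' : ℕ) ≤ k :=
    pcount_le_k hmk a ha.injective (by have := i'.isLt; omega)
  have hspec := vv_spec hmk b hb.injective hc'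
  apply vv_le
  rw [hspec.1]
  exact pcount_mono a (Fin.le_def.1 hii)

lemma Ffun_zero' : Ffun a b 0 = 0 := by
  apply Fin.ext
  simp [Ffun, pcount_zero, vv_zero]

lemma Ffun_jump (i : Fin n) :
    Ffun a b i.castSucc = Ffun a b i.succ ↔ ∃ j, (a j : ℕ) = (i : ℕ) := by
  have hc : pcount a ((i : ℕ) + 1) = pcount a (i : ℕ) + (if ∀ j, (a j : ℕ) ≠ (i : ℕ) then 1 else 0) :=
    pcount_succ a (i : ℕ)
  have hv1 : (Ffun a b i.castSucc : ℕ) = vv b (pcount a (i : ℕ)) := by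
    rw [Ffun_val hmk a b ha hb hab]; simp
  have hv2 : (Ffun a b i.succ : ℕ) = vv b (pcount a ((i : ℕ) + 1)) := by
    rw [Ffun_val hmk a b ha hb hab]; simp
  by_cases h : ∃ j, (a j : ℕ) = (i : ℕ)
  · have : pcount a ((i : ℕ) + 1) = pcount a (i : ℕ) := by
      obtain ⟨j, hj⟩ := h
      rw [hc, if_neg (fun hall => hall j hj), Nat.add_zero]
    simp only [h, iff_true]
    apply Fin.ext
    rw [hv1, hv2, this]
  · have hstep : pcount a ((i : ℕ) + 1) = pcount a (i : ℕ) + 1 := by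
      rw [hc, if_pos]; intro j hj; exact h ⟨j, hj⟩
    simp only [h, iff_false]
    intro hcon
    have h1 : pcount a (i : ℕ) ≤ k := pcount_le_k hmk a ha.injective (by have := i.isLt; omega)
    have h2 : pcount a ((i : ℕ) + 1) ≤ k := pcount_le_k hmk a ha.injective (by have := i.isLt; omega)
    have e1 := (vv_spec hmk b hb.injective h1).1
    have e2 := (vv_spec hmk b hb.injective h2).1
    have : vv b (pcount a (i : ℕ)) = vv b (pcount a ((i : ℕ) + 1)) := by
      have := congrArg (Fin.val) hcon
      rw [hv1, hv2] at this
      exact this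
    rw [this, e2] at e1
    omega

lemma Ffun_mem_iff (x : Fin (n+1)) :
    x ∈ Finset.univ.image (Ffun a b) ↔ ∃ c, c ≤ k ∧ vv b c = (x : ℕ) := by
  constructor
  · intro hx
    obtain ⟨i, _, hi⟩ := Finset.mem_image.1 hx
    refine ⟨pcount a (i : ℕ), pcount_le_k hmk a ha.injective (by have := i.isLt; omega), ?_⟩
    rw [← Ffun_val hmk a b ha hb hab, hi]
  · rintro ⟨c, hc, hvc⟩
    have hk : pcount a n = k := pcount_eq_k hmk a ha.injective
    obtain ⟨s, hs1, hs2⟩ := ivt (pcount a) (pcount_zero a) (pcount_succ_le a) n c (by omega)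
    refine Finset.mem_image.2 ⟨⟨s, by omega⟩, Finset.mem_univ _, ?_⟩
    apply Fin.ext
    rw [Ffun_val hmk a b ha hb hab]
    simp only
    rw [hs2, hvc]

lemma vv_char {y : ℕ} (hy : y < n) :
    (∃ c, c ≤ k ∧ vv b c = y + 1) ↔ ¬ ∃ j, (b j : ℕ) = y := by
  have hstep : pcount b (y + 1) = pcount b y + (if ∀ j, (b j : ℕ) ≠ y then 1 else 0) :=
    pcount_succ b y
  constructor
  · rintro ⟨c, hc, hvc⟩
    have e1 := (vv_spec hmk b hb.injective hc).1
    rw [hvc] at e1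
    rintro ⟨j, hj⟩
    have : pcount b (y + 1) = pcount b y := by
      rw [hstep, if_neg (fun hall => hall j hj), Nat.add_zero]
    have hle : vv b c ≤ y := vv_le b (by omega)
    omega
  · intro hno
    have hs : pcount b (y + 1) = pcount b y + 1 := by
      rw [hstep, if_pos]; intro j hj; exact hno ⟨j, hj⟩
    set c := pcount b (y + 1) with hcdef
    have hc : c ≤ k := pcount_le_k hmk b hb.injective (by omega)
    refine ⟨c, hc, ?_⟩
    have hle : vv b c ≤ y + 1 := vv_le b (le_refl _)
    have e1 := (vv_spec hmk b hb.injective hc).1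
    by_contra hne
    have h2 : vv b c ≤ y := by omega
    have := pcount_mono b h2
    omega

lemma Ffun_im (x : Fin (n+1)) :
    x ∈ Finset.univ.image (Ffun a b) ↔
      ((x : ℕ) = 0 ∨ (1 ≤ (x : ℕ) ∧ ¬ ∃ j, (b j : ℕ) = (x : ℕ) - 1)) := by
  rw [Ffun_mem_iff hmk a b ha hb hab]
  rcases Nat.eq_zero_or_pos (x : ℕ) with h0 | h0
  · simp only [h0, true_or, iff_true]
    exact ⟨0, Nat.zero_le _, by rw [vv_zero]⟩
  · have hxn : (x : ℕ) ≤ n := by have := x.isLt; omega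
    obtain ⟨y, hy'⟩ : ∃ y, (x : ℕ) = y + 1 := ⟨(x : ℕ) - 1, by omega⟩
    have hy : y < n := by omega
    have hchar := vv_char hmk a b ha hb hab (y := y) hy
    rw [hy']
    simp only [Nat.add_sub_cancel]
    rw [hchar]
    constructor
    · intro h; exact Or.inr ⟨by omega, h⟩
    · rintro (h | h)
      · exact absurd h (by omega)
      · exact h.2

lemma Ffun_card : (Finset.univ.image (Ffun a b)).card = k + 1 := by
  rw [← Finset.card_range (k + 1)]
  refine Finset.card_bij (fun x _ => pcount b (x : ℕ)) ?_ ?_ ?_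
  · intro x hx
    show pcount b (x : ℕ) ∈ Finset.range (k + 1)
    obtain ⟨c, hc, hvc⟩ := (Ffun_mem_iff hmk a b ha hb hab x).1 hx
    rw [← hvc, (vv_spec hmk b hb.injective hc).1]
    simp only [Finset.mem_range]
    omega
  · intro x hx x' hx' hpp
    replace hpp : pcount b (x : ℕ) = pcount b (x' : ℕ) := hpp
    obtain ⟨c, hc, hvc⟩ := (Ffun_mem_iff hmk a b ha hb hab x).1 hx
    obtain ⟨c', hc', hvc'⟩ := (Ffun_mem_iff hmk a b ha hb hab x').1 hx'
    have e1 := (vv_spec hmk b hb.injective hc).1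
    have e2 := (vv_spec hmk b hb.injective hc').1
    apply Fin.ext
    rw [← hvc, ← hvc'] at hpp ⊢
    rw [e1, e2] at hpp
    rw [hpp]
  · intro c hc
    simp only [Finset.mem_range] at hc
    have hck : c ≤ k := by omega
    have hspec := vv_spec hmk b hb.injective hck
    refine ⟨⟨vv b c, by omega⟩, (Ffun_mem_iff hmk a b ha hb hab _).2 ⟨c, hck, rfl⟩, ?_⟩
    show pcount b ((⟨vv b c, by omega⟩ : Fin (n+1)) : ℕ) = c
    simpa using hspec.1

end FF

end Stmt5

namespace Stmt5

variable {n k m : ℕ}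

lemma min_jump {g : Fin (n+1) → Fin (n+1)} (hg : Monotone g) {i : Fin n}
    (hne : g i.castSucc ≠ g i.succ) {x : Fin (n+1)}
    (hx : x ∈ Finset.univ.image g) (hgt : g i.castSucc < x) : g i.succ ≤ x := by
  obtain ⟨s, _, rfl⟩ := Finset.mem_image.1 hx
  by_cases hs : s ≤ i.castSucc
  · exact absurd (hg hs) (not_le.2 hgt)
  · push_neg at hs
    have : i.succ ≤ s := by
      rw [Fin.le_def, Fin.val_succ]
      rw [Fin.lt_def, Fin.coe_castSucc] at hs
      omega
    exact hg this

lemma eq_of_data (F G : Fin (n+1) → Fin (n+1)) (hF : Monotone F) (hG : Monotone G)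
    (h0 : F 0 = G 0)
    (hj : ∀ i : Fin n, (F i.castSucc = F i.succ ↔ G i.castSucc = G i.succ))
    (him : Finset.univ.image F = Finset.univ.image G) : F = G := by
  funext x
  induction x using Fin.induction with
  | zero => exact h0
  | succ i ih =>
    by_cases hc : F i.castSucc = F i.succ
    · have hc' := (hj i).1 hc
      rw [← hc, ih, hc']
    · have hc' : ¬ G i.castSucc = G i.succ := fun h => hc ((hj i).2 h)
      have hFlt : F i.castSucc < F i.succ :=
        lt_of_le_of_ne (hF (le_of_lt (Fin.castSucc_lt_succ (i := i)))) hc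
      have hGlt : G i.castSucc < G i.succ :=
        lt_of_le_of_ne (hG (le_of_lt (Fin.castSucc_lt_succ (i := i)))) hc'
      apply le_antisymm
      · apply min_jump hF hc (him.symm ▸ Finset.mem_image_of_mem G (Finset.mem_univ i.succ))
        rw [ih]; exact hGlt
      · apply min_jump hG hc' (him ▸ Finset.mem_image_of_mem F (Finset.mem_univ i.succ))
        rw [← ih]; exact hFlt

section Recon

variable (f : Fin (n+1) → Fin (n+1))

/-- non-jump positions -/
def Aset (f : Fin (n+1) → Fin (n+1)) : Finset (Fin n) :=
  Finset.univ.filter (fun i : Fin n => f i.castSucc = f i.succ)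

/-- positions `i` with `i+1` not in the image -/
def Bset (f : Fin (n+1) → Fin (n+1)) : Finset (Fin n) :=
  Finset.univ.filter (fun i : Fin n => ¬ ∃ i', f i' = i.succ)

variable (hmono : Monotone f) (hle : ∀ i, f i ≤ i) (hcard : (Finset.univ.image f).card = k + 1)

lemma f_zero (hle : ∀ i, f i ≤ i) : f 0 = 0 := le_antisymm (hle 0) (Fin.zero_le _)

lemma succ_inj_on_jumps (hmono : Monotone f) :
    ∀ i i' : Fin n, ¬ f i.castSucc = f i.succ → ¬ f i'.castSucc = f i'.succ →
      f i.succ = f i'.succ → i = i' := by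
  have key : ∀ i i' : Fin n, i < i' → ¬ f i'.castSucc = f i'.succ →
      f i.succ = f i'.succ → False := by
    intro i i' hii hj' heq
    have h1 : i.succ ≤ i'.castSucc := by
      rw [Fin.le_def, Fin.val_succ, Fin.coe_castSucc]
      rw [Fin.lt_def] at hii
      omega
    have h2 : f i.succ ≤ f i'.castSucc := hmono h1
    have h3 : f i'.castSucc < f i'.succ :=
      lt_of_le_of_ne (hmono (le_of_lt (Fin.castSucc_lt_succ (i := i')))) hj'
    rw [heq] at h2
    exact absurd h2 (not_le.2 h3)
  intro i i' hj hj' heq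
  rcases lt_trichotomy i i' with h | h | h
  · exact absurd (key i i' h hj' heq) (fun x => x)
  · exact h
  · exact absurd (key i' i h hj heq.symm) (fun x => x)

lemma erase_card (hle : ∀ i, f i ≤ i) (hcard : (Finset.univ.image f).card = k + 1) :
    ((Finset.univ.image f).erase 0).card = k := by
  rw [Finset.card_erase_of_mem
    (Finset.mem_image.2 ⟨0, Finset.mem_univ _, f_zero f hle⟩), hcard]
  omega

lemma Aset_card (hmk : m + k = n) (hmono : Monotone f) (hle : ∀ i, f i ≤ i)
    (hcard : (Finset.univ.image f).card = k + 1) : (Aset f).card = m := by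
  have hJ : (Finset.univ.filter (fun i : Fin n => ¬ f i.castSucc = f i.succ)).card = k := by
    rw [← erase_card f hle hcard]
    refine Finset.card_bij (fun i _ => f i.succ) ?_ ?_ ?_
    · intro i hi
      show f i.succ ∈ (Finset.univ.image f).erase 0
      simp only [Finset.mem_filter, Finset.mem_univ, true_and] at hi
      have hlt : f i.castSucc < f i.succ :=
        lt_of_le_of_ne (hmono (le_of_lt (Fin.castSucc_lt_succ (i := i)))) hi
      refine Finset.mem_erase.2 ⟨?_, Finset.mem_image_of_mem f (Finset.mem_univ _)⟩
      intro h0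
      rw [h0] at hlt
      exact absurd (Fin.zero_le _) (not_le.2 hlt)
    · intro i hi i' hi' heq
      simp only [Finset.mem_filter, Finset.mem_univ, true_and] at hi hi'
      exact succ_inj_on_jumps f hmono i i' hi hi' heq
    · intro x hx
      obtain ⟨hx0, hxim⟩ := Finset.mem_erase.1 hx
      have hT : (Finset.univ.filter (fun s => f s = x)).Nonempty := by
        obtain ⟨s, _, hs⟩ := Finset.mem_image.1 hxim
        exact ⟨s, Finset.mem_filter.2 ⟨Finset.mem_univ _, hs⟩⟩
      set s0 := (Finset.univ.filter (fun s => f s = x)).min' hT with hs0def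
      have hs0 : f s0 = x := (Finset.mem_filter.1 ((Finset.univ.filter (fun s => f s = x)).min'_mem hT)).2
      have hs0ne : s0 ≠ 0 := by
        intro h
        rw [h, f_zero f hle] at hs0
        exact hx0 hs0.symm
      obtain ⟨i, hi⟩ := Fin.exists_succ_eq.2 hs0ne
      have hjump : ¬ f i.castSucc = f i.succ := by
        intro hc
        have hmem : i.castSucc ∈ Finset.univ.filter (fun s => f s = x) := by
          refine Finset.mem_filter.2 ⟨Finset.mem_univ _, ?_⟩
          rw [hc, hi, hs0]
        have := Finset.min'_le _ _ hmem
        rw [← hs0def] at this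
        have hlt : i.castSucc < s0 := by rw [← hi]; exact Fin.castSucc_lt_succ (i := i)
        exact absurd this (not_le.2 hlt)
      refine ⟨i, Finset.mem_filter.2 ⟨Finset.mem_univ _, hjump⟩, ?_⟩
      show f i.succ = x
      rw [hi, hs0]
  have := Finset.card_filter_add_card_filter_not
    (s := (Finset.univ : Finset (Fin n))) (p := fun i : Fin n => f i.castSucc = f i.succ)
  rw [Finset.card_univ, Fintype.card_fin] at this
  unfold Aset
  omega

lemma Bset_card (hmk : m + k = n) (hle : ∀ i, f i ≤ i)
    (hcard : (Finset.univ.image f).card = k + 1) : (Bset f).card = m := by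
  have hBc : (Finset.univ.filter (fun i : Fin n => ∃ i', f i' = i.succ)).card = k := by
    rw [← erase_card f hle hcard]
    refine Finset.card_bij (fun i _ => i.succ) ?_ ?_ ?_
    · intro i hi
      show i.succ ∈ (Finset.univ.image f).erase 0
      simp only [Finset.mem_filter, Finset.mem_univ, true_and] at hi
      obtain ⟨i', hi'⟩ := hi
      refine Finset.mem_erase.2 ⟨Fin.succ_ne_zero i, ?_⟩
      rw [← hi']
      exact Finset.mem_image_of_mem f (Finset.mem_univ _)
    · intro i _ i' _ heq
      exact Fin.succ_injective _ heq
    · intro x hx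
      obtain ⟨hx0, hxim⟩ := Finset.mem_erase.1 hx
      obtain ⟨i, hi⟩ := Fin.exists_succ_eq.2 hx0
      obtain ⟨s, _, hs⟩ := Finset.mem_image.1 hxim
      exact ⟨i, Finset.mem_filter.2 ⟨Finset.mem_univ _, ⟨s, by rw [hs, hi]⟩⟩, hi⟩

  have := Finset.card_filter_add_card_filter_not
    (s := (Finset.univ : Finset (Fin n))) (p := fun i : Fin n => ∃ i', f i' = i.succ)
  rw [Finset.card_univ, Fintype.card_fin] at this
  unfold Bset
  omega

lemma key_count (hmono : Monotone f) (hle : ∀ i, f i ≤ i) (t : ℕ) :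
    ((Bset f).filter (fun i : Fin n => (i : ℕ) < t)).card ≤
      ((Aset f).filter (fun i : Fin n => (i : ℕ) < t)).card := by
  classical
  set P := Finset.univ.filter (fun i : Fin n => (i : ℕ) < t) with hP
  have hcomm : ∀ (p : Fin n → Prop) (_ : DecidablePred p),
      (Finset.univ.filter p).filter (fun i : Fin n => (i : ℕ) < t) = P.filter p := by
    intro p hp
    ext x
    simp only [Finset.mem_filter, Finset.mem_univ, true_and, hP]
    tauto
  have h1 := Finset.card_filter_add_card_filter_not
    (s := P) (p := fun i : Fin n => f i.castSucc = f i.succ)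
  have h2 := Finset.card_filter_add_card_filter_not
    (s := P) (p := fun i : Fin n => ∃ i', f i' = i.succ)
  have hA : ((Aset f).filter (fun i : Fin n => (i : ℕ) < t)) =
      P.filter (fun i : Fin n => f i.castSucc = f i.succ) := hcomm _ _
  have hB : ((Bset f).filter (fun i : Fin n => (i : ℕ) < t)) =
      P.filter (fun i : Fin n => ¬ ∃ i', f i' = i.succ) := hcomm _ _
  -- injection from jumps below t into shifted image positions below t
  have h3 : (P.filter (fun i : Fin n => ¬ f i.castSucc = f i.succ)).card ≤
      (P.filter (fun i : Fin n => ∃ i', f i' = i.succ)).card := by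
    have hmap : ∀ i ∈ P.filter (fun i : Fin n => ¬ f i.castSucc = f i.succ),
        ((f i.succ : ℕ) - 1 < n) ∧ 1 ≤ (f i.succ : ℕ) ∧ (f i.succ : ℕ) ≤ (i : ℕ) + 1 := by
      intro i hi
      obtain ⟨hiP, hij⟩ := Finset.mem_filter.1 hi
      have hlt : f i.castSucc < f i.succ :=
        lt_of_le_of_ne (hmono (le_of_lt (Fin.castSucc_lt_succ (i := i)))) hij
      have h1' : 1 ≤ (f i.succ : ℕ) := by
        rw [Fin.lt_def] at hlt; omega
      have h2' : (f i.succ : ℕ) ≤ (i : ℕ) + 1 := by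
        have := hle i.succ
        rw [Fin.le_def, Fin.val_succ] at this
        exact this
      have := i.isLt
      exact ⟨by omega, h1', h2'⟩
    set phi : Fin n → Fin n := fun i =>
      ⟨(f i.succ : ℕ) - 1, by have := (f i.succ).isLt; have := i.isLt; omega⟩ with hphi
    refine Finset.card_le_card_of_injOn phi ?_ ?_
    · intro i hi
      show phi i ∈ _
      rw [hphi]
      obtain ⟨h1', h2', h3'⟩ := hmap i hi
      obtain ⟨hiP, _⟩ := Finset.mem_filter.1 hi
      refine Finset.mem_filter.2 ⟨?_, ?_⟩
      · simp only [hP, Finset.mem_filter, Finset.mem_univ, true_and] at hiP ⊢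
        omega
      · refine ⟨i.succ, ?_⟩
        apply Fin.ext
        rw [Fin.val_succ]
        simp only
        omega
    · intro i hi i' hi' heq
      obtain ⟨hA1, hA2, hA3⟩ := hmap i hi
      obtain ⟨hB1, hB2, hB3⟩ := hmap i' hi'
      have hv : (f i.succ : ℕ) = (f i'.succ : ℕ) := by
        have := congrArg Fin.val heq
        rw [hphi] at this
        simp only at this
        omega
      obtain ⟨_, hij⟩ := Finset.mem_filter.1 hi
      obtain ⟨_, hij'⟩ := Finset.mem_filter.1 hi'
      exact succ_inj_on_jumps f hmono i i' hij hij' (Fin.ext hv)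
  rw [hA, hB]
  omega

end Recon

end Stmt5

namespace Stmt5

variable {n k m : ℕ}

section FF2

variable (hmk : m + k = n) (a b : Fin m → Fin n)
  (ha : StrictMono a) (hb : StrictMono b) (hab : ∀ j, a j ≤ b j)

include hmk ha hb hab

lemma Ffun_im_succ (i : Fin n) :
    i.succ ∈ Finset.univ.image (Ffun a b) ↔ ¬ ∃ j, (b j : ℕ) = (i : ℕ) := by
  rw [Ffun_im hmk a b ha hb hab, Fin.val_succ]
  constructor
  · rintro (h0 | ⟨_, hno⟩)
    · exact absurd h0 (Nat.succ_ne_zero _)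
    · simpa using hno
  · intro hno
    exact Or.inr ⟨by omega, by simpa using hno⟩

end FF2

lemma strictMono_range_inj {f g : Fin m → Fin n} (hf : StrictMono f) (hg : StrictMono g)
    (h : Set.range f = Set.range g) : f = g := by
  have inst : WellFoundedLT (Fin m) := inferInstance
  exact (@StrictMono.range_inj (Fin m) (Fin n) _ _ inst f g hf hg).1 h

lemma emb_exists_val {S : Finset (Fin n)} (h : S.card = m) (x : Fin n) :
    (∃ j, ((S.orderEmbOfFin h j : Fin n) : ℕ) = (x : ℕ)) ↔ x ∈ S := by
  constructor
  · rintro ⟨j, hj⟩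
    have : S.orderEmbOfFin h j = x := Fin.ext hj
    rw [← this]
    exact Finset.orderEmbOfFin_mem S h j
  · intro hx
    have : x ∈ Set.range (S.orderEmbOfFin h) := by
      rw [Finset.range_orderEmbOfFin]
      exact hx
    obtain ⟨j, hj⟩ := this
    exact ⟨j, by rw [hj]⟩

lemma cIdx_orderEmb {S : Finset (Fin n)} (h : S.card = m) (t : ℕ) :
    cIdx (fun j => S.orderEmbOfFin h j) t = (S.filter (fun i : Fin n => (i : ℕ) < t)).card := by
  unfold cIdx
  have himg : (Finset.univ.filter (fun j : Fin m => ((S.orderEmbOfFin h j : Fin n) : ℕ) < t)).image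
      (fun j => S.orderEmbOfFin h j) = S.filter (fun i : Fin n => (i : ℕ) < t) := by
    ext x
    simp only [Finset.mem_image, Finset.mem_filter, Finset.mem_univ, true_and]
    constructor
    · rintro ⟨j, hj, rfl⟩
      exact ⟨Finset.orderEmbOfFin_mem S h j, hj⟩
    · rintro ⟨hxS, hxt⟩
      obtain ⟨j, hj⟩ := (emb_exists_val h x).2 hxS
      exact ⟨j, by rw [show S.orderEmbOfFin h j = x from Fin.ext hj]; exact hxt,
        Fin.ext hj⟩
  rw [← himg, Finset.card_image_of_injective _ (S.orderEmbOfFin h).injective]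

/-- map from sequence pairs to monotone functions -/
noncomputable def toR (n k m : ℕ) (hmk : m + k = n) (s : Sp m n) :
    {f : Fin (n+1) → Fin (n+1) //
      Monotone f ∧ (∀ i, f i ≤ i) ∧ (Finset.univ.image f).card = k + 1} :=
  ⟨Ffun s.val.1 s.val.2,
    Ffun_mono hmk s.val.1 s.val.2 s.prop.1 s.prop.2.1 s.prop.2.2,
    Ffun_le hmk s.val.1 s.val.2 s.prop.1 s.prop.2.1 s.prop.2.2,
    Ffun_card hmk s.val.1 s.val.2 s.prop.1 s.prop.2.1 s.prop.2.2⟩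

lemma toR_bijective (n k m : ℕ) (hmk : m + k = n) : Function.Bijective (toR n k m hmk) := by
  constructor
  · rintro ⟨⟨a, b⟩, ha, hb, hab⟩ ⟨⟨a', b'⟩, ha', hb', hab'⟩ h
    simp only [toR, Subtype.mk.injEq] at h
    have ea : a = a' := by
      apply strictMono_range_inj ha ha'
      ext x
      simp only [Set.mem_range]
      have h1 := Ffun_jump hmk a b ha hb hab x
      have h2 := Ffun_jump hmk a' b' ha' hb' hab' x
      rw [h] at h1
      constructor
      · rintro ⟨j, rfl⟩
        obtain ⟨j', hj'⟩ := (h2.symm.trans h1).2 ⟨j, rfl⟩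
        exact ⟨j', Fin.ext hj'⟩
      · rintro ⟨j, rfl⟩
        obtain ⟨j', hj'⟩ := (h1.symm.trans h2).2 ⟨j, rfl⟩
        exact ⟨j', Fin.ext hj'⟩
    have eb : b = b' := by
      apply strictMono_range_inj hb hb'
      ext x
      simp only [Set.mem_range]
      have h1 := Ffun_im_succ hmk a b ha hb hab x
      have h2 := Ffun_im_succ hmk a' b' ha' hb' hab' x
      rw [h] at h1
      have h3 : (∃ j, (b j : ℕ) = (x : ℕ)) ↔ ∃ j, (b' j : ℕ) = (x : ℕ) :=
        not_iff_not.1 (h1.symm.trans h2)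
      constructor
      · rintro ⟨j, rfl⟩
        obtain ⟨j', hj'⟩ := h3.1 ⟨j, rfl⟩
        exact ⟨j', Fin.ext hj'⟩
      · rintro ⟨j, rfl⟩
        obtain ⟨j', hj'⟩ := h3.2 ⟨j, rfl⟩
        exact ⟨j', Fin.ext hj'⟩
    subst ea; subst eb; rfl
  · rintro ⟨f, hmono, hle, hcard⟩
    have hA : (Aset f).card = m := Aset_card f hmk hmono hle hcard
    have hB : (Bset f).card = m := Bset_card f hmk hle hcard
    set a : Fin m → Fin n := fun j => (Aset f).orderEmbOfFin hA j with hadef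
    set b : Fin m → Fin n := fun j => (Bset f).orderEmbOfFin hB j with hbdef
    have ha : StrictMono a := ((Aset f).orderEmbOfFin hA).strictMono
    have hb : StrictMono b := ((Bset f).orderEmbOfFin hB).strictMono
    have hab : ∀ j, a j ≤ b j := by
      apply ptwise_of_counts a b ha hb
      intro t
      rw [hadef, hbdef, cIdx_orderEmb hA t, cIdx_orderEmb hB t]
      exact key_count f hmono hle t
    refine ⟨⟨(a, b), ha, hb, hab⟩, Subtype.ext ?_⟩
    show Ffun a b = f
    apply eq_of_data _ _ (Ffun_mono hmk a b ha hb hab) hmono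
    · rw [Ffun_zero' hmk a b ha hb hab, f_zero f hle]
    · intro i
      rw [Ffun_jump hmk a b ha hb hab i]
      rw [hadef]
      rw [emb_exists_val hA i]
      unfold Aset
      simp only [Finset.mem_filter, Finset.mem_univ, true_and]
    · ext x
      rw [Ffun_im hmk a b ha hb hab x]
      have hxmem : x ∈ Finset.univ.image f ↔ ∃ i', f i' = x := by
        simp only [Finset.mem_image, Finset.mem_univ, true_and]
      rcases Nat.eq_zero_or_pos (x : ℕ) with h0 | h0
      · have hx0 : x = 0 := Fin.ext (by simpa using h0)
        rw [hxmem]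
        simp only [h0, true_or, true_iff]
        exact ⟨0, by rw [f_zero f hle, hx0]⟩
      · have hxn : (x : ℕ) ≤ n := by have := x.isLt; omega
        have hyn : (x : ℕ) - 1 < n := by omega
        set y : Fin n := ⟨(x : ℕ) - 1, hyn⟩ with hydef
        have hysucc : y.succ = x := Fin.ext (by rw [Fin.val_succ, hydef]; simp; omega)
        have hby : (∃ j, (b j : ℕ) = (x : ℕ) - 1) ↔ y ∈ Bset f := by
          rw [hbdef]
          exact emb_exists_val hB y
        rw [hby]
        unfold Bset
        simp only [Finset.mem_filter, Finset.mem_univ, true_and]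
        rw [hysucc, hxmem, not_not]
        constructor
        · rintro (h | h)
          · omega
          · exact h.2
        · intro h
          exact Or.inr ⟨h0, h⟩

end Stmt5


/-- Bijection between comparable pairs `w₀ ⪯ w₁` in `W(n-k, k)` and monotone
functions `f : {1,…,n+1} → {1,…,n+1}` with `f i ≤ i` taking exactly `k+1`
distinct values. -/
theorem stmt5 (n k : ℕ) (hk : k ≤ n) :
    Nonempty
      ({p : List Bool × List Bool //
          memW (n - k) k p.1 ∧ memW (n - k) k p.2 ∧ wle p.1 p.2} ≃
        {f : Fin (n+1) → Fin (n+1) //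
          Monotone f ∧ (∀ i, f i ≤ i) ∧ (Finset.univ.image f).card = k + 1}) := by
  have hmk : (n - k) + k = n := by omega
  exact ⟨((Equiv.ofBijective _ (Stmt5.toL_bijective n k (n - k) hmk)).symm).trans
    (Equiv.ofBijective _ (Stmt5.toR_bijective n k (n - k) hmk))⟩
end

section
/- The number of monotone increasing functions f : {1,...,n} → {1,...,n} satisfying f(i) ≤ i for all i and taking exactly k distinct values equals the Narayana number N(n,k) = (1/n) * C(n,k) * C(n,k-1). -/
/-- The Narayana number `N(n,k) = (1/n)·C(n,k)·C(n,k-1)`. -/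
def narayana (n k : ℕ) : ℕ := n.choose k * n.choose (k-1) / n

namespace NarayanaAux
open Finset
open scoped Classical

variable {n k : ℕ}

open Finset
open scoped Classical

variable {n k : ℕ}

/-- prefix count: number of elements of `S` with value `≤ t`. -/
def pf (S : Finset (Fin n)) (t : ℕ) : ℕ := (S.filter (fun x => x.val ≤ t)).card

lemma pf_mono (S : Finset (Fin n)) {t t' : ℕ} (h : t ≤ t') : pf S t ≤ pf S t' := by
  apply Finset.card_le_card
  intro x hx; simp only [mem_filter] at hx ⊢; exact ⟨hx.1, hx.2.trans h⟩

lemma pf_le_card (S : Finset (Fin n)) (t : ℕ) : pf S t ≤ S.card :=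
  Finset.card_le_card (filter_subset _ _)

lemma pf_succ_le (S : Finset (Fin n)) (t : ℕ) : pf S (t+1) ≤ pf S t + 1 := by
  have hsub : S.filter (fun x => x.val ≤ t + 1) ⊆
      S.filter (fun x => x.val ≤ t) ∪ S.filter (fun x => x.val = t + 1) := by
    intro x hx; simp only [mem_filter, mem_union] at hx ⊢; obtain ⟨h1,h2⟩ := hx
    rcases Nat.lt_or_ge x.val (t+1) with h|h
    · exact Or.inl ⟨h1, by omega⟩
    · exact Or.inr ⟨h1, by omega⟩
  calc pf S (t+1) ≤ _ := Finset.card_le_card hsub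
    _ ≤ pf S t + (S.filter (fun x => x.val = t + 1)).card := Finset.card_union_le _ _
    _ ≤ pf S t + 1 := by
        gcongr
        apply Finset.card_le_one.2
        intro a ha b hb; simp only [mem_filter] at ha hb
        exact Fin.ext (ha.2.trans hb.2.symm)

lemma pf_zero_le_one (S : Finset (Fin n)) : pf S 0 ≤ 1 := by
  apply Finset.card_le_one.2
  intro a ha b hb; simp only [mem_filter] at ha hb
  exact Fin.ext (by omega)

lemma pf_eq_card (S : Finset (Fin n)) {t : ℕ} (h : n ≤ t + 1) : pf S t = S.card := by
  unfold pf
  rw [Finset.filter_true_of_mem]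
  intro x _; exact by omega


open Finset
open scoped Classical

variable {n k : ℕ}

/-- tail-swap of a pair of finsets at threshold `t` -/
def swp (t : ℕ) (AV : Finset (Fin n) × Finset (Fin n)) : Finset (Fin n) × Finset (Fin n) :=
  (AV.1.filter (fun x => x.val ≤ t) ∪ AV.2.filter (fun x => t < x.val),
   AV.2.filter (fun x => x.val ≤ t) ∪ AV.1.filter (fun x => t < x.val))

lemma swp_swp (t : ℕ) (AV : Finset (Fin n) × Finset (Fin n)) : swp t (swp t AV) = AV := by
  obtain ⟨A, V⟩ := AV
  unfold swp
  simp only [Prod.mk.injEq]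
  constructor <;>
  · ext x
    simp only [mem_union, mem_filter]
    constructor
    · rintro (⟨(⟨h1,h2⟩|⟨h1,h2⟩),h3⟩|⟨(⟨h1,h2⟩|⟨h1,h2⟩),h3⟩) <;> first | exact h1 | omega
    · intro hx
      rcases le_or_gt x.val t with h|h
      · exact Or.inl ⟨Or.inl ⟨hx, h⟩, h⟩
      · exact Or.inr ⟨Or.inr ⟨hx, h⟩, h⟩

lemma pf_swp_le {t s : ℕ} (hs : s ≤ t) (AV : Finset (Fin n) × Finset (Fin n)) :
    pf (swp t AV).1 s = pf AV.1 s := by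
  unfold pf swp
  congr 1
  ext x
  simp only [mem_filter, mem_union]
  constructor
  · rintro ⟨⟨h1,h2⟩|⟨h1,h2⟩, h3⟩
    · exact ⟨h1, h3⟩
    · omega
  · intro ⟨h1, h2⟩; exact ⟨Or.inl ⟨h1, by omega⟩, h2⟩

lemma pf_split (S : Finset (Fin n)) {t s : ℕ} (h : t ≤ s) :
    pf S s = pf S t + (S.filter (fun x => t < x.val ∧ x.val ≤ s)).card := by
  unfold pf
  rw [← Finset.card_union_of_disjoint]
  · congr 1
    ext x
    simp only [mem_filter, mem_union]
    constructor
    · intro ⟨h1, h2⟩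
      rcases le_or_gt x.val t with h'|h'
      · exact Or.inl ⟨h1, h'⟩
      · exact Or.inr ⟨h1, h', h2⟩
    · rintro (⟨h1,h2⟩|⟨h1,h2,h3⟩) <;> exact ⟨h1, by omega⟩
  · rw [Finset.disjoint_left]
    rintro x hx hy
    simp only [mem_filter] at hx hy
    omega

lemma pf_swp_ge {t s : ℕ} (hs : t ≤ s) (AV : Finset (Fin n) × Finset (Fin n)) :
    pf (swp t AV).1 s + pf AV.2 t = pf AV.1 t + pf AV.2 s := by
  have h1 : pf (swp t AV).1 s = pf AV.1 t +
      (AV.2.filter (fun x => t < x.val ∧ x.val ≤ s)).card := by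
    unfold pf swp
    rw [← Finset.card_union_of_disjoint]
    · congr 1
      ext x
      simp only [mem_filter, mem_union]
      constructor
      · rintro ⟨⟨h1,h2⟩|⟨h1,h2⟩, h3⟩
        · exact Or.inl ⟨h1, h2⟩
        · exact Or.inr ⟨h1, h2, h3⟩
      · rintro (⟨h1,h2⟩|⟨h1,h2,h3⟩)
        · exact ⟨Or.inl ⟨h1, h2⟩, by omega⟩
        · exact ⟨Or.inr ⟨h1, h2⟩, h3⟩
    · rw [Finset.disjoint_left]
      rintro x hx hy
      simp only [mem_filter] at hx hy
      omega
  rw [h1, pf_split AV.2 hs]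
  ring

lemma swp_snd (t : ℕ) (AV : Finset (Fin n) × Finset (Fin n)) :
    (swp t AV).2 = (swp t (AV.2, AV.1)).1 := rfl

lemma swp_card_fst {t : ℕ} (AV : Finset (Fin n) × Finset (Fin n)) :
    (swp t AV).1.card + pf AV.2 t = pf AV.1 t + AV.2.card := by
  have h := pf_swp_ge (Nat.le_add_right t n) AV
  rwa [pf_eq_card (t := t+n) _ (by omega), pf_eq_card (t := t+n) _ (by omega)] at h


lemma pf_swp_le_snd {t s : ℕ} (hs : s ≤ t) (AV : Finset (Fin n) × Finset (Fin n)) :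
    pf (swp t AV).2 s = pf AV.2 s := by
  rw [swp_snd]
  exact pf_swp_le hs (AV.2, AV.1)

lemma swp_card_snd {t : ℕ} (AV : Finset (Fin n) × Finset (Fin n)) :
    (swp t AV).2.card + pf AV.1 t = pf AV.2 t + AV.1.card := by
  rw [swp_snd]
  exact swp_card_fst (AV.2, AV.1)

lemma mem_swp_fst {t : ℕ} (AV : Finset (Fin n) × Finset (Fin n)) (x : Fin n)
    (hx : x ∈ AV.1) (hxt : x.val ≤ t) : x ∈ (swp t AV).1 := by
  unfold swp
  exact Finset.mem_union_left _ (Finset.mem_filter.2 ⟨hx, hxt⟩)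

variable {n k : ℕ}
/-- at the first violation, the prefix counts differ by exactly one -/
lemma find_viol (A V : Finset (Fin n)) (h : ∃ t, pf V t < pf A t) :
    pf A (Nat.find h) = pf V (Nat.find h) + 1 := by
  have hspec : pf V (Nat.find h) < pf A (Nat.find h) := Nat.find_spec h
  rcases Nat.eq_zero_or_eq_succ_pred (Nat.find h) with h0 | hs
  · rw [h0] at hspec ⊢
    have := pf_zero_le_one A
    omega
  · set t := Nat.find h with ht
    obtain ⟨s, hs'⟩ : ∃ s, t = s + 1 := ⟨t - 1, by omega⟩
    have hmin : ¬ (pf V s < pf A s) := Nat.find_min h (by omega)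
    have h2 := pf_succ_le A s
    have h3 : pf V s ≤ pf V (s+1) := by
      apply Finset.card_le_card
      intro x hx; simp only [mem_filter] at hx ⊢; exact ⟨hx.1, by omega⟩
    rw [hs'] at hspec ⊢
    omega

variable {n k : ℕ}
noncomputable def F (X : Finset (Fin n) × Finset (Fin n)) : Finset (Fin n) × Finset (Fin n) :=
  if h : ∃ t, pf X.2 t < pf X.1 t then swp (Nat.find h) X else X

lemma F_core (X : Finset (Fin n) × Finset (Fin n)) (h : ∃ t, pf X.2 t < pf X.1 t) :
    ∃ t0 : ℕ, F X = swp t0 X ∧ pf X.1 t0 = pf X.2 t0 + 1 ∧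
    (∃ t, pf (F X).2 t < pf (F X).1 t) ∧
    F (F X) = X := by
  have hFX : F X = swp (Nat.find h) X := dif_pos h
  have h1 : pf (swp (Nat.find h) X).1 (Nat.find h) = pf X.1 (Nat.find h) :=
    pf_swp_le le_rfl X
  have h2 : pf (swp (Nat.find h) X).2 (Nat.find h) = pf X.2 (Nat.find h) :=
    pf_swp_le_snd le_rfl X
  have hviol : pf (swp (Nat.find h) X).2 (Nat.find h) < pf (swp (Nat.find h) X).1 (Nat.find h) := by
    rw [h1, h2]; exact Nat.find_spec h
  have h' : ∃ t, pf (swp (Nat.find h) X).2 t < pf (swp (Nat.find h) X).1 t :=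
    ⟨Nat.find h, hviol⟩
  have hfind : Nat.find h' = Nat.find h := by
    apply le_antisymm (Nat.find_min' h' hviol)
    by_contra hlt
    push_neg at hlt
    have hs := Nat.find_spec h'
    have e1 : pf (swp (Nat.find h) X).1 (Nat.find h') = pf X.1 (Nat.find h') :=
      pf_swp_le (by omega) X
    have e2 : pf (swp (Nat.find h) X).2 (Nat.find h') = pf X.2 (Nat.find h') :=
      pf_swp_le_snd (by omega) X
    have := Nat.find_min h (m := Nat.find h') (by omega)
    omega
  refine ⟨Nat.find h, hFX, find_viol X.1 X.2 h, by rw [hFX]; exact h', ?_⟩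
  rw [hFX, F, dif_pos h', hfind]
  exact swp_swp _ X

lemma card_bad (hn : 0 < n) (hk : 1 ≤ k) :
    (univ.filter (fun AV : Finset (Fin n) × Finset (Fin n) =>
      AV.1.card = k ∧ AV.2.card = k ∧ (⟨0, hn⟩ : Fin n) ∈ AV.1 ∧
        ∃ t, pf AV.2 t < pf AV.1 t)).card
    = (univ.filter (fun BW : Finset (Fin n) × Finset (Fin n) =>
      BW.1.card = k+1 ∧ BW.2.card = k-1 ∧ (⟨0, hn⟩ : Fin n) ∈ BW.1)).card := by
  apply Finset.card_bij' (fun X _ => F X) (fun X _ => F X)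
  · rintro X hX
    simp only [mem_filter, mem_univ, true_and] at hX ⊢
    obtain ⟨hA, hV, h0, h⟩ := hX
    obtain ⟨t0, hFX, hv, -, -⟩ := F_core X h
    have c1 := swp_card_fst (t := t0) X
    have c2 := swp_card_snd (t := t0) X
    have l1 := pf_le_card X.1 t0
    have l2 := pf_le_card X.2 t0
    rw [hFX]
    exact ⟨by omega, by omega, mem_swp_fst X _ h0 (Nat.zero_le t0)⟩
  · rintro X hX
    simp only [mem_filter, mem_univ, true_and] at hX ⊢
    obtain ⟨hB, hW, h0⟩ := hX
    have h : ∃ t, pf X.2 t < pf X.1 t := by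
      refine ⟨n, ?_⟩
      rw [pf_eq_card _ (by omega), pf_eq_card _ (by omega), hB, hW]
      omega
    obtain ⟨t0, hFX, hv, hviol, -⟩ := F_core X h
    have c1 := swp_card_fst (t := t0) X
    have c2 := swp_card_snd (t := t0) X
    have l1 := pf_le_card X.1 t0
    have l2 := pf_le_card X.2 t0
    rw [hFX] at hviol ⊢
    exact ⟨by omega, by omega, mem_swp_fst X _ h0 (Nat.zero_le t0), hviol⟩
  · rintro X hX
    simp only [mem_filter, mem_univ, true_and] at hX
    exact (F_core X hX.2.2.2).choose_spec.2.2.2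
  · rintro X hX
    simp only [mem_filter, mem_univ, true_and] at hX
    obtain ⟨hB, hW, h0⟩ := hX
    have h : ∃ t, pf X.2 t < pf X.1 t := by
      refine ⟨n, ?_⟩
      rw [pf_eq_card _ (by omega), pf_eq_card _ (by omega), hB, hW]
      omega
    exact (F_core X h).choose_spec.2.2.2


lemma key_identity {n k : ℕ} (h1 : 1 ≤ k) (h2 : k ≤ n) :
    n * ((n-1).choose (k-1) * n.choose k)
      = n.choose k * n.choose (k-1) + n * ((n-1).choose k * n.choose (k-1)) := by
  obtain ⟨m, rfl⟩ : ∃ m, n = m + 1 := ⟨n - 1, by omega⟩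
  obtain ⟨j, rfl⟩ : ∃ j, k = j + 1 := ⟨k - 1, by omega⟩
  simp only [Nat.add_sub_cancel]
  have f1 : (m + 1) * m.choose j = (m+1).choose (j+1) * (j+1) := Nat.add_one_mul_choose_eq m j
  have f2 : (m+1).choose (j+1) = m.choose j + m.choose (j+1) := Nat.choose_succ_succ m j
  have f3 : (m+1).choose (j+1) * (j+1) = (m+1).choose j * ((m+1) - j) :=
    Nat.choose_succ_right_eq (m+1) j
  have hj : j ≤ m := by omega
  have hj2 : j ≤ m + 1 := by omega
  zify [hj, hj2] at f1 f2 f3 ⊢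
  linear_combination (((m+1).choose (j+1) : ℤ) + ((m+1).choose j : ℤ)) * f1
    + ((m+1 : ℤ) * ((m+1).choose j : ℤ)) * f2 + ((m+1).choose (j+1) : ℤ) * f3

lemma card_filter_card_eq (n c : ℕ) :
    (univ.filter (fun A : Finset (Fin n) => A.card = c)).card = n.choose c := by
  have : univ.filter (fun A : Finset (Fin n) => A.card = c)
      = Finset.powersetCard c univ := by
    ext A
    simp [Finset.mem_powersetCard, Finset.subset_univ]
  rw [this, Finset.card_powersetCard, Finset.card_univ, Fintype.card_fin]

lemma card_filter_mem_card_eq {n : ℕ} (hn : 0 < n) (c : ℕ) :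
    (univ.filter (fun A : Finset (Fin n) =>
      (⟨0, hn⟩ : Fin n) ∈ A ∧ A.card = c + 1)).card = (n-1).choose c := by
  have h2 : (univ.filter (fun A : Finset (Fin n) => (⟨0, hn⟩ : Fin n) ∈ A ∧ A.card = c + 1)).card
      = (Finset.powersetCard c (univ.erase (⟨0, hn⟩ : Fin n))).card := by
    refine Finset.card_bij' (fun A _ => A.erase (⟨0, hn⟩ : Fin n))
      (fun B _ => insert (⟨0, hn⟩ : Fin n) B) ?hi ?hj ?li ?ri
    case hi =>
      rintro A hA
      simp only [mem_filter, mem_univ, true_and] at hA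
      rw [Finset.mem_powersetCard]
      constructor
      · intro x hx
        rw [Finset.mem_erase] at hx ⊢
        exact ⟨hx.1, Finset.mem_univ _⟩
      · rw [Finset.card_erase_of_mem hA.1, hA.2]; omega
    case hj =>
      rintro B hB
      rw [Finset.mem_powersetCard] at hB
      simp only [mem_filter, mem_univ, true_and]
      have h0 : (⟨0, hn⟩ : Fin n) ∉ B := fun hc => (Finset.mem_erase.1 (hB.1 hc)).1 rfl
      exact ⟨Finset.mem_insert_self _ _, by rw [Finset.card_insert_of_notMem h0, hB.2]⟩
    case li =>
      rintro A hA
      simp only [mem_filter, mem_univ, true_and] at hA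
      exact Finset.insert_erase hA.1
    case ri =>
      rintro B hB
      rw [Finset.mem_powersetCard] at hB
      have h0 : (⟨0, hn⟩ : Fin n) ∉ B := fun hc => (Finset.mem_erase.1 (hB.1 hc)).1 rfl
      exact Finset.erase_insert h0
  rw [h2, Finset.card_powersetCard, Finset.card_erase_of_mem (Finset.mem_univ _),
    Finset.card_univ, Fintype.card_fin]

lemma card_pairs {n : ℕ} (hn : 0 < n) (c d : ℕ) :
    (univ.filter (fun AV : Finset (Fin n) × Finset (Fin n) =>
      AV.1.card = c + 1 ∧ AV.2.card = d ∧ (⟨0, hn⟩ : Fin n) ∈ AV.1)).card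
    = (n-1).choose c * n.choose d := by
  have : (univ.filter (fun AV : Finset (Fin n) × Finset (Fin n) =>
      AV.1.card = c + 1 ∧ AV.2.card = d ∧ (⟨0, hn⟩ : Fin n) ∈ AV.1))
      = (univ.filter (fun A : Finset (Fin n) => (⟨0, hn⟩ : Fin n) ∈ A ∧ A.card = c + 1)) ×ˢ
        (univ.filter (fun V : Finset (Fin n) => V.card = d)) := by
    rw [← Finset.univ_product_univ, ← Finset.filter_product]
    apply Finset.filter_congr
    intro x _
    constructor
    · rintro ⟨a, b, e⟩; exact ⟨⟨e, a⟩, b⟩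
    · rintro ⟨⟨e, a⟩, b⟩; exact ⟨a, b, e⟩
  rw [this, Finset.card_product, card_filter_mem_card_eq hn c, card_filter_card_eq]


variable {n k : ℕ}
lemma pf_fin (S : Finset (Fin n)) (i : Fin n) : (S.filter (fun x => x ≤ i)).card = pf S i.val := by
  unfold pf
  congr 1

/-- record positions of `f`: where a new (larger) value first appears -/
def records (f : Fin n → Fin n) : Finset (Fin n) := univ.filter (fun i => ∀ j, j < i → f j < f i)

variable {f : Fin n → Fin n}

lemma record_inj (_hf : Monotone f) {a b : Fin n} (ha : a ∈ records f) (hb : b ∈ records f)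
    (h : f a = f b) : a = b := by
  simp only [records, mem_filter, mem_univ, true_and] at ha hb
  rcases lt_trichotomy a b with hab | hab | hab
  · exact absurd (hb a hab) (by rw [h]; exact lt_irrefl _)
  · exact hab
  · exact absurd (ha b hab) (by rw [h]; exact lt_irrefl _)

lemma min_preimage (hf : Monotone f) {v : Fin n} (hv : v ∈ univ.image f) :
    ∃ a ∈ records f, f a = v ∧ ∀ i, v ≤ f i → a ≤ i := by
  have hne : (univ.filter (fun i => f i = v)).Nonempty := by
    obtain ⟨i, -, hi⟩ := Finset.mem_image.1 hv
    exact ⟨i, by simp [hi]⟩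
  set a := (univ.filter (fun i => f i = v)).min' hne with ha
  have hav : f a = v := (Finset.mem_filter.1 ((univ.filter (fun i => f i = v)).min'_mem hne)).2
  have hmin : ∀ i, f i = v → a ≤ i := fun i hi =>
    Finset.min'_le _ _ (by simp [hi])
  refine ⟨a, ?_, hav, ?_⟩
  · simp only [records, mem_filter, mem_univ, true_and]
    intro j hj
    rcases lt_or_eq_of_le (hf hj.le) with h | h
    · exact h
    · exact absurd (hmin j (h.symm ▸ hav)) (not_le.2 hj)
  · intro i hvi
    by_contra hlt
    push_neg at hlt
    have h1 : f i ≤ f a := hf hlt.le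
    rw [hav] at h1
    exact absurd (hmin i (le_antisymm h1 hvi)) (not_le.2 hlt)

lemma R1 (hf : Monotone f) (i : Fin n) :
    ((records f).filter (fun x => x ≤ i)).card = ((univ.image f).filter (fun x => x ≤ f i)).card := by
  apply Finset.card_bij (fun a _ => f a)
  · rintro a ha
    simp only [mem_filter] at ha ⊢
    exact ⟨Finset.mem_image_of_mem f (mem_univ a), hf ha.2⟩
  · rintro a ha b hb hab
    simp only [mem_filter] at ha hb
    exact record_inj hf ha.1 hb.1 hab
  · rintro v hv
    simp only [mem_filter] at hv
    obtain ⟨a, har, hav, hmin⟩ := min_preimage hf hv.1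
    exact ⟨a, Finset.mem_filter.2 ⟨har, hmin i (hav ▸ hv.2)⟩, hav⟩

lemma card_records (hf : Monotone f) : (records f).card = (univ.image f).card := by
  apply Finset.card_bij (fun a _ => f a)
  · rintro a _
    exact Finset.mem_image_of_mem f (mem_univ a)
  · rintro a ha b hb hab
    exact record_inj hf ha hb hab
  · rintro v hv
    obtain ⟨a, har, hav, -⟩ := min_preimage hf hv
    exact ⟨a, har, hav⟩

lemma records_prefix (hf : Monotone f) (hle : ∀ i, f i ≤ i) (t : ℕ) :
    pf (records f) t ≤ pf (univ.image f) t := by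
  apply Finset.card_le_card_of_injOn f
  · rintro a ha
    simp only [Finset.mem_coe, mem_filter] at ha ⊢
    refine ⟨Finset.mem_image_of_mem f (mem_univ a), ?_⟩
    exact le_trans (hle a) ha.2
  · rintro a ha b hb hab
    simp only [Finset.coe_filter, Set.mem_setOf_eq] at ha hb
    exact record_inj hf ha.1 hb.1 hab

lemma zero_mem_records (hn : 0 < n) : (⟨0, hn⟩ : Fin n) ∈ records f := by
  simp only [records, mem_filter, mem_univ, true_and]
  intro j hj
  exact absurd hj (by simp [Fin.lt_def])

lemma rank_inj (V : Finset (Fin n)) {x y : Fin n} (hx : x ∈ V) (hy : y ∈ V)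
    (h : (V.filter (fun z => z ≤ x)).card = (V.filter (fun z => z ≤ y)).card) : x = y := by
  rcases lt_trichotomy x y with hxy | hxy | hxy
  · exfalso
    have : (V.filter (fun z => z ≤ x)) ⊂ (V.filter (fun z => z ≤ y)) := by
      refine ⟨fun z hz => ?_, fun hc => ?_⟩
      · simp only [mem_filter] at hz ⊢
        exact ⟨hz.1, hz.2.trans hxy.le⟩
      · have := hc (Finset.mem_filter.2 ⟨hy, le_refl y⟩)
        simp only [mem_filter] at this
        exact absurd (this.2.trans_lt hxy) (lt_irrefl y)
    exact absurd h (Finset.card_lt_card this).ne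
  · exact hxy
  · exfalso
    have : (V.filter (fun z => z ≤ y)) ⊂ (V.filter (fun z => z ≤ x)) := by
      refine ⟨fun z hz => ?_, fun hc => ?_⟩
      · simp only [mem_filter] at hz ⊢
        exact ⟨hz.1, hz.2.trans hxy.le⟩
      · have := hc (Finset.mem_filter.2 ⟨hx, le_refl x⟩)
        simp only [mem_filter] at this
        exact absurd (this.2.trans_lt hxy) (lt_irrefl x)
    exact absurd h.symm (Finset.card_lt_card this).ne

lemma R3 (V : Finset (Fin n)) (hV : V.card = k) (j : Fin k) :
    (V.filter (fun x => x ≤ (V.orderIsoOfFin hV j : Fin n))).card = j.val + 1 := by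
  have himg : V.filter (fun x => x ≤ (V.orderIsoOfFin hV j : Fin n))
      = (univ.filter (fun i : Fin k => i ≤ j)).image (fun i => (V.orderIsoOfFin hV i : Fin n)) := by
    ext x
    simp only [mem_filter, Finset.mem_image, mem_univ, true_and]
    constructor
    · rintro ⟨hx1, hx2⟩
      refine ⟨(V.orderIsoOfFin hV).symm ⟨x, hx1⟩, ?_, ?_⟩
      · rw [← (V.orderIsoOfFin hV).le_iff_le]
        simpa [← Subtype.coe_le_coe] using hx2
      · simp
    · rintro ⟨i, hij, rfl⟩
      exact ⟨(V.orderIsoOfFin hV i).2, by simpa using (V.orderIsoOfFin hV).le_iff_le.2 hij⟩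
  rw [himg, Finset.card_image_of_injective _
      (fun a b hab => (V.orderIsoOfFin hV).injective (Subtype.ext hab))]
  have : univ.filter (fun i : Fin k => i ≤ j) = Finset.Iic j := by
    ext i; simp
  rw [this]
  simp [Nat.card_Iic]

section
variable {A V : Finset (Fin n)}

lemma pf_pos (hn : 0 < n) (h0 : (⟨0, hn⟩ : Fin n) ∈ A) (i : Fin n) : 1 ≤ pf A i.val := by
  apply Finset.card_pos.2
  exact ⟨⟨0, hn⟩, Finset.mem_filter.2 ⟨h0, Nat.zero_le _⟩⟩

lemma pf_lt (hn : 0 < n) (hA : A.card = k) (h0 : (⟨0, hn⟩ : Fin n) ∈ A) (i : Fin n) : pf A i.val - 1 < k := by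
  have h1 := pf_pos hn h0 i
  have h2 : pf A i.val ≤ k := hA ▸ Finset.card_le_card (filter_subset _ _)
  omega

/-- the reconstructed monotone function -/
noncomputable def gfun (hn : 0 < n) (hA : A.card = k) (hV : V.card = k) (h0 : (⟨0, hn⟩ : Fin n) ∈ A) (i : Fin n) : Fin n :=
  (V.orderIsoOfFin hV ⟨pf A i.val - 1, pf_lt hn hA h0 i⟩ : Fin n)

lemma gfun_mono (hn : 0 < n) (hA : A.card = k) (hV : V.card = k) (h0 : (⟨0, hn⟩ : Fin n) ∈ A) : Monotone (gfun hn hA hV h0) := by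
  intro i i' hii
  have h1 : pf A i.val ≤ pf A i'.val := by
    apply Finset.card_le_card
    intro x hx
    simp only [mem_filter] at hx ⊢
    exact ⟨hx.1, hx.2.trans hii⟩
  have h2 : (⟨pf A i.val - 1, pf_lt hn hA h0 i⟩ : Fin k) ≤ ⟨pf A i'.val - 1, pf_lt hn hA h0 i'⟩ := by
    simp only [Fin.mk_le_mk]
    omega
  exact Subtype.coe_le_coe.2 ((V.orderIsoOfFin hV).le_iff_le.2 h2)

lemma gfun_le (hn : 0 < n) (hA : A.card = k) (hV : V.card = k) (h0 : (⟨0, hn⟩ : Fin n) ∈ A) (hpre : ∀ t, pf A t ≤ pf V t) (i : Fin n) : gfun hn hA hV h0 i ≤ i := by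
  by_contra hc
  push_neg at hc
  set g := gfun hn hA hV h0 with hg
  have hcard : (V.filter (fun x => x ≤ g i)).card = pf A i.val := by
    rw [hg]
    unfold gfun
    rw [R3]
    show pf A i.val - 1 + 1 = pf A i.val
    have := pf_pos hn h0 i
    omega
  have hsub : V.filter (fun x => x ≤ i) ⊆ (V.filter (fun x => x ≤ g i)).erase (g i) := by
    intro x hx
    simp only [mem_filter] at hx
    rw [Finset.mem_erase]
    refine ⟨fun hxe => ?_, Finset.mem_filter.2 ⟨hx.1, hx.2.trans hc.le⟩⟩
    rw [hxe] at hx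
    exact absurd hx.2 (not_le.2 hc)
  have h1 : pf V i.val ≤ pf A i.val - 1 := by
    rw [← pf_fin]
    calc (V.filter (fun x => x ≤ i)).card ≤ _ := Finset.card_le_card hsub
      _ = pf A i.val - 1 := by rw [Finset.card_erase_of_mem, hcard]
                               exact Finset.mem_filter.2 ⟨(V.orderIsoOfFin hV _).2, le_refl _⟩
  have h2 := hpre i.val
  have h3 := pf_pos hn h0 i
  omega

lemma gfun_image (hn : 0 < n) (hA : A.card = k) (hV : V.card = k) (h0 : (⟨0, hn⟩ : Fin n) ∈ A) : univ.image (gfun hn hA hV h0) = V := by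
  apply Finset.Subset.antisymm
  · intro v hv
    obtain ⟨i, -, rfl⟩ := Finset.mem_image.1 hv
    exact (V.orderIsoOfFin hV _).2
  · intro v hv
    set j := (V.orderIsoOfFin hV).symm ⟨v, hv⟩ with hj
    have hjk : j.val < k := j.2
    have hak : j.val < A.card := hA ▸ hjk
    set a := (A.orderIsoOfFin hA ⟨j.val, hA ▸ hjk⟩ : Fin n) with ha
    have hpfa : pf A a.val = j.val + 1 := by
      rw [← pf_fin, ha]
      exact R3 A hA _
    apply Finset.mem_image.2
    refine ⟨a, mem_univ a, ?_⟩
    unfold gfun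
    rw [show (⟨pf A a.val - 1, pf_lt hn hA h0 a⟩ : Fin k) = j by
      apply Fin.ext; simp [hpfa]]
    simp [hj]

lemma gfun_records (hn : 0 < n) (hA : A.card = k) (hV : V.card = k) (h0 : (⟨0, hn⟩ : Fin n) ∈ A) : records (gfun hn hA hV h0) = A := by
  set g := gfun hn hA hV h0 with hg
  apply Finset.Subset.antisymm
  · intro i hi
    simp only [records, mem_filter, mem_univ, true_and] at hi
    by_contra hiA
    have hne : i ≠ ⟨0, hn⟩ := fun hc => hiA (hc ▸ h0)
    have hival : 0 < i.val := by
      rcases Nat.eq_zero_or_pos i.val with h | h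
      · exact absurd (Fin.ext h : i = ⟨0, hn⟩) hne
      · exact h
    set i' : Fin n := ⟨i.val - 1, by omega⟩ with hi'
    have hpf : pf A i'.val = pf A i.val := by
      unfold pf
      congr 1
      ext x
      simp only [mem_filter, hi']
      constructor
      · rintro ⟨h1, h2⟩; exact ⟨h1, by omega⟩
      · rintro ⟨h1, h2⟩
        refine ⟨h1, ?_⟩
        rcases Nat.lt_or_ge x.val i.val with h | h
        · omega
        · exact absurd (Fin.ext (by omega) : x = i) (fun hc => hiA (hc ▸ h1))
    have hidx : (⟨pf A i'.val - 1, pf_lt hn hA h0 i'⟩ : Fin k)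
        = ⟨pf A i.val - 1, pf_lt hn hA h0 i⟩ :=
      Fin.ext (by show pf A i'.val - 1 = pf A i.val - 1; rw [hpf])
    have hgeq : g i' = g i := by
      rw [hg]; unfold gfun; rw [hidx]
    have hlt : i' < i := by
      rw [Fin.lt_def]; simp [hi']; omega
    exact absurd (hi i' hlt) (by rw [hgeq]; exact lt_irrefl _)
  · intro i hiA
    simp only [records, mem_filter, mem_univ, true_and]
    intro j' hj'
    have hstrict : pf A j'.val < pf A i.val := by
      have hsub : A.filter (fun x => x.val ≤ j'.val) ⊆
          (A.filter (fun x => x.val ≤ i.val)).erase i := by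
        intro x hx
        simp only [mem_filter] at hx
        rw [Finset.mem_erase]
        have hlt : j'.val < i.val := hj'
        refine ⟨fun hxe => ?_, Finset.mem_filter.2 ⟨hx.1, by omega⟩⟩
        rw [hxe] at hx
        omega
      have h1 : pf A j'.val ≤ pf A i.val - 1 := by
        calc pf A j'.val ≤ _ := Finset.card_le_card hsub
          _ = pf A i.val - 1 := by
              rw [Finset.card_erase_of_mem (Finset.mem_filter.2 ⟨hiA, le_refl i.val⟩)]
              rfl
      have h2 : 1 ≤ pf A i.val := pf_pos hn h0 i
      omega
    have hidx : (⟨pf A j'.val - 1, pf_lt hn hA h0 j'⟩ : Fin k) < ⟨pf A i.val - 1, pf_lt hn hA h0 i⟩ := by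
      simp only [Fin.mk_lt_mk]
      have := pf_pos hn h0 j'
      omega
    rw [hg]
    unfold gfun
    exact Subtype.coe_lt_coe.2 ((V.orderIsoOfFin hV).lt_iff_lt.2 hidx)

end

end NarayanaAux

/-- The number of monotone `f : Fin n → Fin n` with `f i ≤ i` taking exactly
`k` distinct values is the Narayana number `N(n,k)`. -/
theorem stmt6 (n k : ℕ) (h1 : 1 ≤ k) (h2 : k ≤ n) :
    {f : Fin n → Fin n |
        Monotone f ∧ (∀ i, f i ≤ i) ∧ (Finset.univ.image f).card = k}.ncard
      = narayana n k := by
  classical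
  open NarayanaAux Finset in
  have hn : 0 < n := by omega
  set S : Set (Fin n → Fin n) :=
    {f | Monotone f ∧ (∀ i, f i ≤ i) ∧ (Finset.univ.image f).card = k} with hS
  set Pfin : Finset (Finset (Fin n) × Finset (Fin n)) :=
    univ.filter (fun AV => AV.1.card = k ∧ AV.2.card = k ∧ (⟨0, hn⟩ : Fin n) ∈ AV.1 ∧
      ∀ t, pf AV.1 t ≤ pf AV.2 t) with hPfin
  set Φ : (Fin n → Fin n) → Finset (Fin n) × Finset (Fin n) :=
    fun f => (records f, Finset.univ.image f) with hΦ
  -- Part A: bijection between S and Pfin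
  have hbij : Set.BijOn Φ S ↑Pfin := by
    refine ⟨?_, ?_, ?_⟩
    · -- MapsTo
      rintro f ⟨hm, hle, hcard⟩
      simp only [hPfin, Finset.coe_filter, Set.mem_setOf_eq, mem_univ, true_and, hΦ]
      exact ⟨(card_records hm).trans hcard, hcard, zero_mem_records hn,
        records_prefix hm hle⟩
    · -- InjOn
      rintro f ⟨hmf, -, -⟩ g ⟨hmg, -, -⟩ heq
      have hA : records f = records g := congrArg Prod.fst heq
      have hV : Finset.univ.image f = Finset.univ.image g := congrArg Prod.snd heq
      funext i
      apply rank_inj (Finset.univ.image f)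
        (Finset.mem_image_of_mem f (mem_univ i))
        (hV ▸ Finset.mem_image_of_mem g (mem_univ i))
      calc ((Finset.univ.image f).filter (fun z => z ≤ f i)).card
          = ((records f).filter (fun x => x ≤ i)).card := (R1 hmf i).symm
        _ = ((records g).filter (fun x => x ≤ i)).card := by rw [hA]
        _ = ((Finset.univ.image g).filter (fun z => z ≤ g i)).card := R1 hmg i
        _ = ((Finset.univ.image f).filter (fun z => z ≤ g i)).card := by rw [hV]
    · -- SurjOn
      rintro ⟨A, V⟩ hmem
      simp only [hPfin, Finset.coe_filter, Set.mem_setOf_eq, mem_univ, true_and] at hmem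
      obtain ⟨hA, hV, h0, hpre⟩ := hmem
      refine ⟨gfun hn hA hV h0, ⟨gfun_mono hn hA hV h0, gfun_le hn hA hV h0 hpre,
        by rw [gfun_image hn hA hV h0, hV]⟩, ?_⟩
      simp only [hΦ, Prod.mk.injEq]
      exact ⟨gfun_records hn hA hV h0, gfun_image hn hA hV h0⟩
  have hPA : S.ncard = Pfin.card := by
    calc S.ncard = (Φ '' S).ncard := (Set.ncard_image_of_injOn hbij.injOn).symm
      _ = (↑Pfin : Set (Finset (Fin n) × Finset (Fin n))).ncard := by rw [hbij.image_eq]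
      _ = Pfin.card := Set.ncard_coe_finset _
  -- Part B: counting Pfin
  obtain ⟨j, rfl⟩ : ∃ j, k = j + 1 := ⟨k - 1, by omega⟩
  set Bfin : Finset (Finset (Fin n) × Finset (Fin n)) :=
    univ.filter (fun AV => AV.1.card = j+1 ∧ AV.2.card = j+1 ∧ (⟨0, hn⟩ : Fin n) ∈ AV.1 ∧
      ∃ t, pf AV.2 t < pf AV.1 t) with hBfin
  set Tfin : Finset (Finset (Fin n) × Finset (Fin n)) :=
    univ.filter (fun AV => AV.1.card = j+1 ∧ AV.2.card = j+1 ∧ (⟨0, hn⟩ : Fin n) ∈ AV.1)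
      with hTfin
  have hsum : Pfin.card + Bfin.card = Tfin.card := by
    have e1 : Pfin = Tfin.filter (fun AV => ∀ t, pf AV.1 t ≤ pf AV.2 t) := by
      rw [hPfin, hTfin, Finset.filter_filter]
      apply Finset.filter_congr
      intro x _
      constructor
      · rintro ⟨a, b, c, d⟩; exact ⟨⟨a, b, c⟩, d⟩
      · rintro ⟨⟨a, b, c⟩, d⟩; exact ⟨a, b, c, d⟩
    have e2 : Bfin = Tfin.filter (fun AV => ¬ ∀ t, pf AV.1 t ≤ pf AV.2 t) := by
      rw [hBfin, hTfin, Finset.filter_filter]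
      apply Finset.filter_congr
      intro x _
      simp only [not_forall, not_le]
      constructor
      · rintro ⟨a, b, c, d⟩; exact ⟨⟨a, b, c⟩, d⟩
      · rintro ⟨⟨a, b, c⟩, d⟩; exact ⟨a, b, c, d⟩
    rw [e1, e2]
    exact Finset.card_filter_add_card_filter_not _
  have hT : Tfin.card = (n-1).choose j * n.choose (j+1) := card_pairs hn j (j+1)
  have hB : Bfin.card = (n-1).choose (j+1) * n.choose j := by
    rw [hBfin, card_bad hn (by omega)]
    have := card_pairs hn (j+1) (j+1-1)
    simpa using this
  -- Part C: the identity
  have hkey := key_identity (n := n) (k := j+1) (by omega) h2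
  simp only [Nat.add_sub_cancel] at hkey
  set a := n.choose (j+1) with ha
  set b := n.choose j with hb
  set X := (n-1).choose j * a with hX
  set Y := (n-1).choose (j+1) * b with hY
  have hkey' : n * X = a * b + n * Y := hkey
  have hle : Y ≤ X := Nat.le_of_mul_le_mul_left (by omega) hn
  have hP : Pfin.card = X - Y := by omega
  have hab : a * b = (X - Y) * n := by
    rw [Nat.sub_mul]
    have c1 : X * n = n * X := Nat.mul_comm X n
    have c2 : Y * n = n * Y := Nat.mul_comm Y n
    omega
  rw [hPA, hP]
  show X - Y = narayana n (j+1)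
  unfold narayana
  simp only [Nat.add_sub_cancel, ← ha, ← hb]
  rw [hab, Nat.mul_div_cancel _ hn]
end

section
/- The number of pairs (w_0, w_1) with w_0 ⪯ w_1 in W(n-k, k) equals the Narayana number N(n+1, k+1) = (1/(n+1)) * C(n+1, k+1) * C(n+1, k). -/
open Finset

variable {n : ℕ}

def pcnt (S : Finset (Fin n)) (t : ℕ) : ℕ := (S.filter (fun i => i.val < t)).card

lemma pcnt_zero (S : Finset (Fin n)) : pcnt S 0 = 0 := by simp [pcnt]

lemma pcnt_mono (S : Finset (Fin n)) {s t : ℕ} (h : s ≤ t) : pcnt S s ≤ pcnt S t := by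
  apply card_le_card; intro x hx; simp only [mem_filter] at *
  exact ⟨hx.1, lt_of_lt_of_le hx.2 h⟩

lemma pcnt_succ_le (S : Finset (Fin n)) (t : ℕ) : pcnt S (t+1) ≤ pcnt S t + 1 := by
  classical
  have h1 : S.filter (fun i => i.val < t+1) ⊆
      S.filter (fun i => i.val < t) ∪ S.filter (fun i => i.val = t) := by
    intro x hx; simp only [mem_filter, mem_union] at *
    rcases Nat.lt_or_ge x.val t with h | h
    · exact Or.inl ⟨hx.1, h⟩
    · exact Or.inr ⟨hx.1, by omega⟩
  have h2 : (S.filter (fun i => i.val = t)).card ≤ 1 := by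
    apply card_le_one.2; intro a ha b hb
    simp only [mem_filter] at ha hb
    exact Fin.ext (ha.2.trans hb.2.symm)
  unfold pcnt
  calc (S.filter (fun i => i.val < t+1)).card
      ≤ (S.filter (fun i => i.val < t) ∪ S.filter (fun i => i.val = t)).card := card_le_card h1
    _ ≤ _ := le_trans (card_union_le _ _) (by omega)

lemma pcnt_of_ge (S : Finset (Fin n)) {t : ℕ} (h : n ≤ t) : pcnt S t = S.card := by
  unfold pcnt
  rw [filter_true_of_mem]
  intro x _; exact lt_of_lt_of_le x.isLt h

section swap
variable {α : Type*} [DecidableEq α] (p : α → Prop) [DecidablePred p] (X Y : Finset α)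

lemma fmix1 : (X.filter p ∪ Y.filter (fun a => ¬ p a)).filter p = X.filter p := by
  ext a; simp only [mem_filter, mem_union]; tauto

lemma fmix2 : (X.filter p ∪ Y.filter (fun a => ¬ p a)).filter (fun a => ¬ p a)
    = Y.filter (fun a => ¬ p a) := by
  ext a; simp only [mem_filter, mem_union]; tauto

lemma fmix_card : (X.filter p ∪ Y.filter (fun a => ¬ p a)).card
    = (X.filter p).card + Y.card - (Y.filter p).card := by
  rw [card_union_of_disjoint]
  · have := card_filter_add_card_filter_not (s := Y) p
    omega
  · rw [disjoint_left]; intro a ha hb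
    simp only [mem_filter] at ha hb
    exact hb.2 ha.2

end swap

lemma pcnt_mix {t t₀ : ℕ} (ht : t ≤ t₀) (X Y : Finset (Fin n)) :
    pcnt (X.filter (fun i => i.val < t₀) ∪ Y.filter (fun i => ¬ i.val < t₀)) t = pcnt X t := by
  unfold pcnt
  congr 1
  rw [filter_union, filter_filter, filter_filter]
  have h1 : X.filter (fun a => a.val < t₀ ∧ a.val < t) = X.filter (fun i => i.val < t) := by
    apply filter_congr; intro a _; simp; omega
  have h2 : Y.filter (fun a => ¬ a.val < t₀ ∧ a.val < t) = ∅ := by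
    rw [filter_eq_empty_iff]; intro a _; simp; omega
  rw [h1, h2, union_empty]

/-- the pair-swap map used in the reflection argument. -/
def pswap (q : Finset (Fin n) × Finset (Fin n)) (h : ∃ t, pcnt q.1 t < pcnt q.2 t) :
    Finset (Fin n) × Finset (Fin n) :=
  let t₀ := Nat.find h
  (q.1.filter (fun i => i.val < t₀) ∪ q.2.filter (fun i => ¬ i.val < t₀),
   q.2.filter (fun i => i.val < t₀) ∪ q.1.filter (fun i => ¬ i.val < t₀))

lemma find_spec' (q : Finset (Fin n) × Finset (Fin n)) (h : ∃ t, pcnt q.1 t < pcnt q.2 t) :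
    pcnt q.2 (Nat.find h) = pcnt q.1 (Nat.find h) + 1 := by
  set t₀ := Nat.find h with ht₀
  have hv : pcnt q.1 t₀ < pcnt q.2 t₀ := Nat.find_spec h
  have hpos : t₀ ≠ 0 := by
    intro h0
    rw [h0] at hv; simp [pcnt_zero] at hv
  obtain ⟨s, hs⟩ : ∃ s, t₀ = s + 1 := ⟨t₀ - 1, by omega⟩
  have hmin : ¬ pcnt q.1 s < pcnt q.2 s := Nat.find_min h (by omega)
  have h1 := pcnt_succ_le q.2 s
  have h2 := pcnt_mono q.1 (show s ≤ s+1 by omega)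
  rw [hs] at hv ⊢
  omega

lemma ex_of_card_lt {A B : Finset (Fin n)} (h : A.card < B.card) :
    ∃ t, pcnt A t < pcnt B t :=
  ⟨n, by rw [pcnt_of_ge _ le_rfl, pcnt_of_ge _ le_rfl]; exact h⟩

lemma pswap_find (q : Finset (Fin n) × Finset (Fin n)) (h : ∃ t, pcnt q.1 t < pcnt q.2 t)
    (h' : ∃ t, pcnt (pswap q h).1 t < pcnt (pswap q h).2 t) :
    Nat.find h' = Nat.find h := by
  have hmix1 : ∀ t ≤ Nat.find h, pcnt (pswap q h).1 t = pcnt q.1 t := by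
    intro t ht; exact pcnt_mix ht _ _
  have hmix2 : ∀ t ≤ Nat.find h, pcnt (pswap q h).2 t = pcnt q.2 t := by
    intro t ht; exact pcnt_mix ht _ _
  apply le_antisymm
  · apply Nat.find_le
    rw [hmix1 _ le_rfl, hmix2 _ le_rfl]
    exact Nat.find_spec h
  · by_contra hc
    push_neg at hc
    have hs := Nat.find_spec h'
    rw [hmix1 _ (le_of_lt hc), hmix2 _ (le_of_lt hc)] at hs
    exact Nat.find_min h hc hs

lemma pswap_pswap (q : Finset (Fin n) × Finset (Fin n)) (h : ∃ t, pcnt q.1 t < pcnt q.2 t)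
    (h' : ∃ t, pcnt (pswap q h).1 t < pcnt (pswap q h).2 t) :
    pswap (pswap q h) h' = q := by
  have hf : Nat.find h' = Nat.find h := pswap_find q h h'
  obtain ⟨X, Y⟩ := q
  simp only [pswap, hf]
  refine Prod.ext ?_ ?_ <;> simp only
  · change ((X.filter (fun i => i.val < Nat.find h) ∪ Y.filter (fun i => ¬ i.val < Nat.find h)).filter (fun i => i.val < Nat.find h') ∪
        (Y.filter (fun i => i.val < Nat.find h) ∪ X.filter (fun i => ¬ i.val < Nat.find h)).filter (fun i => ¬ i.val < Nat.find h')) = X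
    rw [hf, fmix1, fmix2, filter_union_filter_not_eq]
  · change ((Y.filter (fun i => i.val < Nat.find h) ∪ X.filter (fun i => ¬ i.val < Nat.find h)).filter (fun i => i.val < Nat.find h') ∪
        (X.filter (fun i => i.val < Nat.find h) ∪ Y.filter (fun i => ¬ i.val < Nat.find h)).filter (fun i => ¬ i.val < Nat.find h')) = Y
    rw [hf, fmix1, fmix2, filter_union_filter_not_eq]

lemma pswap_card1 (q : Finset (Fin n) × Finset (Fin n)) (h : ∃ t, pcnt q.1 t < pcnt q.2 t) :
    (pswap q h).1.card + 1 = q.2.card ∧ (pswap q h).2.card = q.1.card + 1 := by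
  have hs := find_spec' q h
  have h2 : pcnt q.2 (Nat.find h) ≤ q.2.card := card_filter_le _ _
  have h1 : pcnt q.1 (Nat.find h) ≤ q.1.card := card_filter_le _ _
  have c1 := fmix_card (fun i : Fin n => i.val < Nat.find h) q.1 q.2
  have c2 := fmix_card (fun i : Fin n => i.val < Nat.find h) q.2 q.1
  simp only [pswap]
  constructor
  · rw [c1]; unfold pcnt at hs h1 h2 ⊢; omega
  · rw [c2]; unfold pcnt at hs h1 h2 ⊢; omega

instance decGood (n : ℕ) : DecidablePred (fun q : Finset (Fin n) × Finset (Fin n) =>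
    ∀ t ∈ Finset.range (n+1), pcnt q.2 t ≤ pcnt q.1 t) := fun _ => by infer_instance

instance decBad (n : ℕ) : DecidablePred (fun q : Finset (Fin n) × Finset (Fin n) =>
    ¬ ∀ t ∈ Finset.range (n+1), pcnt q.2 t ≤ pcnt q.1 t) := fun _ => by
  exact instDecidableNot

/-- pairs of m-subsets with the domination condition -/
def goodP (n m : ℕ) : Finset (Finset (Fin n) × Finset (Fin n)) :=
  ((Finset.univ.powersetCard m) ×ˢ (Finset.univ.powersetCard m)).filter
    (fun q => ∀ t ∈ Finset.range (n+1), pcnt q.2 t ≤ pcnt q.1 t)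

def badP (n m : ℕ) : Finset (Finset (Fin n) × Finset (Fin n)) :=
  ((Finset.univ.powersetCard m) ×ˢ (Finset.univ.powersetCard m)).filter
    (fun q => ¬ ∀ t ∈ Finset.range (n+1), pcnt q.2 t ≤ pcnt q.1 t)

lemma bad_ex {n m : ℕ} {q : Finset (Fin n) × Finset (Fin n)} (hq : q ∈ badP n m) :
    ∃ t, pcnt q.1 t < pcnt q.2 t := by
  rw [badP, mem_filter] at hq
  obtain ⟨-, hq⟩ := hq
  push_neg at hq
  obtain ⟨t, -, ht⟩ := hq
  exact ⟨t, ht⟩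

lemma prod_ex {n m : ℕ} (hm : 1 ≤ m) {q : Finset (Fin n) × Finset (Fin n)}
    (hq : q ∈ (Finset.univ.powersetCard (m-1) : Finset (Finset (Fin n))) ×ˢ
      (Finset.univ.powersetCard (m+1) : Finset (Finset (Fin n)))) :
    ∃ t, pcnt q.1 t < pcnt q.2 t := by
  apply ex_of_card_lt
  obtain ⟨h1, h2⟩ := Finset.mem_product.1 hq
  rw [Finset.mem_powersetCard_univ] at h1 h2
  omega

lemma bad_card (n m : ℕ) (hm : 1 ≤ m) :
    (badP n m).card = n.choose (m-1) * n.choose (m+1) := by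
  have key : (badP n m).card = ((Finset.univ.powersetCard (m-1) : Finset (Finset (Fin n))) ×ˢ
      (Finset.univ.powersetCard (m+1) : Finset (Finset (Fin n)))).card := by
    refine Finset.card_bij' (fun q hq => pswap q (bad_ex hq))
      (fun q hq => pswap q (prod_ex hm hq)) ?_ ?_ ?_ ?_
    · intro q hq
      have hc := pswap_card1 q (bad_ex hq)
      have hqm := (Finset.mem_filter.1 hq).1
      obtain ⟨h1, h2⟩ := Finset.mem_product.1 hqm
      rw [Finset.mem_powersetCard_univ] at h1 h2
      rw [Finset.mem_product, Finset.mem_powersetCard_univ, Finset.mem_powersetCard_univ]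
      omega
    · intro q hq
      have hc := pswap_card1 q (prod_ex hm hq)
      obtain ⟨h1, h2⟩ := Finset.mem_product.1 hq
      rw [Finset.mem_powersetCard_univ] at h1 h2
      set h := prod_ex hm hq with hh
      rw [badP, Finset.mem_filter]
      constructor
      · rw [Finset.mem_product, Finset.mem_powersetCard_univ, Finset.mem_powersetCard_univ]
        omega
      · push_neg
        refine ⟨Nat.find h, ?_, ?_⟩
        · rw [Finset.mem_range]
          have : Nat.find h ≤ n := Nat.find_le (by
            rw [pcnt_of_ge _ le_rfl, pcnt_of_ge _ le_rfl]; omega)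
          omega
        · have e1 : pcnt (pswap q h).1 (Nat.find h) = pcnt q.1 (Nat.find h) :=
            pcnt_mix le_rfl _ _
          have e2 : pcnt (pswap q h).2 (Nat.find h) = pcnt q.2 (Nat.find h) :=
            pcnt_mix le_rfl _ _
          rw [e1, e2]
          exact Nat.find_spec h
    · intro q hq
      exact pswap_pswap q _ _
    · intro q hq
      exact pswap_pswap q _ _
  rw [key, Finset.card_product, Finset.card_powersetCard, Finset.card_powersetCard,
    Finset.card_univ, Fintype.card_fin]

lemma good_card (n m : ℕ) (hm : 1 ≤ m) :
    (goodP n m).card = n.choose m * n.choose m - n.choose (m-1) * n.choose (m+1) := by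
  set P := ((Finset.univ.powersetCard m : Finset (Finset (Fin n))) ×ˢ
    (Finset.univ.powersetCard m : Finset (Finset (Fin n)))) with hP
  have hsub : goodP n m ⊆ P := Finset.filter_subset _ _
  have hbd : badP n m = P \ goodP n m := by
    rw [badP, goodP, Finset.filter_not]
  have hPc : P.card = n.choose m * n.choose m := by
    rw [hP, Finset.card_product, Finset.card_powersetCard, Finset.card_univ, Fintype.card_fin]
  have h2 : (badP n m).card = P.card - (goodP n m).card := by
    rw [hbd, Finset.card_sdiff_of_subset hsub]
  have h3 : (goodP n m).card ≤ P.card := Finset.card_le_card hsub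
  have hb := bad_card n m hm
  omega


lemma narayana_arith (n k : ℕ) (h1 : 1 ≤ k) (h2 : k + 1 ≤ n) :
    n.choose k * n.choose k - n.choose (k+1) * n.choose (k-1)
      = (n+1).choose (k+1) * (n+1).choose k / (n+1) := by
  obtain ⟨u, hu⟩ : ∃ u, n = k + u := ⟨n - k, by omega⟩
  set a := n.choose k with ha
  set b := n.choose (k+1) with hb
  set c := n.choose (k-1) with hc
  set A := (n+1).choose (k+1) with hA
  set B := (n+1).choose k with hB
  set X := (k+1)*(u+1) with hX
  have hXpos : 0 < X := by positivity
  -- product identities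
  have P1 : b * (k+1) = a * u := by
    rw [hb, ha, Nat.choose_succ_right_eq]; congr 1; omega
  have P2 : a * k = c * (u+1) := by
    have := Nat.choose_succ_right_eq n (k-1)
    rw [← hc] at this
    have hk : k - 1 + 1 = k := by omega
    rw [hk] at this
    rw [ha, this]; congr 1; omega
  have P3 : A * (k+1) = (n+1) * a := by
    rw [hA, ha, ← Nat.add_one_mul_choose_eq]
  have P4 : B * (u+1) = (n+1) * a := by
    have h5 := Nat.add_one_mul_choose_eq n u
    have h6 : n.choose u = a := by
      rw [ha, ← Nat.choose_symm (show k ≤ n by omega)]; congr 1; omega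
    have h7 : (n+1).choose (u+1) = B := by
      rw [hB, ← Nat.choose_symm (show k ≤ n+1 by omega)]; congr 1; omega
    rw [h6, h7] at h5
    exact h5.symm
  -- inequality
  have e3 : b * c * X = a * a * (u * k) := by
    calc b * c * X = b * (k+1) * (c * (u+1)) := by rw [hX]; ring
      _ = (a * u) * (a * k) := by rw [P1, ← P2]
      _ = a * a * (u * k) := by ring
  have hineq : b * c ≤ a * a := by
    have h8 : u * k ≤ X := by rw [hX]; nlinarith
    have h9 : b * c * X ≤ a * a * X := by
      rw [e3]; exact Nat.mul_le_mul_left _ h8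
    exact Nat.le_of_mul_le_mul_right h9 hXpos
  obtain ⟨d, hd⟩ : ∃ d, a * a = b * c + d := ⟨a*a - b*c, by omega⟩
  have hgoal1 : a * a - b * c = d := by omega
  -- main equation : d * X = a * a * (n+1)
  have e4 : a * a * X = b * c * X + d * X := by rw [hd, Nat.add_mul]
  have e5 : X = u * k + (n+1) := by rw [hX]; nlinarith
  have e6 : d * X = a * a * (n+1) := by
    have : a * a * (u * k) + a * a * (n+1) = a * a * (u*k) + d * X := by
      rw [← Nat.mul_add, ← e5, e4, e3]
    omega
  have e7 : d * (n+1) * X = A * B * X := by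
    calc d * (n+1) * X = (n+1) * (d * X) := by ring
      _ = (n+1) * (a * a * (n+1)) := by rw [e6]
      _ = ((n+1) * a) * ((n+1) * a) := by ring
      _ = (A * (k+1)) * (B * (u+1)) := by rw [P3, P4]
      _ = A * B * X := by rw [hX]; ring
  have e8 : d * (n+1) = A * B := Nat.eq_of_mul_eq_mul_right hXpos e7
  rw [hgoal1, ← e8, Nat.mul_div_cancel _ (by omega : 0 < n+1)]


lemma sorted_index_lt {u : List ℕ} (hu : u.Pairwise (· < ·)) {i t : ℕ} (hi : i < u.length) :
    u[i] < t ↔ i < u.countP (fun x => decide (x < t)) := by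
  constructor
  · intro h
    have hsub := (List.take_sublist (i+1) u).countP_le (p := fun x => decide (x < t))
    have hlen : (u.take (i+1)).length = i+1 := by rw [List.length_take]; omega
    have hall : ∀ a ∈ u.take (i+1), (fun x => decide (x < t)) a = true := by
      intro a ha
      rw [List.mem_take_iff_getElem] at ha
      obtain ⟨j, hj, rfl⟩ := ha
      simp only [decide_eq_true_eq]
      have hj' : j < u.length := by
        have := min_le_right (i+1) u.length; omega
      have hji : j ≤ i := by
        have := min_le_left (i+1) u.length; omega
      rcases Nat.eq_or_lt_of_le hji with he | hlt
      · subst he; exact h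
      · have := hu.rel_get_of_lt (a := ⟨j, hj'⟩) (b := ⟨i, hi⟩) hlt
        simp only [List.get_eq_getElem] at this
        omega
    have heq : (u.take (i+1)).countP (fun x => decide (x < t)) = i+1 := by
      rw [List.countP_eq_length.2 hall, hlen]
    omega
  · intro h
    by_contra hge
    push_neg at hge
    have hsplit : u.countP (fun x => decide (x < t))
        = (u.take i).countP (fun x => decide (x < t))
          + (u.drop i).countP (fun x => decide (x < t)) := by
      rw [← List.countP_append, List.take_append_drop]
    have h1 : (u.take i).countP (fun x => decide (x < t)) ≤ i :=
      le_trans (List.countP_le_length (l := u.take i)) (by rw [List.length_take]; omega)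
    have h2 : (u.drop i).countP (fun x => decide (x < t)) = 0 := by
      rw [List.countP_eq_zero]
      intro a ha
      rw [List.mem_iff_getElem] at ha
      obtain ⟨j, hj, rfl⟩ := ha
      rw [List.getElem_drop]
      simp only [decide_eq_true_eq, not_lt]
      have hij : i + j < u.length := by
        rw [List.length_drop] at hj; omega
      rcases Nat.eq_zero_or_pos j with h0 | hpos
      · subst h0; simpa using hge
      · have := hu.rel_get_of_lt (a := ⟨i, hi⟩) (b := ⟨i+j, hij⟩) (by simp; omega)
        simp only [List.get_eq_getElem] at this
        omega
    omega

lemma sorted_dom {u v : List ℕ} (hu : u.Pairwise (· < ·)) (hv : v.Pairwise (· < ·))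
    (hlen : u.length = v.length) :
    (∀ i, u.getD i 0 ≤ v.getD i 0) ↔
      ∀ t, v.countP (fun x => decide (x < t)) ≤ u.countP (fun x => decide (x < t)) := by
  constructor
  · intro hd t
    set j := v.countP (fun x => decide (x < t)) with hj
    rcases Nat.eq_zero_or_pos j with h0 | hpos
    · omega
    · have hjv : j ≤ v.length := List.countP_le_length
      have hjl : j - 1 < v.length := by omega
      have hul : j - 1 < u.length := by omega
      have hv1 : v[j-1] < t := (sorted_index_lt hv hjl).2 (by omega)
      have hu1 := hd (j-1)
      rw [List.getD_eq_getElem _ _ hul, List.getD_eq_getElem _ _ hjl] at hu1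
      have := (sorted_index_lt hu (t := t) hul).1 (by omega)
      omega
  · intro hc i
    by_cases hi : i < u.length
    · have hi' : i < v.length := by omega
      rw [List.getD_eq_getElem _ _ hi, List.getD_eq_getElem _ _ hi']
      have h1 : i < v.countP (fun x => decide (x < v[i] + 1)) :=
        (sorted_index_lt hv hi').1 (by omega)
      have h2 : i < u.countP (fun x => decide (x < v[i] + 1)) :=
        lt_of_lt_of_le h1 (hc _)
      have := (sorted_index_lt hu hi).2 h2
      omega
    · rw [List.getD_eq_default _ _ (by omega)]
      exact Nat.zero_le _

def toWord (n : ℕ) (S : Finset (Fin n)) : List Bool := List.ofFn (fun i => decide (i ∉ S))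

lemma toWord_length (n : ℕ) (S : Finset (Fin n)) : (toWord n S).length = n :=
  List.length_ofFn

lemma toWord_getD (n : ℕ) (S : Finset (Fin n)) (i : ℕ) (h : i < n) :
    (toWord n S).getD i true = decide ((⟨i, h⟩ : Fin n) ∉ S) := by
  rw [List.getD_eq_getElem _ _ (by rw [toWord_length]; exact h)]
  exact List.getElem_ofFn _

lemma toWord_getD_false (n : ℕ) (S : Finset (Fin n)) (i : ℕ) (h : i < n) :
    ((toWord n S).getD i true = false) ↔ (⟨i, h⟩ : Fin n) ∈ S := by
  rw [toWord_getD n S i h]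
  simp

instance : IsAntisymm ℕ (· < ·) := ⟨fun a b h1 h2 => absurd h1 (by omega)⟩

lemma minusPos_toWord (n : ℕ) (S : Finset (Fin n)) :
    minusPos (toWord n S) = (S.sort (· ≤ ·)).map Fin.val := by
  have hs1 : (minusPos (toWord n S)).Pairwise (· < ·) :=
    List.Pairwise.filter _ (List.pairwise_lt_range)
  have hs2 : ((S.sort (· ≤ ·)).map Fin.val).Pairwise (· < ·) := by
    rw [List.pairwise_map]
    exact (Finset.sortedLT_sort S).pairwise.imp (fun h => h)
  have nd1 : (minusPos (toWord n S)).Nodup := hs1.imp (fun h => Nat.ne_of_lt h)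
  have nd2 : ((S.sort (· ≤ ·)).map Fin.val).Nodup := hs2.imp (fun h => Nat.ne_of_lt h)
  refine List.Perm.eq_of_pairwise' hs1 hs2 (List.perm_of_nodup_nodup_toFinset_eq nd1 nd2 ?_)
  ext i
  simp only [List.mem_toFinset, minusPos, List.mem_filter, List.mem_range, List.mem_map,
    toWord_length, decide_eq_true_eq]
  constructor
  · rintro ⟨hi, hfi⟩
    exact ⟨⟨i, hi⟩, by rw [Finset.mem_sort]; exact (toWord_getD_false n S i hi).1 hfi, rfl⟩
  · rintro ⟨a, ha, rfl⟩
    rw [Finset.mem_sort] at ha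
    exact ⟨a.isLt, (toWord_getD_false n S a.val a.isLt).2 (by simpa using ha)⟩

lemma pcnt_sortedVals (n : ℕ) (S : Finset (Fin n)) (t : ℕ) :
    ((S.sort (· ≤ ·)).map Fin.val).countP (fun x => decide (x < t)) = pcnt S t := by
  rw [List.countP_map]
  have h1 : (S.sort (· ≤ ·)).countP ((fun x => decide (x < t)) ∘ Fin.val)
      = S.toList.countP ((fun x => decide (x < t)) ∘ Fin.val) :=
    (Finset.sort_perm_toList S _).countP_eq _
  rw [h1]
  have h2 : S.toList.countP ((fun x => decide (x < t)) ∘ Fin.val)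
      = Multiset.countP (fun a : Fin n => a.val < t) ↑S.toList := by
    rw [Multiset.coe_countP]
    rfl
  rw [h2]
  unfold Finset.toList
  rw [Multiset.coe_toList, Multiset.countP_eq_card_filter]
  rw [pcnt, Finset.card_def, Finset.filter_val]

lemma minusPos_length_toWord (n : ℕ) (S : Finset (Fin n)) :
    (minusPos (toWord n S)).length = S.card := by
  rw [minusPos_toWord, List.length_map, Finset.length_sort]

lemma wle_toWord (n : ℕ) (S T : Finset (Fin n)) (hc : S.card = T.card) :
    wle (toWord n S) (toWord n T) ↔ ∀ t, pcnt T t ≤ pcnt S t := by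
  unfold wle
  rw [minusPos_toWord, minusPos_toWord]
  have hs1 : ((S.sort (· ≤ ·)).map Fin.val).Pairwise (· < ·) := by
    rw [List.pairwise_map]
    exact (Finset.sortedLT_sort S).pairwise.imp (fun h => h)
  have hs2 : ((T.sort (· ≤ ·)).map Fin.val).Pairwise (· < ·) := by
    rw [List.pairwise_map]
    exact (Finset.sortedLT_sort T).pairwise.imp (fun h => h)
  have hlen : ((S.sort (· ≤ ·)).map Fin.val).length = ((T.sort (· ≤ ·)).map Fin.val).length := by
    rw [List.length_map, List.length_map, Finset.length_sort, Finset.length_sort, hc]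
  rw [sorted_dom hs1 hs2 hlen]
  constructor
  · intro h t
    have := h t
    rwa [pcnt_sortedVals, pcnt_sortedVals] at this
  · intro h t
    rw [pcnt_sortedVals, pcnt_sortedVals]
    exact h t

lemma length_eq_counts (w : List Bool) : w.length = w.count false + w.count true := by
  induction w with
  | nil => rfl
  | cons b l ih =>
    cases b <;> simp [List.count_cons] <;> omega

lemma count_false_toWord (n : ℕ) (S : Finset (Fin n)) :
    (toWord n S).count false = S.card := by
  have h1 : (minusPos (toWord n S)).length = (toWord n S).count false := by
    unfold minusPos
    rw [← List.countP_eq_length_filter]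
    generalize (toWord n S) = w
    induction w with
    | nil => rfl
    | cons b l ih =>
      rw [List.length_cons, List.range_succ_eq_map, List.countP_cons, List.countP_map]
      simp only [List.getD_cons_zero, List.getD_cons_succ]
      rw [List.count_cons]
      have : List.countP ((fun i => decide (List.getD (b :: l) i true = false)) ∘ (· + 1))
          (List.range l.length) = List.countP (fun i => decide (l.getD i true = false))
          (List.range l.length) := by
        apply List.countP_congr
        intro a _
        simp [Function.comp]
      rw [this, ih]
      rcases Bool.eq_false_or_eq_true b with h | h <;> subst h <;> simp <;> omega
  rw [← h1, minusPos_length_toWord]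

lemma count_true_toWord (n : ℕ) (S : Finset (Fin n)) :
    (toWord n S).count true = n - S.card := by
  have := length_eq_counts (toWord n S)
  rw [toWord_length, count_false_toWord] at this
  omega

lemma toWord_recon (n : ℕ) (w : List Bool) (hlen : w.length = n) :
    toWord n (Finset.univ.filter (fun i : Fin n => w.getD i.val true = false)) = w := by
  apply List.ext_getElem (by rw [toWord_length, hlen])
  intro i h1 h2
  simp only [toWord, List.getElem_ofFn]
  simp only [Finset.mem_filter, Finset.mem_univ, true_and]
  have hgd : w.getD i true = w[i] := List.getD_eq_getElem _ _ h2
  rw [hgd]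
  rcases Bool.eq_false_or_eq_true w[i] with h | h <;> rw [h] <;> simp

lemma toWord_inj (n : ℕ) : Function.Injective (toWord n) := by
  intro S T h
  ext i
  have := congrArg (fun w => w.getD i.val true) h
  rw [toWord_getD n S i.val i.isLt, toWord_getD n T i.val i.isLt] at this
  by_cases hS : i ∈ S <;> by_cases hT : i ∈ T <;> simp_all

lemma dom_of_range (n : ℕ) {S T : Finset (Fin n)} (hS : S.card = T.card)
    (h : ∀ t ∈ Finset.range (n+1), pcnt T t ≤ pcnt S t) : ∀ t, pcnt T t ≤ pcnt S t := by
  intro t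
  by_cases ht : t ≤ n
  · exact h t (Finset.mem_range.2 (by omega))
  · rw [pcnt_of_ge _ (by omega), pcnt_of_ge _ (by omega)]
    omega

lemma set_eq_good (n k m : ℕ) (hmk : m + k = n) :
    {p : List Bool × List Bool | memW m k p.1 ∧ memW m k p.2 ∧ wle p.1 p.2}
      = (fun q : Finset (Fin n) × Finset (Fin n) => (toWord n q.1, toWord n q.2)) '' ↑(goodP n m) := by
  ext ⟨w0, w1⟩
  simp only [Set.mem_setOf_eq, Set.mem_image, Finset.mem_coe, Prod.exists]
  constructor
  · rintro ⟨⟨hf0, ht0⟩, ⟨hf1, ht1⟩, hw⟩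
    have hl0 : w0.length = n := by rw [length_eq_counts, hf0, ht0]; omega
    have hl1 : w1.length = n := by rw [length_eq_counts, hf1, ht1]; omega
    set S0 := Finset.univ.filter (fun i : Fin n => w0.getD i.val true = false) with hS0
    set S1 := Finset.univ.filter (fun i : Fin n => w1.getD i.val true = false) with hS1
    have hr0 : toWord n S0 = w0 := toWord_recon n w0 hl0
    have hr1 : toWord n S1 = w1 := toWord_recon n w1 hl1
    have hc0 : S0.card = m := by rw [← count_false_toWord n S0, hr0, hf0]
    have hc1 : S1.card = m := by rw [← count_false_toWord n S1, hr1, hf1]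
    refine ⟨S0, S1, ?_, by rw [hr0, hr1]⟩
    rw [goodP, Finset.mem_filter]
    refine ⟨?_, ?_⟩
    · rw [Finset.mem_product, Finset.mem_powersetCard_univ, Finset.mem_powersetCard_univ]
      exact ⟨hc0, hc1⟩
    · intro t _
      exact (wle_toWord n S0 S1 (by rw [hc0, hc1])).1 (by rw [hr0, hr1]; exact hw) t
  · rintro ⟨S0, S1, hmem, heq⟩
    rw [goodP, Finset.mem_filter] at hmem
    obtain ⟨hprod, hcond⟩ := hmem
    rw [Finset.mem_product, Finset.mem_powersetCard_univ, Finset.mem_powersetCard_univ] at hprod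
    obtain ⟨hc0, hc1⟩ := hprod
    simp only [Prod.mk.injEq] at heq
    obtain ⟨h0, h1⟩ := heq
    subst h0; subst h1
    refine ⟨⟨?_, ?_⟩, ⟨?_, ?_⟩, ?_⟩
    · rw [count_false_toWord, hc0]
    · rw [count_true_toWord, hc0]; omega
    · rw [count_false_toWord, hc1]
    · rw [count_true_toWord, hc1]; omega
    · exact (wle_toWord n S0 S1 (hc0.trans hc1.symm)).2
        (dom_of_range n (hc0.trans hc1.symm) hcond)

/-- The number of pairs `w₀ ⪯ w₁` in `W(n-k, k)` is the Narayana number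
`N(n+1, k+1) = (1/(n+1))·C(n+1,k+1)·C(n+1,k)`. -/
theorem stmt7 (n k : ℕ) (hk : k ≤ n) :
    {p : List Bool × List Bool |
        memW (n - k) k p.1 ∧ memW (n - k) k p.2 ∧ wle p.1 p.2}.ncard
      = (n+1).choose (k+1) * (n+1).choose k / (n+1) := by
  have hmk : (n - k) + k = n := by omega
  rw [set_eq_good n k (n-k) hmk]
  have hinj : Set.InjOn (fun q : Finset (Fin n) × Finset (Fin n) =>
      (toWord n q.1, toWord n q.2)) ↑(goodP n (n-k)) := by
    intro p _ q _ h
    simp only [Prod.mk.injEq] at h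
    exact Prod.ext (toWord_inj n h.1) (toWord_inj n h.2)
  rw [Set.ncard_image_of_injOn hinj, Set.ncard_coe_finset]
  by_cases hkn : k = n
  · subst hkn
    have hg : goodP k 0 = {((∅ : Finset (Fin k)), (∅ : Finset (Fin k)))} := by
      rw [goodP, Finset.powersetCard_zero]
      rw [Finset.singleton_product_singleton]
      apply Finset.filter_true_of_mem
      intro q hq
      rw [Finset.mem_singleton] at hq
      subst hq
      intro t _
      exact le_refl _
    rw [Nat.sub_self, hg, Finset.card_singleton, Nat.choose_self,
      Nat.choose_succ_self_right, one_mul, Nat.div_self (by omega)]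
  · have hm : 1 ≤ n - k := by omega
    rw [good_card n (n-k) hm]
    by_cases hk0 : k = 0
    · subst hk0
      simp [Nat.choose_succ_self, Nat.choose_one_right, Nat.div_self]
    · have h1 : 1 ≤ k := by omega
      have h2 : k + 1 ≤ n := by omega
      have e1 : n.choose (n-k) = n.choose k := Nat.choose_symm hk
      have e2 : n.choose (n-k-1) = n.choose (k+1) := by
        have hx : n - k - 1 = n - (k+1) := by omega
        rw [hx, Nat.choose_symm h2]
      have e3 : n.choose (n-k+1) = n.choose (k-1) := by
        have hx : n - k + 1 = n - (k-1) := by omega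
        rw [hx, Nat.choose_symm (show k-1 ≤ n by omega)]
      rw [e1, e2, e3]
      exact narayana_arith n k h1 h2
end

section
/- The Narayana numbers satisfy the recursion N(n+1, k+1) = N(n, k+1) + N(n, k) + Σ_{n_1+n_2=n, k_1+k_2=k-1, n_i ≥ 1} N(n_1, k_1+1) · N(n_2, k_2+1), with appropriate conventions for boundary terms. -/
open Nat

/-- The shifted Narayana number `C_{n,k} = N(n,k+1) = (1/n)·C(n,k+1)·C(n,k)`. -/
def narayanaC (n k : ℕ) : ℕ := n.choose (k+1) * n.choose k / n

/-- Coefficients of powers of the Narayana generating function. -/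
def G (m n k : ℕ) : ℚ :=
  if 1 ≤ m ∧ m + k ≤ n then (m * n.choose k * n.choose (n - m - k) : ℚ) / n
  else if m = 0 ∧ n = 0 ∧ k = 0 then 1 else 0

lemma Gp (m n k : ℕ) (h1 : 1 ≤ m) (h2 : m + k ≤ n) :
    G m n k = (m * n.choose k * n.choose (n - m - k) : ℚ) / n := by
  rw [G, if_pos ⟨h1, h2⟩]

lemma Gz (m n k : ℕ) (h1 : ¬(1 ≤ m ∧ m + k ≤ n)) (h2 : ¬(m = 0 ∧ n = 0 ∧ k = 0)) :
    G m n k = 0 := by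
  rw [G, if_neg h1, if_neg h2]

lemma L1 (m k : ℕ) :
    ((m+1 : ℚ) * ((m+k+2).choose (k+1))) / (m+k+2)
      = ((m : ℚ) * ((m+k+1).choose (k+1))) / (m+k+1)
        + ((m+1 : ℚ) * ((m+k+1).choose k)) / (m+k+1) := by
  have h1 : (((m+k+2).choose (k+1) : ℚ)) = (m+k+2)! / ((k+1)! * (m+1)!) := by
    rw [Nat.cast_choose ℚ (by omega)]; congr 4; omega
  have h2 : (((m+k+1).choose (k+1) : ℚ)) = (m+k+1)! / ((k+1)! * (m)!) := by
    rw [Nat.cast_choose ℚ (by omega)]; congr 4; omega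
  have h3 : (((m+k+1).choose k : ℚ)) = (m+k+1)! / ((k)! * (m+1)!) := by
    rw [Nat.cast_choose ℚ (by omega)]; congr 4; omega
  rw [h1, h2, h3]
  have e1 : ((m+k+2)! : ℚ) = (m+k+2) * (m+k+1)! := by
    rw [show m+k+2 = (m+k+1)+1 by omega, Nat.factorial_succ]; push_cast; ring
  have e2 : ((k+1)! : ℚ) = (k+1) * (k)! := by rw [Nat.factorial_succ]; push_cast; ring
  have e3 : ((m+1)! : ℚ) = (m+1) * (m)! := by rw [Nat.factorial_succ]; push_cast; ring
  rw [e1, e2, e3]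
  have p1 : ((m+k+1)! : ℚ) ≠ 0 := by positivity
  have p2 : ((k : ℚ)+1) ≠ 0 := by positivity
  have p3 : ((m : ℚ)+1) ≠ 0 := by positivity
  have p4 : ((k)! : ℚ) ≠ 0 := by positivity
  have p5 : ((m)! : ℚ) ≠ 0 := by positivity
  have p6 : ((m : ℚ)+k+2) ≠ 0 := by positivity
  have p7 : ((m : ℚ)+k+1) ≠ 0 := by positivity
  field_simp
  ring

set_option maxHeartbeats 3200000 in
lemma L2 (μ a c : ℕ) :
    ((μ+1 : ℚ) * ((μ+a+c+3).choose (a+1)) * ((μ+a+c+3).choose (c+1))) / (μ+a+c+3)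
      = ((μ : ℚ) * ((μ+a+c+2).choose (a+1)) * ((μ+a+c+2).choose (c+1))) / (μ+a+c+2)
      + ((μ+1 : ℚ) * ((μ+a+c+2).choose (a+1)) * ((μ+a+c+2).choose c)) / (μ+a+c+2)
      + ((μ+1 : ℚ) * ((μ+a+c+2).choose a) * ((μ+a+c+2).choose (c+1))) / (μ+a+c+2)
      + ((μ+2 : ℚ) * ((μ+a+c+2).choose a) * ((μ+a+c+2).choose c)) / (μ+a+c+2) := by
  have h1 : (((μ+a+c+3).choose (a+1) : ℚ)) = (μ+a+c+3)! / ((a+1)! * (μ+c+2)!) := by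
    rw [Nat.cast_choose ℚ (by omega)]; congr 4; omega
  have h2 : (((μ+a+c+3).choose (c+1) : ℚ)) = (μ+a+c+3)! / ((c+1)! * (μ+a+2)!) := by
    rw [Nat.cast_choose ℚ (by omega)]; congr 4; omega
  have h3 : (((μ+a+c+2).choose (a+1) : ℚ)) = (μ+a+c+2)! / ((a+1)! * (μ+c+1)!) := by
    rw [Nat.cast_choose ℚ (by omega)]; congr 4; omega
  have h4 : (((μ+a+c+2).choose (c+1) : ℚ)) = (μ+a+c+2)! / ((c+1)! * (μ+a+1)!) := by
    rw [Nat.cast_choose ℚ (by omega)]; congr 4; omega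
  have h5 : (((μ+a+c+2).choose a : ℚ)) = (μ+a+c+2)! / ((a)! * (μ+c+2)!) := by
    rw [Nat.cast_choose ℚ (by omega)]; congr 4; omega
  have h6 : (((μ+a+c+2).choose c : ℚ)) = (μ+a+c+2)! / ((c)! * (μ+a+2)!) := by
    rw [Nat.cast_choose ℚ (by omega)]; congr 4; omega
  have e1 : ((μ+a+c+3)! : ℚ) = (μ+a+c+3) * (μ+a+c+2)! := by
    rw [show μ+a+c+3 = (μ+a+c+2)+1 by omega, Nat.factorial_succ]; push_cast; ring
  have e2 : ((a+1)! : ℚ) = (a+1) * (a)! := by rw [Nat.factorial_succ]; push_cast; ring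
  have e3 : ((c+1)! : ℚ) = (c+1) * (c)! := by rw [Nat.factorial_succ]; push_cast; ring
  have e4 : ((μ+c+2)! : ℚ) = (μ+c+2) * (μ+c+1)! := by
    rw [show μ+c+2 = (μ+c+1)+1 by omega, Nat.factorial_succ]; push_cast; ring
  have e5 : ((μ+a+2)! : ℚ) = (μ+a+2) * (μ+a+1)! := by
    rw [show μ+a+2 = (μ+a+1)+1 by omega, Nat.factorial_succ]; push_cast; ring
  have p1 : ((μ+a+c+2)! : ℚ) ≠ 0 := by positivity
  have p2 : ((a : ℚ)+1) ≠ 0 := by positivity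
  have p3 : ((c : ℚ)+1) ≠ 0 := by positivity
  have p4 : ((a)! : ℚ) ≠ 0 := by positivity
  have p5 : ((c)! : ℚ) ≠ 0 := by positivity
  have p6 : ((μ+c+1)! : ℚ) ≠ 0 := by positivity
  have p7 : ((μ+a+1)! : ℚ) ≠ 0 := by positivity
  have p8 : ((μ : ℚ)+a+c+3) ≠ 0 := by positivity
  have p9 : ((μ : ℚ)+a+c+2) ≠ 0 := by positivity
  have p10 : ((μ : ℚ)+c+2) ≠ 0 := by positivity
  have p11 : ((μ : ℚ)+a+2) ≠ 0 := by positivity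
  set W : ℚ := ((μ+a+c+2)! * (μ+a+c+2)!) / ((a)! * (c)! * (μ+c+1)! * (μ+a+1)!) with hW
  have w1 : ((μ+1 : ℚ) * ((μ+a+c+3).choose (a+1)) * ((μ+a+c+3).choose (c+1))) / (μ+a+c+3)
      = ((μ+1) * (μ+a+c+3) / ((a+1)*(c+1)*(μ+c+2)*(μ+a+2))) * W := by
    rw [h1, h2, e1, e2, e3, e4, e5, hW]; field_simp
  have w2 : ((μ : ℚ) * ((μ+a+c+2).choose (a+1)) * ((μ+a+c+2).choose (c+1))) / (μ+a+c+2)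
      = ((μ : ℚ) / ((a+1)*(c+1)*(μ+a+c+2))) * W := by
    rw [h3, h4, e2, e3, hW]; field_simp
  have w3 : ((μ+1 : ℚ) * ((μ+a+c+2).choose (a+1)) * ((μ+a+c+2).choose c)) / (μ+a+c+2)
      = ((μ+1 : ℚ) / ((a+1)*(μ+a+2)*(μ+a+c+2))) * W := by
    rw [h3, h6, e2, e5, hW]; field_simp
  have w4 : ((μ+1 : ℚ) * ((μ+a+c+2).choose a) * ((μ+a+c+2).choose (c+1))) / (μ+a+c+2)
      = ((μ+1 : ℚ) / ((c+1)*(μ+c+2)*(μ+a+c+2))) * W := by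
    rw [h5, h4, e3, e4, hW]; field_simp
  have w5 : ((μ+2 : ℚ) * ((μ+a+c+2).choose a) * ((μ+a+c+2).choose c)) / (μ+a+c+2)
      = ((μ+2 : ℚ) / ((μ+c+2)*(μ+a+2)*(μ+a+c+2))) * W := by
    rw [h5, h6, e4, e5, hW]; field_simp
  rw [w1, w2, w3, w4, w5]
  have key : ((μ+1 : ℚ) * (μ+a+c+3)) / ((a+1)*(c+1)*(μ+c+2)*(μ+a+2))
      = (μ : ℚ) / ((a+1)*(c+1)*(μ+a+c+2)) + (μ+1 : ℚ) / ((a+1)*(μ+a+2)*(μ+a+c+2))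
        + (μ+1 : ℚ) / ((c+1)*(μ+c+2)*(μ+a+c+2)) + (μ+2 : ℚ) / ((μ+c+2)*(μ+a+2)*(μ+a+c+2)) := by
    field_simp
    ring
  linear_combination key * W

theorem recG (m n k : ℕ) (hm : 1 ≤ m) (hn : 1 ≤ n) :
    G m n k = G (m-1) (n-1) k + G m (n-1) k
      + (if k = 0 then 0 else G m (n-1) (k-1) + G (m+1) (n-1) (k-1)) := by
  rcases lt_trichotomy n (m+k) with h | h | h
  · -- everything vanishes
    rw [Gz _ _ _ (by omega) (by omega), Gz _ _ _ (by omega) (by omega),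
      Gz _ _ _ (by omega) (by omega)]
    rcases Nat.eq_zero_or_pos k with hk | hk
    · rw [if_pos hk]; norm_num
    · rw [if_neg (by omega), Gz _ _ _ (by omega) (by omega),
        Gz _ _ _ (by omega) (by omega)]; norm_num
  · -- boundary n = m + k
    rcases Nat.eq_zero_or_pos k with hk | hk
    · subst hk
      rcases Nat.lt_or_ge m 2 with hm2 | hm2
      · -- m = 1, n = 1
        obtain rfl : m = 1 := by omega
        obtain rfl : n = 1 := by omega
        norm_num [G]
      · -- m ≥ 2, n = m
        obtain rfl : n = m := by omega
        rw [if_pos rfl, Gp n n 0 hm (by omega)]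
        rw [Gp (n-1) (n-1) 0 (by omega) (by omega), Gz n (n-1) 0 (by omega) (by omega)]
        rw [show n - n - 0 = 0 by omega, show n - 1 - (n-1) - 0 = 0 by omega]
        simp only [Nat.choose_zero_right, Nat.cast_one, mul_one, one_mul]
        have c1 : ((n-1 : ℕ) : ℚ) = (n : ℚ) - 1 := by
          rw [Nat.cast_sub hm]; norm_num
        rw [c1]
        have p1 : (n : ℚ) ≠ 0 := by
          simp only [ne_eq, Nat.cast_eq_zero]; omega
        have p2 : (n : ℚ) - 1 ≠ 0 := by
          have h2 : (2 : ℚ) ≤ (n : ℚ) := by exact_mod_cast hm2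
          intro hc; rw [sub_eq_zero] at hc; rw [hc] at h2; norm_num at h2
        field_simp; norm_num
    · -- boundary, k ≥ 1
      obtain ⟨μ, rfl⟩ : ∃ μ, m = μ + 1 := ⟨m - 1, by omega⟩
      obtain ⟨a, rfl⟩ : ∃ a, k = a + 1 := ⟨k - 1, by omega⟩
      obtain rfl : n = μ + a + 2 := by omega
      rw [if_neg (by omega), show μ+1-1 = μ by omega, show a+1-1 = a by omega,
        show μ+a+2-1 = μ+a+1 by omega]
      rw [Gp (μ+1) (μ+a+2) (a+1) (by omega) (by omega),
        Gz (μ+1) (μ+a+1) (a+1) (by omega) (by omega),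
        Gp (μ+1) (μ+a+1) a (by omega) (by omega),
        Gz (μ+1+1) (μ+a+1) a (by omega) (by omega)]
      rw [show μ+a+2 - (μ+1) - (a+1) = 0 by omega,
        show μ+a+1 - (μ+1) - a = 0 by omega]
      have t1 : G μ (μ+a+1) (a+1)
          = (μ * ((μ+a+1).choose (a+1)) * ((μ+a+1).choose (μ+a+1 - μ - (a+1))) : ℚ)
            / ((μ+a+1 : ℕ) : ℚ) := by
        rcases Nat.eq_zero_or_pos μ with hμ | hμ
        · rw [Gz _ _ _ (by omega) (by omega), hμ]; norm_num
        · exact Gp μ (μ+a+1) (a+1) hμ (by omega)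
      rw [t1, show μ+a+1 - μ - (a+1) = 0 by omega]
      simp only [Nat.choose_zero_right, Nat.cast_one, mul_one]
      have := L1 μ a
      push_cast at this ⊢
      linear_combination this
  · -- interior: m + k < n
    rcases Nat.eq_zero_or_pos k with hk | hk
    · subst hk
      obtain ⟨μ, rfl⟩ : ∃ μ, m = μ + 1 := ⟨m - 1, by omega⟩
      obtain ⟨a, rfl⟩ : ∃ a, n = μ + a + 2 := ⟨n - μ - 2, by omega⟩
      rw [if_pos rfl, show μ+1-1 = μ by omega, show μ+a+2-1 = μ+a+1 by omega]
      rw [Gp (μ+1) (μ+a+2) 0 (by omega) (by omega),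
        Gp (μ+1) (μ+a+1) 0 (by omega) (by omega)]
      rw [show μ+a+2 - (μ+1) - 0 = a+1 by omega,
        show μ+a+1 - (μ+1) - 0 = a by omega]
      have t1 : G μ (μ+a+1) 0
          = (μ * ((μ+a+1).choose 0) * ((μ+a+1).choose (μ+a+1 - μ - 0)) : ℚ)
            / ((μ+a+1 : ℕ) : ℚ) := by
        rcases Nat.eq_zero_or_pos μ with hμ | hμ
        · rw [Gz _ _ _ (by omega) (by omega), hμ]; norm_num
        · exact Gp μ (μ+a+1) 0 hμ (by omega)
      rw [t1, show μ+a+1 - μ - 0 = a+1 by omega]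
      simp only [Nat.choose_zero_right, Nat.cast_one, mul_one, one_mul, add_zero]
      have := L1 μ a
      push_cast at this ⊢
      linear_combination this
    · -- main interior case
      obtain ⟨μ, rfl⟩ : ∃ μ, m = μ + 1 := ⟨m - 1, by omega⟩
      obtain ⟨a, rfl⟩ : ∃ a, k = a + 1 := ⟨k - 1, by omega⟩
      obtain ⟨c, rfl⟩ : ∃ c, n = μ + a + c + 3 := ⟨n - μ - a - 3, by omega⟩
      rw [if_neg (by omega), show μ+1-1 = μ by omega, show a+1-1 = a by omega,
        show μ+a+c+3-1 = μ+a+c+2 by omega]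
      rw [Gp (μ+1) (μ+a+c+3) (a+1) (by omega) (by omega),
        Gp (μ+1) (μ+a+c+2) (a+1) (by omega) (by omega),
        Gp (μ+1) (μ+a+c+2) a (by omega) (by omega),
        Gp (μ+1+1) (μ+a+c+2) a (by omega) (by omega)]
      rw [show μ+a+c+3 - (μ+1) - (a+1) = c+1 by omega,
        show μ+a+c+2 - (μ+1) - (a+1) = c by omega,
        show μ+a+c+2 - (μ+1) - a = c+1 by omega,
        show μ+a+c+2 - (μ+1+1) - a = c by omega]
      have t1 : G μ (μ+a+c+2) (a+1)
          = (μ * ((μ+a+c+2).choose (a+1)) * ((μ+a+c+2).choose (μ+a+c+2 - μ - (a+1))) : ℚ)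
            / ((μ+a+c+2 : ℕ) : ℚ) := by
        rcases Nat.eq_zero_or_pos μ with hμ | hμ
        · rw [Gz _ _ _ (by omega) (by omega), hμ]; norm_num
        · exact Gp μ (μ+a+c+2) (a+1) hμ (by omega)
      rw [t1, show μ+a+c+2 - μ - (a+1) = c+1 by omega]
      have := L2 μ a c
      push_cast at this ⊢
      linear_combination this

theorem convG (m1 : ℕ) (h1 : 1 ≤ m1) : ∀ n m2 k,
    ∑ n1 ∈ Finset.range (n+1), ∑ k1 ∈ Finset.range (k+1),
      G m1 n1 k1 * G m2 (n - n1) (k - k1) = G (m1+m2) n k := by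
  intro n
  induction n with
  | zero =>
    intro m2 k
    rw [Finset.sum_range_one, Gz (m1+m2) 0 k (by omega) (by omega)]
    apply Finset.sum_eq_zero
    intro k1 _
    rw [Gz m1 0 k1 (by omega) (by omega), zero_mul]
  | succ n ih =>
    intro m2 k
    rcases Nat.eq_zero_or_pos m2 with hm2 | hm2
    · subst hm2
      have inner0 : ∀ n1 ∈ Finset.range (n+1+1), n1 ≠ n+1 →
          (∑ k1 ∈ Finset.range (k+1), G m1 n1 k1 * G 0 (n+1-n1) (k-k1)) = 0 := by
        intro n1 hn1 hne
        have hmem := Finset.mem_range.mp hn1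
        apply Finset.sum_eq_zero
        intro k1 _
        rw [Gz 0 (n+1-n1) (k-k1) (by omega) (by omega), mul_zero]
      rw [Finset.sum_eq_single_of_mem (n+1) (Finset.self_mem_range_succ _) inner0]
      have inner1 : ∀ k1 ∈ Finset.range (k+1), k1 ≠ k →
          G m1 (n+1) k1 * G 0 (n+1-(n+1)) (k-k1) = 0 := by
        intro k1 hk1 hne
        have hmem := Finset.mem_range.mp hk1
        rw [Gz 0 (n+1-(n+1)) (k-k1) (by omega) (by omega), mul_zero]
      rw [Finset.sum_eq_single_of_mem k (Finset.self_mem_range_succ _) inner1]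
      rw [Nat.sub_self, Nat.sub_self, show G 0 0 0 = 1 by simp [G], mul_one]
      norm_num
    · rw [Finset.sum_range_succ]
      have last0 : (∑ k1 ∈ Finset.range (k+1), G m1 (n+1) k1 * G m2 (n+1-(n+1)) (k-k1)) = 0 := by
        apply Finset.sum_eq_zero
        intro k1 _
        rw [Nat.sub_self, Gz m2 0 (k-k1) (by omega) (by omega), mul_zero]
      rw [last0, add_zero]
      have step : ∀ n1 ∈ Finset.range (n+1),
          (∑ k1 ∈ Finset.range (k+1), G m1 n1 k1 * G m2 (n+1-n1) (k-k1))
            = (∑ k1 ∈ Finset.range (k+1), G m1 n1 k1 * G (m2-1) (n-n1) (k-k1))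
            + (∑ k1 ∈ Finset.range (k+1), G m1 n1 k1 * G m2 (n-n1) (k-k1))
            + (∑ k1 ∈ Finset.range (k+1), G m1 n1 k1 *
                (if k-k1 = 0 then 0 else G m2 (n-n1) (k-k1-1) + G (m2+1) (n-n1) (k-k1-1))) := by
        intro n1 hn1
        have hle := Finset.mem_range.mp hn1
        rw [← Finset.sum_add_distrib, ← Finset.sum_add_distrib]
        apply Finset.sum_congr rfl
        intro k1 _
        rw [recG m2 (n+1-n1) (k-k1) hm2 (by omega), show n+1-n1-1 = n-n1 by omega]
        ring
      rw [Finset.sum_congr rfl step, Finset.sum_add_distrib, Finset.sum_add_distrib]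
      rw [ih (m2-1) k, ih m2 k]
      have third : (∑ n1 ∈ Finset.range (n+1), ∑ k1 ∈ Finset.range (k+1), G m1 n1 k1 *
            (if k-k1 = 0 then 0 else G m2 (n-n1) (k-k1-1) + G (m2+1) (n-n1) (k-k1-1)))
          = (if k = 0 then 0 else G (m1+m2) n (k-1) + G (m1+m2+1) n (k-1)) := by
        rcases Nat.eq_zero_or_pos k with hk | hk
        · subst hk
          simp
        · obtain ⟨k', rfl⟩ : ∃ k', k = k'+1 := ⟨k-1, by omega⟩
          rw [if_neg (by omega)]
          have e : ∀ n1 ∈ Finset.range (n+1),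
              (∑ k1 ∈ Finset.range (k'+1+1), G m1 n1 k1 *
                (if k'+1-k1 = 0 then 0 else G m2 (n-n1) (k'+1-k1-1) + G (m2+1) (n-n1) (k'+1-k1-1)))
              = (∑ k1 ∈ Finset.range (k'+1), G m1 n1 k1 * G m2 (n-n1) (k'-k1))
                + (∑ k1 ∈ Finset.range (k'+1), G m1 n1 k1 * G (m2+1) (n-n1) (k'-k1)) := by
            intro n1 _
            rw [Finset.sum_range_succ, if_pos (by omega), mul_zero, add_zero,
              ← Finset.sum_add_distrib]
            apply Finset.sum_congr rfl
            intro k1 hk1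
            have hle := Finset.mem_range.mp hk1
            rw [if_neg (by omega), show k'+1-k1-1 = k'-k1 by omega]
            ring
          rw [Finset.sum_congr rfl e, Finset.sum_add_distrib, ih m2 k', ih (m2+1) k',
            show k'+1-1 = k' by omega, show m1+(m2+1) = m1+m2+1 by omega]
      rw [third, show m1 + (m2-1) = m1+m2-1 by omega,
        recG (m1+m2) (n+1) k (by omega) (by omega), Nat.add_sub_cancel]

lemma nar_dvd (n k : ℕ) (hn : 1 ≤ n) : n ∣ n.choose (k+1) * n.choose k := by
  by_cases hk : k + 1 ≤ n
  · have key : ∀ j, j ≤ n → (n : ℤ) * ((n-1).choose j) = ((n : ℤ) - j) * (n.choose j) := by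
      intro j hj
      have h0 := Nat.choose_mul_succ_eq (n-1) j
      rw [show n-1+1 = n by omega] at h0
      have h0' : ((n-1).choose j * n : ℤ) = (n.choose j : ℤ) * ((n : ℤ) - j) := by
        have : ((n-1).choose j * n : ℕ) = (n.choose j * (n - j) : ℕ) := h0
        have hc := congrArg (Nat.cast : ℕ → ℤ) this
        push_cast [Nat.cast_sub hj] at hc
        linarith [hc]
      linarith [h0']
    have k1 := key k (by omega)
    have k2 := key (k+1) hk
    have main : ((n.choose (k+1) * n.choose k : ℕ) : ℤ)
        = (n : ℤ) * ((((n-1).choose k : ℤ)) * (n.choose (k+1)) - ((n-1).choose (k+1)) * (n.choose k)) := by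
      push_cast at k1 k2 ⊢
      linear_combination (-(n.choose (k+1) : ℤ)) * k1 + ((n.choose k : ℤ)) * k2
    have : (n : ℤ) ∣ ((n.choose (k+1) * n.choose k : ℕ) : ℤ) := ⟨_, main⟩
    exact_mod_cast this
  · rw [Nat.choose_eq_zero_of_lt (by omega), zero_mul]
    exact Dvd.intro 0 rfl

lemma nar_eq_G (n k : ℕ) (hn : 1 ≤ n) : (narayanaC n k : ℚ) = G 1 n k := by
  by_cases hk : k + 1 ≤ n
  · rw [Gp 1 n k (le_refl 1) (by omega),
      show n - 1 - k = n - (k+1) by omega, Nat.choose_symm hk]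
    rw [narayanaC, Nat.cast_div (nar_dvd n k hn) (by
      simp only [ne_eq, Nat.cast_eq_zero]; omega)]
    push_cast
    ring
  · rw [narayanaC, Nat.choose_eq_zero_of_lt (by omega), zero_mul, Nat.zero_div,
      Gz 1 n k (by omega) (by omega), Nat.cast_zero]

/-- The Narayana recursion
`C_{n+1,k} = C_{n,k} + C_{n,k-1} + Σ_{n₁+n₂=n, k₁+k₂=k-1, nᵢ≥1} C_{n₁,k₁}·C_{n₂,k₂}`,
with the `C_{n,k-1}` term absent when `k = 0`. -/
theorem stmt8 (n k : ℕ) (hn : 1 ≤ n) :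
    narayanaC (n+1) k
      = narayanaC n k + (if k = 0 then 0 else narayanaC n (k-1)) +
        ∑ n₁ ∈ Finset.Icc 1 (n-1), ∑ k₁ ∈ Finset.range k,
          narayanaC n₁ k₁ * narayanaC (n - n₁) (k - 1 - k₁) := by
  have key : (narayanaC (n+1) k : ℚ)
      = (narayanaC n k : ℚ) + (if k = 0 then 0 else (narayanaC n (k-1) : ℚ)) +
        ∑ n₁ ∈ Finset.Icc 1 (n-1), ∑ k₁ ∈ Finset.range k,
          (narayanaC n₁ k₁ : ℚ) * (narayanaC (n - n₁) (k - 1 - k₁) : ℚ) := by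
    rw [nar_eq_G (n+1) k (by omega), recG 1 (n+1) k (le_refl 1) (by omega),
      Nat.add_sub_cancel, Nat.sub_self, Gz 0 n k (by omega) (by omega), zero_add,
      ← nar_eq_G n k hn]
    rcases Nat.eq_zero_or_pos k with hk | hk
    · subst hk
      simp
    · obtain ⟨k', rfl⟩ : ∃ k', k = k'+1 := ⟨k-1, by omega⟩
      rw [if_neg (by omega), if_neg (by omega), show k'+1-1 = k' by omega,
        ← nar_eq_G n k' hn]
      have sum_eq : (∑ n₁ ∈ Finset.Icc 1 (n-1), ∑ k₁ ∈ Finset.range (k'+1),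
            (narayanaC n₁ k₁ : ℚ) * (narayanaC (n - n₁) (k' - k₁) : ℚ))
          = ∑ n₁ ∈ Finset.range (n+1), ∑ k₁ ∈ Finset.range (k'+1),
            G 1 n₁ k₁ * G 1 (n - n₁) (k' - k₁) := by
        have h1 : ∀ n₁ ∈ Finset.Icc 1 (n-1),
            (∑ k₁ ∈ Finset.range (k'+1),
              (narayanaC n₁ k₁ : ℚ) * (narayanaC (n - n₁) (k' - k₁) : ℚ))
            = ∑ k₁ ∈ Finset.range (k'+1), G 1 n₁ k₁ * G 1 (n - n₁) (k' - k₁) := by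
          intro n₁ hmem
          rw [Finset.mem_Icc] at hmem
          apply Finset.sum_congr rfl
          intro k₁ _
          rw [nar_eq_G n₁ k₁ (by omega), nar_eq_G (n - n₁) (k' - k₁) (by omega)]
        rw [Finset.sum_congr rfl h1]
        apply Finset.sum_subset
        · intro x hx
          rw [Finset.mem_Icc] at hx
          rw [Finset.mem_range]
          omega
        · intro x hx hnx
          rw [Finset.mem_range] at hx
          rw [Finset.mem_Icc] at hnx
          apply Finset.sum_eq_zero
          intro k₁ _
          rcases Nat.eq_zero_or_pos x with hx0 | hx0
          · rw [Gz 1 x k₁ (by omega) (by omega), zero_mul]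
          · have hxn : x = n := by omega
            rw [Gz 1 (n - x) (k' - k₁) (by omega) (by omega), mul_zero]
      rw [sum_eq, ← convG 1 (le_refl 1) n 1 k']
      ring
  have cast_eq : ((narayanaC (n+1) k : ℕ) : ℚ)
      = ((narayanaC n k + (if k = 0 then 0 else narayanaC n (k-1)) +
          ∑ n₁ ∈ Finset.Icc 1 (n-1), ∑ k₁ ∈ Finset.range k,
            narayanaC n₁ k₁ * narayanaC (n - n₁) (k - 1 - k₁) : ℕ) : ℚ) := by
    push_cast [apply_ite (fun x : ℕ => (x : ℚ))]
    exact key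
  exact Nat.cast_injective cast_eq
end

section
/- For any n ≥ 1 and k with 0 ≤ k ≤ n-1, the number of chord diagrams of n chords with relative euler class e = 2k-(n-1) equals the shifted Narayana number N(n, k+1) = (1/n)·C(n,k+1)·C(n,k). -/
/-- A chord diagram with `n` chords, encoded as a fixed-point-free involution
of the `2n` marked points `0, …, 2n-1` (normalized to be the identity
elsewhere). -/
def IsMatching (n : ℕ) (f : ℕ → ℕ) : Prop :=
  (∀ i, i < 2*n → f i < 2*n) ∧ (∀ i, i < 2*n → f (f i) = i) ∧
  (∀ i, i < 2*n → f i ≠ i) ∧ (∀ i, ¬ i < 2*n → f i = i)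

/-- The matching is noncrossing: there are no chords `{a, f a}`, `{b, f b}`
with `a < b < f a < f b`. -/
def Noncrossing (n : ℕ) (f : ℕ → ℕ) : Prop :=
  ∀ a b, a < 2*n → b < 2*n → ¬ (a < b ∧ b < f a ∧ f a < f b)

/-- A chord diagram of `n` chords: a noncrossing perfect matching of the `2n`
marked points, with base point `0`. -/
def IsCD (n : ℕ) (f : ℕ → ℕ) : Prop := IsMatching n f ∧ Noncrossing n f


/-- The relative euler class of a chord diagram: the signed count of regions.
Each chord `{a, f a}` with `a < f a` contributes the sign of the region just
inside it (+1 if `a` is even, -1 if odd), and the outer region (adjacent to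
the arc just anticlockwise of the base point) contributes `-1`. -/
def eulerClass (n : ℕ) (f : ℕ → ℕ) : ℤ :=
  -1 + ∑ i ∈ Finset.range (2*n),
    (if i < f i then (if Even i then (1 : ℤ) else -1) else 0)




/-! ### Generalized binomials and the closed form -/

def ch (r : ℕ) (k : ℤ) : ℤ := if 0 ≤ k then (r.choose k.toNat : ℤ) else 0

lemma ch_neg {r : ℕ} {k : ℤ} (h : k < 0) : ch r k = 0 := by
  simp [ch, not_le.mpr h]

lemma ch_coe (r k : ℕ) : ch r (k : ℤ) = (r.choose k : ℤ) := by
  simp [ch]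

lemma ch_pascal (r : ℕ) (k : ℤ) : ch (r+1) k = ch r k + ch r (k-1) := by
  rcases lt_trichotomy k 0 with h | h | h
  · rw [ch_neg h, ch_neg h, ch_neg (by omega)]; ring
  · subst h; simp [ch]
  · unfold ch
    rw [if_pos (by omega), if_pos (by omega), if_pos (by omega)]
    have hk : k.toNat = (k-1).toNat + 1 := by omega
    rw [hk, Nat.choose_succ_succ]
    push_cast; ring

def Oz (r : ℕ) (H p : ℤ) : ℤ := ch r (p-1) * ch r (p-H-1) - ch r p * ch r (p-H-2)

lemma Oz_Hneg (r : ℕ) (p : ℤ) : Oz r (-1) p = 0 := by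
  unfold Oz
  have h1 : p - (-1) - 1 = p := by ring
  have h2 : p - (-1) - 2 = p - 1 := by ring
  rw [h1, h2]; ring

lemma Oz_pneg (r : ℕ) (H : ℤ) : Oz r H (-1) = 0 := by
  unfold Oz
  rw [ch_neg (by omega : (-1:ℤ) - 1 < 0), ch_neg (by omega : (-1:ℤ) < 0)]
  ring

lemma Oz_rec (r : ℕ) (H p : ℤ) :
    Oz (r+1) H p = Oz r (H-1) (p-1) + Oz r H (p-1) + Oz r H p + Oz r (H+1) p := by
  unfold Oz
  rw [ch_pascal r (p-1), ch_pascal r (p-H-1), ch_pascal r p, ch_pascal r (p-H-2)]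
  have e1 : p - 1 - (H-1) - 1 = p - H - 1 := by ring
  have e2 : p - 1 - (H-1) - 2 = p - H - 2 := by ring
  have e3 : p - 1 - H - 1 = p - H - 2 := by ring
  have e4 : p - 1 - H - 2 = p - H - 3 := by ring
  have e5 : p - (H+1) - 1 = p - H - 2 := by ring
  have e6 : p - (H+1) - 2 = p - H - 3 := by ring
  have e7 : p - 1 - 1 = p - 2 := by ring
  have e8 : p - H - 1 - 1 = p - H - 2 := by ring
  have e9 : p - H - 2 - 1 = p - H - 3 := by ring
  rw [e1, e2, e3, e4, e5, e6, e7, e8, e9]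
  ring

/-! ### The counting sets -/

def cnt (O : Finset ℕ) (t : ℕ) : ℕ := (O ∩ Finset.range t).card

lemma cnt_of_subset {O : Finset ℕ} {l t : ℕ} (h : O ⊆ Finset.range l) (hl : l ≤ t) :
    cnt O t = O.card := by
  unfold cnt
  rw [Finset.inter_eq_left.mpr (h.trans (Finset.range_subset_range.mpr hl))]

lemma cnt_erase {O : Finset ℕ} {l t : ℕ} (h : t ≤ l) : cnt (O.erase l) t = cnt O t := by
  unfold cnt
  congr 1
  ext x
  simp only [Finset.mem_inter, Finset.mem_erase, Finset.mem_range]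
  constructor
  · rintro ⟨⟨_, hx⟩, ht⟩; exact ⟨hx, ht⟩
  · rintro ⟨hx, ht⟩; exact ⟨⟨by omega, hx⟩, ht⟩

lemma cnt_insert {O : Finset ℕ} {l t : ℕ} (h : t ≤ l) : cnt (insert l O) t = cnt O t := by
  unfold cnt
  congr 1
  ext x
  simp only [Finset.mem_inter, Finset.mem_insert, Finset.mem_range]
  constructor
  · rintro ⟨hx | hx, ht⟩
    · omega
    · exact ⟨hx, ht⟩
  · rintro ⟨hx, ht⟩; exact ⟨Or.inr hx, ht⟩

def SetP (l h p : ℕ) (O : Finset ℕ) : Prop :=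
  O ⊆ Finset.range l ∧ (∀ t ≤ l, t ≤ 2 * cnt O t) ∧ 2 * O.card = l + h ∧
    (O.filter (fun i => Even i)).card = p

instance (l h p : ℕ) : DecidablePred (SetP l h p) := fun _ => by
  unfold SetP; infer_instance

def Slhp (l h p : ℕ) : Finset (Finset ℕ) :=
  (Finset.range l).powerset.filter (SetP l h p)

lemma mem_Slhp {l h p : ℕ} {O : Finset ℕ} : O ∈ Slhp l h p ↔ SetP l h p O := by
  simp only [Slhp, Finset.mem_filter, Finset.mem_powerset, and_iff_right_iff_imp]
  exact fun h => h.1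

lemma filter_notmem_eq (l h p : ℕ) :
    (Slhp (l+1) h p).filter (fun O => l ∉ O) = Slhp l (h+1) p := by
  ext O
  simp only [Finset.mem_filter, mem_Slhp, SetP]
  constructor
  · rintro ⟨⟨hsub, hbal, hcard, hev⟩, hl⟩
    refine ⟨fun x hx => ?_, fun t ht => hbal t (by omega), by omega, hev⟩
    have h1 := hsub hx
    simp only [Finset.mem_range] at h1 ⊢
    have : x ≠ l := fun h => hl (h ▸ hx)
    omega
  · rintro ⟨hsub, hbal, hcard, hev⟩
    have hl : l ∉ O := fun h => by
      have := hsub h; simp [Finset.mem_range] at this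
    refine ⟨⟨hsub.trans (Finset.range_subset_range.mpr (by omega)), ?_, by omega, hev⟩, hl⟩
    intro t ht
    rcases Nat.lt_or_ge t (l+1) with h | h
    · exact hbal t (by omega)
    · have ht' : t = l + 1 := by omega
      subst ht'
      rw [cnt_of_subset hsub (by omega)]
      omega

lemma filter_mem_card (l h p q : ℕ) (hpq : p = q + (if Even l then 1 else 0)) :
    ((Slhp (l+1) (h+1) p).filter (fun O => l ∈ O)).card = (Slhp l h q).card := by
  refine Finset.card_bij' (fun O _ => O.erase l) (fun O _ => insert l O) ?hi ?hj ?left ?right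
  case hi =>
    rintro O hO
    rw [Finset.mem_filter, mem_Slhp] at hO
    obtain ⟨⟨hsub, hbal, hcard, hev⟩, hl⟩ := hO
    rw [mem_Slhp]
    have hcard' : (O.erase l).card + 1 = O.card := by
      rw [Finset.card_erase_of_mem hl]
      have : 0 < O.card := Finset.card_pos.mpr ⟨l, hl⟩
      omega
    refine ⟨?_, ?_, by omega, ?_⟩
    · intro x hx
      rw [Finset.mem_erase] at hx
      have := hsub hx.2
      simp only [Finset.mem_range] at this ⊢
      have := hx.1; omega
    · intro t ht
      rw [cnt_erase ht]
      exact hbal t (by omega)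
    · have h1 : Finset.filter (fun i => Even i) (O.erase l)
          = (Finset.filter (fun i => Even i) O).erase l :=
        Finset.filter_erase (fun i => Even i) l O
      rw [h1]
      by_cases he : Even l
      · have hmem : l ∈ Finset.filter (fun i => Even i) O := Finset.mem_filter.mpr ⟨hl, he⟩
        rw [Finset.card_erase_of_mem hmem]
        rw [if_pos he] at hpq
        have : 0 < (Finset.filter (fun i => Even i) O).card := Finset.card_pos.mpr ⟨l, hmem⟩
        omega
      · have hnm : l ∉ Finset.filter (fun i => Even i) O :=
          fun hc => he (Finset.mem_filter.mp hc).2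
        rw [Finset.erase_eq_of_notMem hnm]
        rw [if_neg he] at hpq
        omega
  case hj =>
    rintro O hO
    rw [mem_Slhp] at hO
    obtain ⟨hsub, hbal, hcard, hev⟩ := hO
    have hl : l ∉ O := fun h => by
      have := hsub h; simp [Finset.mem_range] at this
    rw [Finset.mem_filter, mem_Slhp]
    have hci : (insert l O).card = O.card + 1 := Finset.card_insert_of_notMem hl
    refine ⟨⟨?_, ?_, by omega, ?_⟩, Finset.mem_insert_self l O⟩
    · intro x hx
      rw [Finset.mem_insert] at hx
      simp only [Finset.mem_range]
      rcases hx with rfl | hx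
      · omega
      · have := hsub hx; simp only [Finset.mem_range] at this; omega
    · intro t ht
      rcases Nat.lt_or_ge t (l+1) with h | h
      · rw [cnt_insert (by omega)]
        exact hbal t (by omega)
      · have ht' : t = l + 1 := by omega
        subst ht'
        rw [cnt_of_subset (Finset.insert_subset (by simp) (hsub.trans (Finset.range_subset_range.mpr (by omega)))) (le_refl _)]
        omega
    · have h1 : Finset.filter (fun i => Even i) (insert l O)
          = if Even l then insert l (Finset.filter (fun i => Even i) O)
            else Finset.filter (fun i => Even i) O :=
        Finset.filter_insert (fun i => Even i) l O
      rw [h1]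
      by_cases he : Even l
      · rw [if_pos he, Finset.card_insert_of_notMem (fun hc => hl (Finset.mem_filter.mp hc).1)]
        rw [if_pos he] at hpq
        omega
      · rw [if_neg he]
        rw [if_neg he] at hpq
        omega
  case left =>
    rintro O hO
    rw [Finset.mem_filter] at hO
    exact Finset.insert_erase hO.2
  case right =>
    rintro O hO
    rw [mem_Slhp] at hO
    have hl : l ∉ O := fun h => by
      have := hO.1 h; simp [Finset.mem_range] at this
    exact Finset.erase_insert hl

lemma filter_mem_h0 (l p : ℕ) :
    (Slhp (l+1) 0 p).filter (fun O => l ∈ O) = ∅ := by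
  ext O
  simp only [Finset.mem_filter, mem_Slhp, SetP, Finset.notMem_empty, iff_false, not_and]
  rintro ⟨hsub, hbal, hcard, _⟩ hl
  have h1 : cnt O l + 1 = O.card := by
    unfold cnt
    have : O ∩ Finset.range l = O.erase l := by
      ext x
      simp only [Finset.mem_inter, Finset.mem_range, Finset.mem_erase]
      constructor
      · rintro ⟨hx, ht⟩; exact ⟨by omega, hx⟩
      · rintro ⟨hx, ht⟩
        have := hsub ht; simp only [Finset.mem_range] at this
        exact ⟨ht, by omega⟩
    rw [this, Finset.card_erase_of_mem hl]
    have : 0 < O.card := Finset.card_pos.mpr ⟨l, hl⟩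
    omega
  have := hbal l (by omega)
  omega

lemma filter_mem_p0 {l : ℕ} (hl : Even l) (h : ℕ) :
    (Slhp (l+1) h 0).filter (fun O => l ∈ O) = ∅ := by
  ext O
  simp only [Finset.mem_filter, mem_Slhp, SetP, Finset.notMem_empty, iff_false, not_and]
  rintro ⟨hsub, hbal, hcard, hev⟩ hmem
  have : l ∈ O.filter (fun i => Even i) := Finset.mem_filter.mpr ⟨hmem, hl⟩
  have := Finset.card_pos.mpr ⟨l, this⟩
  omega

lemma card_split (l h p : ℕ) :
    (Slhp (l+1) h p).card
      = ((Slhp (l+1) h p).filter (fun O => l ∈ O)).card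
        + ((Slhp (l+1) h p).filter (fun O => l ∉ O)).card := by
  exact (Finset.card_filter_add_card_filter_not (fun O => l ∈ O)).symm

lemma rec_h0 (l p : ℕ) : (Slhp (l+1) 0 p).card = (Slhp l 1 p).card := by
  rw [card_split, filter_mem_h0, filter_notmem_eq]
  simp

lemma rec_succ (l h p q : ℕ) (hpq : p = q + (if Even l then 1 else 0)) :
    (Slhp (l+1) (h+1) p).card = (Slhp l h q).card + (Slhp l (h+2) p).card := by
  rw [card_split, filter_mem_card l h p q hpq, filter_notmem_eq]

lemma rec_p0_even {l : ℕ} (hl : Even l) (h : ℕ) :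
    (Slhp (l+1) h 0).card = (Slhp l (h+1) 0).card := by
  rw [card_split, filter_mem_p0 hl, filter_notmem_eq]
  simp

lemma Slhp_one (h p : ℕ) : Slhp 1 h p = if h = 1 ∧ p = 1 then {{0}} else ∅ := by
  ext O
  rw [mem_Slhp]
  constructor
  · rintro ⟨hsub, hbal, hcard, hev⟩
    rw [Finset.range_one, Finset.subset_singleton_iff] at hsub
    rcases hsub with rfl | rfl
    · simp at hcard
      have := hbal 1 (le_refl 1)
      simp [cnt] at this
    · simp only [Finset.card_singleton] at hcard
      have hh : h = 1 := by omega
      have hp : p = 1 := by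
        rw [← hev]
        rw [show Finset.filter (fun i => Even i) ({0} : Finset ℕ) = {0} by decide]
        rfl
      simp [hh, hp]
  · intro hO
    by_cases hc : h = 1 ∧ p = 1
    · rw [if_pos hc] at hO
      simp only [Finset.mem_singleton] at hO
      subst hO
      obtain ⟨rfl, rfl⟩ := hc
      refine ⟨by simp [Finset.range_one], ?_, by simp, by decide⟩
      intro t ht
      interval_cases t
      · simp
      · simp [cnt]
    · rw [if_neg hc] at hO
      simp at hO

lemma ch_zero (k : ℤ) : ch 0 k = if k = 0 then 1 else 0 := by
  unfold ch
  rcases lt_trichotomy k 0 with h | h | h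
  · rw [if_neg (by omega), if_neg (by omega)]
  · subst h; simp
  · rw [if_pos (by omega), if_neg (by omega)]
    have : k.toNat ≠ 0 := by omega
    rcases Nat.exists_eq_succ_of_ne_zero this with ⟨m, hm⟩
    rw [hm, Nat.choose_eq_zero_of_lt (by omega)]
    simp

lemma layer_base (H p : ℕ) : ((Slhp 1 (2*H+1) p).card : ℤ) = Oz 0 (H : ℤ) (p : ℤ) := by
  rw [Slhp_one]
  unfold Oz
  rw [ch_zero, ch_zero, ch_zero, ch_zero]
  by_cases hc : 2*H+1 = 1 ∧ p = 1
  · rw [if_pos hc]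
    obtain ⟨h1, h2⟩ := hc
    have hH : H = 0 := by omega
    subst hH h2
    norm_num
  · rw [if_neg hc]
    simp only [Finset.card_empty, Nat.cast_zero]
    have : ¬(H = 0 ∧ p = 1) := by omega
    split_ifs <;> push_cast <;> omega

lemma layer_odd : ∀ r : ℕ, ∀ H p : ℕ, ((Slhp (2*r+1) (2*H+1) p).card : ℤ) = Oz r (H : ℤ) (p : ℤ) := by
  intro r
  induction r with
  | zero => intro H p; exact layer_base H p
  | succ r ih =>
    intro H p
    have el : Even (2*r+2) := ⟨r+1, by ring⟩
    have ol : ¬ Even (2*r+1) := by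
      rw [Nat.even_add_one]; simp [Nat.even_mul]
    -- rewrite the index 2*(r+1)+1 = (2*r+2)+1
    have e0 : 2*(r+1)+1 = (2*r+2)+1 := by ring
    rw [e0]
    -- helper: expand an even-level set at height ≥ 1
    have expand : ∀ (H' p' : ℕ), ((Slhp (2*r+2) (2*H'+2) p').card : ℤ)
        = Oz r (H' : ℤ) (p' : ℤ) + Oz r ((H' : ℤ)+1) (p' : ℤ) := by
      intro H' p'
      have e1 : (2*r+2 : ℕ) = (2*r+1)+1 := by ring
      have e2 : (2*H'+2 : ℕ) = (2*H'+1)+1 := by ring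
      rw [e1, e2, rec_succ (2*r+1) (2*H'+1) p' p' (by rw [if_neg ol]; omega)]
      push_cast
      rw [ih H' p']
      have e3 : (2*H'+1+2 : ℕ) = 2*(H'+1)+1 := by ring
      rw [e3, ih (H'+1) p']
      push_cast
      ring
    have expand0 : ∀ (p' : ℕ), ((Slhp (2*r+2) 0 p').card : ℤ) = Oz r 0 (p' : ℤ) := by
      intro p'
      have e1 : (2*r+2 : ℕ) = (2*r+1)+1 := by ring
      rw [e1, rec_h0]
      have e3 : (1 : ℕ) = 2*0+1 := by norm_num
      rw [e3, ih 0 p']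
      norm_num
    cases p with
    | zero =>
      rw [rec_p0_even el (2*H+1)]
      have e2 : (2*H+1+1 : ℕ) = 2*H+2 := by ring
      rw [e2, expand H 0]
      rw [Oz_rec]
      have z1 : Oz r ((H:ℤ)-1) ((0:ℕ) - 1 : ℤ) = 0 := by
        rw [show ((0:ℕ):ℤ) - 1 = -1 by norm_num]; exact Oz_pneg r _
      rw [show ((0:ℕ):ℤ) - 1 = -1 by norm_num, Oz_pneg, Oz_pneg]
      push_cast
      ring
    | succ q =>
      rw [rec_succ (2*r+2) (2*H) (q+1) q (by simp [el])]
      push_cast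
      have er : ((Slhp (2*r+2) (2*H+2) (q+1)).card : ℤ)
          = Oz r (H : ℤ) ((q:ℤ)+1) + Oz r ((H:ℤ)+1) ((q:ℤ)+1) := by
        have := expand H (q+1)
        push_cast at this
        exact this
      rw [er]
      cases H with
      | zero =>
        have e4 : (2*0 : ℕ) = 0 := by norm_num
        rw [e4, expand0 q]
        rw [Oz_rec]
        rw [show ((0:ℕ):ℤ) - 1 = -1 by norm_num, Oz_Hneg]
        push_cast
        ring
      | succ H' =>
        have e4 : (2*(H'+1) : ℕ) = 2*H'+2 := by ring
        rw [e4, expand H' q]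
        rw [Oz_rec]
        push_cast
        have e5 : ((H':ℤ)+1) - 1 = (H' : ℤ) := by ring
        rw [e5]
        ring

lemma count_even (n p : ℕ) (hn : 1 ≤ n) :
    ((Slhp (2*n) 0 p).card : ℤ) = Oz (n-1) 0 (p : ℤ) := by
  obtain ⟨m, rfl⟩ : ∃ m, n = m+1 := ⟨n-1, by omega⟩
  have e1 : (2*(m+1) : ℕ) = (2*m+1)+1 := by ring
  rw [e1, rec_h0]
  have e3 : (1 : ℕ) = 2*0+1 := by norm_num
  rw [e3, layer_odd m 0 p]
  norm_num

/-! ### Heights and walks -/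

def hgt (O : Finset ℕ) (t : ℕ) : ℤ := 2 * (cnt O t : ℤ) - t

lemma cnt_zero (O : Finset ℕ) : cnt O 0 = 0 := by simp [cnt]

lemma cnt_succ (O : Finset ℕ) (t : ℕ) :
    cnt O (t+1) = cnt O t + if t ∈ O then 1 else 0 := by
  unfold cnt
  rw [Finset.range_add_one, Finset.inter_comm, Finset.inter_comm O (Finset.range t)]
  by_cases h : t ∈ O
  · rw [if_pos h, Finset.insert_inter_of_mem h,
      Finset.card_insert_of_notMem (fun hc => by simp at hc)]
  · rw [if_neg h, Finset.insert_inter_of_notMem h, Nat.add_zero]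

lemma hgt_zero (O : Finset ℕ) : hgt O 0 = 0 := by simp [hgt, cnt_zero]

lemma hgt_succ_mem {O : Finset ℕ} {t : ℕ} (h : t ∈ O) : hgt O (t+1) = hgt O t + 1 := by
  unfold hgt; rw [cnt_succ, if_pos h]; push_cast; ring

lemma hgt_succ_not_mem {O : Finset ℕ} {t : ℕ} (h : t ∉ O) : hgt O (t+1) = hgt O t - 1 := by
  unfold hgt; rw [cnt_succ, if_neg h]; push_cast; ring

lemma hgt_step (O : Finset ℕ) (t : ℕ) :
    hgt O (t+1) = hgt O t + 1 ∨ hgt O (t+1) = hgt O t - 1 := by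
  by_cases h : t ∈ O
  · exact Or.inl (hgt_succ_mem h)
  · exact Or.inr (hgt_succ_not_mem h)

lemma walk_ivt_up {g : ℕ → ℤ} (hs : ∀ t, g (t+1) = g t + 1 ∨ g (t+1) = g t - 1) :
    ∀ b a v, a ≤ b → g a ≤ v → v ≤ g b → ∃ j, a ≤ j ∧ j ≤ b ∧ g j = v := by
  intro b
  induction b with
  | zero =>
    intro a v ha h1 h2
    obtain rfl : a = 0 := by omega
    exact ⟨0, le_refl _, le_refl _, by omega⟩
  | succ b ihb =>
    intro a v ha h1 h2
    rcases Nat.eq_or_lt_of_le ha with rfl | hlt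
    · exact ⟨b+1, le_refl _, le_refl _, by omega⟩
    · have hab : a ≤ b := by omega
      by_cases hv : v ≤ g b
      · obtain ⟨j, hj1, hj2, hj3⟩ := ihb a v hab h1 hv
        exact ⟨j, hj1, by omega, hj3⟩
      · rcases hs b with h | h
        · exact ⟨b+1, by omega, le_refl _, by omega⟩
        · exact ⟨b+1, by omega, le_refl _, by omega⟩

lemma walk_ivt_down {g : ℕ → ℤ} (hs : ∀ t, g (t+1) = g t + 1 ∨ g (t+1) = g t - 1) :
    ∀ b a v, a ≤ b → g b ≤ v → v ≤ g a → ∃ j, a ≤ j ∧ j ≤ b ∧ g j = v := by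
  intro b a v hab h1 h2
  have hs' : ∀ t, (fun s => -g s) (t+1) = (fun s => -g s) t + 1 ∨
      (fun s => -g s) (t+1) = (fun s => -g s) t - 1 := by
    intro t
    simp only
    rcases hs t with h | h
    · right; omega
    · left; omega
  obtain ⟨j, hj1, hj2, hj3⟩ := walk_ivt_up (g := fun s => -g s) hs' b a (-v) hab
    (show -g a ≤ -v by omega) (show -v ≤ -g b by omega)
  have hj3' : -g j = -v := hj3
  exact ⟨j, hj1, hj2, by omega⟩

/-! ### The canonical noncrossing matching of a ballot set -/

noncomputable def fret (O : Finset ℕ) (j : ℕ) : ℕ := sInf {s | j < s ∧ hgt O s = hgt O j} - 1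

noncomputable def lvis (O : Finset ℕ) (i : ℕ) : ℕ := sSup {j | j ≤ i ∧ hgt O j = hgt O (i+1)}

noncomputable def matchOf (n : ℕ) (O : Finset ℕ) (i : ℕ) : ℕ :=
  if i < 2*n then (if i ∈ O then fret O i else lvis O i) else i

section Ballot

variable {n : ℕ} {O : Finset ℕ}

/-- Bundle of hypotheses: `O` is a ballot set for `2n` points. -/
def IsBallot (n : ℕ) (O : Finset ℕ) : Prop :=
  O ⊆ Finset.range (2*n) ∧ O.card = n ∧ ∀ t ≤ 2*n, t ≤ 2 * cnt O t

variable (hB : IsBallot n O)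
include hB

lemma hgt_nonneg {t : ℕ} (ht : t ≤ 2*n) : 0 ≤ hgt O t := by
  have := hB.2.2 t ht
  unfold hgt
  omega

lemma hgt_total : hgt O (2*n) = 0 := by
  unfold hgt
  rw [cnt_of_subset hB.1 (le_refl _), hB.2.1]
  push_cast; ring

lemma mem_lt {j : ℕ} (hj : j ∈ O) : j < 2*n := by
  have := hB.1 hj; simpa [Finset.mem_range] using this

lemma fret_spec {j : ℕ} (hj : j ∈ O) :
    j < fret O j ∧ fret O j < 2*n ∧ hgt O (fret O j + 1) = hgt O j ∧
      (∀ t, j < t → t ≤ fret O j → hgt O j < hgt O t) := by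
  have hjn : j < 2*n := mem_lt hB hj
  set S : Set ℕ := {s | j < s ∧ hgt O s = hgt O j} with hS
  have hw : ∃ s, s ∈ S ∧ s ≤ 2*n := by
    obtain ⟨s, hs1, hs2, hs3⟩ := walk_ivt_down (hgt_step O) (2*n) (j+1) (hgt O j)
      (by omega) (by rw [hgt_total hB]; exact hgt_nonneg hB (by omega))
      (by rw [hgt_succ_mem hj]; omega)
    exact ⟨s, ⟨by omega, hs3⟩, hs2⟩
  obtain ⟨s, hsS, hs2n⟩ := hw
  have hne : S.Nonempty := ⟨s, hsS⟩
  have hIS : sInf S ∈ S := Nat.sInf_mem hne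
  have hIle : sInf S ≤ s := Nat.sInf_le hsS
  have hInej : sInf S ≠ j + 1 := by
    intro h
    have := hIS.2
    rw [h, hgt_succ_mem hj] at this
    omega
  have hIgt : j + 2 ≤ sInf S := by
    have := hIS.1; omega
  have hfr : fret O j = sInf S - 1 := rfl
  have hmin : ∀ t, j < t → t < sInf S → hgt O t ≠ hgt O j := by
    intro t h1 h2 h3
    have : sInf S ≤ t := Nat.sInf_le ⟨h1, h3⟩
    omega
  have hgtmin : ∀ t, j < t → t ≤ fret O j → hgt O j < hgt O t := by
    intro t
    induction t with
    | zero => omega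
    | succ t iht =>
      intro h1 h2
      rcases Nat.eq_or_lt_of_le h1 with h | h
      · rw [← h, hgt_succ_mem hj]; omega
      · have ht' : t ≤ fret O j := by omega
        have := iht (by omega) ht'
        have hstep := hgt_step O t
        have hneq := hmin (t+1) (by omega) (by omega)
        omega
  refine ⟨by omega, by omega, ?_, hgtmin⟩
  have : fret O j + 1 = sInf S := by omega
  rw [this]
  exact hIS.2

lemma fret_not_mem {j : ℕ} (hj : j ∈ O) : fret O j ∉ O := by
  obtain ⟨h1, h2, h3, h4⟩ := fret_spec hB hj
  intro hc
  have := hgt_succ_mem hc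
  have := h4 (fret O j) h1 (le_refl _)
  omega

lemma lvis_spec {i : ℕ} (hi : i < 2*n) (hio : i ∉ O) :
    lvis O i ∈ O ∧ lvis O i < i ∧ hgt O (lvis O i) = hgt O (i+1) ∧
      (∀ t, lvis O i < t → t ≤ i → hgt O t ≠ hgt O (i+1)) := by
  set w := hgt O (i+1) with hw
  have hwi : hgt O i = w + 1 := by
    rw [hw, hgt_succ_not_mem hio]; ring
  have hwnn : 0 ≤ w := hgt_nonneg hB (by omega)
  set T : Set ℕ := {j | j ≤ i ∧ hgt O j = w} with hT
  have hne : T.Nonempty := by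
    obtain ⟨j, hj1, hj2, hj3⟩ := walk_ivt_up (hgt_step O) i 0 w (by omega)
      (by rw [hgt_zero]; omega) (by omega)
    exact ⟨j, hj2, hj3⟩
  have hbdd : BddAbove T := ⟨i, fun x hx => hx.1⟩
  have hJT : sSup T ∈ T := Nat.sSup_mem hne hbdd
  have hmax : ∀ t, sSup T < t → t ≤ i → hgt O t ≠ w := by
    intro t h1 h2 h3
    have : t ≤ sSup T := le_csSup hbdd ⟨h2, h3⟩
    omega
  have hJi : sSup T < i := by
    rcases Nat.eq_or_lt_of_le hJT.1 with h | h
    · exfalso; have := hJT.2; rw [h] at this; omega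
    · exact h
  have hJmem : sSup T ∈ O := by
    by_contra hc
    have hstep := hgt_succ_not_mem hc
    rw [hJT.2] at hstep
    obtain ⟨t, ht1, ht2, ht3⟩ := walk_ivt_up (hgt_step O) i (sSup T + 1) w
      (by omega) (by omega) (by omega)
    exact hmax t (by omega) ht2 ht3
  exact ⟨hJmem, hJi, hJT.2, hmax⟩

lemma fret_lvis {i : ℕ} (hi : i < 2*n) (hio : i ∉ O) : fret O (lvis O i) = i := by
  obtain ⟨hm, hlt, heq, hmax⟩ := lvis_spec hB hi hio
  set S : Set ℕ := {s | lvis O i < s ∧ hgt O s = hgt O (lvis O i)} with hS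
  have hiS : i + 1 ∈ S := ⟨by omega, by rw [heq]⟩
  have hne : S.Nonempty := ⟨i+1, hiS⟩
  have hIS : sInf S ∈ S := Nat.sInf_mem hne
  have hle : sInf S ≤ i + 1 := Nat.sInf_le hiS
  have : sInf S = i + 1 := by
    rcases Nat.eq_or_lt_of_le hle with h | h
    · exact h
    · exfalso
      exact hmax (sInf S) hIS.1 (by omega) (by rw [hIS.2, heq])
  unfold fret
  rw [← hS, this]
  omega

lemma lvis_fret {j : ℕ} (hj : j ∈ O) : lvis O (fret O j) = j := by
  obtain ⟨h1, h2, h3, h4⟩ := fret_spec hB hj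
  set T : Set ℕ := {t | t ≤ fret O j ∧ hgt O t = hgt O (fret O j + 1)} with hT
  have hjT : j ∈ T := ⟨by omega, by rw [h3]⟩
  have hbdd : BddAbove T := ⟨fret O j, fun x hx => hx.1⟩
  have hJT : sSup T ∈ T := Nat.sSup_mem ⟨j, hjT⟩ hbdd
  have hge : j ≤ sSup T := le_csSup hbdd hjT
  have : sSup T = j := by
    rcases Nat.eq_or_lt_of_le hge with h | h
    · omega
    · exfalso
      have := h4 (sSup T) h (hJT.1)
      have := hJT.2
      rw [h3] at this
      omega
  unfold lvis
  rw [← hT, this]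

end Ballot


section BallotCD

variable {n : ℕ} {O : Finset ℕ} (hB : IsBallot n O)
include hB

lemma matchOf_mem {j : ℕ} (hj : j ∈ O) : matchOf n O j = fret O j := by
  unfold matchOf
  rw [if_pos (mem_lt hB hj), if_pos hj]

lemma matchOf_not_mem {i : ℕ} (hi : i < 2*n) (hio : i ∉ O) : matchOf n O i = lvis O i := by
  unfold matchOf
  rw [if_pos hi, if_neg hio]

lemma matchOf_isCD : IsCD n (matchOf n O) := by
  have hmem := fun {j} (hj : j ∈ O) => matchOf_mem hB hj
  have hnmem := fun {i} (hi : i < 2*n) (hio : i ∉ O) => matchOf_not_mem hB hi hio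
  constructor
  · refine ⟨?_, ?_, ?_, ?_⟩
    · intro i hi
      by_cases hio : i ∈ O
      · rw [hmem hio]; exact (fret_spec hB hio).2.1
      · rw [hnmem hi hio]
        have := (lvis_spec hB hi hio).2.1
        omega
    · intro i hi
      by_cases hio : i ∈ O
      · rw [hmem hio, hnmem (fret_spec hB hio).2.1 (fret_not_mem hB hio),
          lvis_fret hB hio]
      · rw [hnmem hi hio, hmem (lvis_spec hB hi hio).1, fret_lvis hB hi hio]
    · intro i hi
      by_cases hio : i ∈ O
      · rw [hmem hio]
        have := (fret_spec hB hio).1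
        omega
      · rw [hnmem hi hio]
        have := (lvis_spec hB hi hio).2.1
        omega
    · intro i hi
      unfold matchOf
      rw [if_neg hi]
  · intro a b ha hb
    rintro ⟨hab, hbfa, hfafb⟩
    -- a and b are both openers
    have haO : a ∈ O := by
      by_contra hc
      rw [hnmem ha hc] at hbfa hfafb
      have := (lvis_spec hB ha hc).2.1
      omega
    have hbO : b ∈ O := by
      by_contra hc
      rw [hnmem hb hc] at hfafb
      rw [hmem haO] at hfafb hbfa
      have := (lvis_spec hB hb hc).2.1
      omega
    rw [hmem haO] at hbfa hfafb
    rw [hmem hbO] at hfafb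
    obtain ⟨ha1, ha2, ha3, ha4⟩ := fret_spec hB haO
    obtain ⟨hb1, hb2, hb3, hb4⟩ := fret_spec hB hbO
    -- hgt O b > hgt O a on (a, fret a]; first return of b happens before fret a + 1
    have hvb : hgt O a < hgt O b := ha4 b hab (by omega)
    have hvb1 : hgt O (b+1) = hgt O b + 1 := hgt_succ_mem hbO
    -- walk down from b+1 to fret O a + 1
    obtain ⟨s, hs1, hs2, hs3⟩ := walk_ivt_down (hgt_step O) (fret O a + 1) (b+1) (hgt O b)
      (by omega) (by rw [ha3]; omega) (by omega)
    -- s is a return of b at or before fret O a + 1, so fret O b ≤ fret O a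
    have : fret O b + 1 ≤ s := by
      by_contra hc
      push_neg at hc
      have hs' : b < s := by omega
      have := hb4 s hs' (by omega)
      omega
    omega

lemma matchOf_openers :
    (Finset.range (2*n)).filter (fun i => i < matchOf n O i) = O := by
  ext i
  simp only [Finset.mem_filter, Finset.mem_range]
  constructor
  · rintro ⟨hi, hlt⟩
    by_contra hc
    rw [matchOf_not_mem hB hi hc] at hlt
    have := (lvis_spec hB hi hc).2.1
    omega
  · intro hi
    refine ⟨mem_lt hB hi, ?_⟩
    rw [matchOf_mem hB hi]
    exact (fret_spec hB hi).1

end BallotCD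

/-! ### From chord diagrams to ballot sequences -/

def openers (n : ℕ) (f : ℕ → ℕ) : Finset ℕ :=
  (Finset.range (2*n)).filter (fun i => i < f i)

section CDtoBallot

variable {n : ℕ} {f : ℕ → ℕ} (hf : IsCD n f)
include hf

lemma cd_lt {i : ℕ} (hi : i < 2*n) : f i < 2*n := hf.1.1 i hi

lemma cd_invol {i : ℕ} (hi : i < 2*n) : f (f i) = i := hf.1.2.1 i hi

lemma cd_ne {i : ℕ} (hi : i < 2*n) : f i ≠ i := hf.1.2.2.1 i hi

lemma cd_inj {a b : ℕ} (ha : a < 2*n) (hb : b < 2*n) (h : f a = f b) : a = b := by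
  rw [← cd_invol hf ha, h, cd_invol hf hb]

lemma mem_openers {i : ℕ} : i ∈ openers n f ↔ i < 2*n ∧ i < f i := by
  simp [openers, Finset.mem_filter, Finset.mem_range]

lemma cd_closer_lt {i : ℕ} (hi : i < 2*n) (hio : i ∉ openers n f) : f i < i := by
  rw [mem_openers hf] at hio
  have := cd_ne hf hi
  omega

lemma cd_card_filters {a b : ℕ} (hb : b ≤ 2*n) :
    ((Finset.Ico a b).filter (fun i => i < f i)).card
      + ((Finset.Ico a b).filter (fun i => f i < i)).card = b - a := by
  have h1 : (Finset.Ico a b).filter (fun i => f i < i)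
      = (Finset.Ico a b).filter (fun i => ¬ i < f i) := by
    apply Finset.filter_congr
    intro x hx
    simp only [Finset.mem_Ico] at hx
    have := cd_ne hf (by omega : x < 2*n)
    constructor
    · intro h; omega
    · intro h; omega
  rw [h1, Finset.card_filter_add_card_filter_not, Nat.card_Ico]

lemma cd_hgt_diff {a b : ℕ} (hab : a ≤ b) (hb : b ≤ 2*n) :
    hgt (openers n f) b = hgt (openers n f) a
      + (((Finset.Ico a b).filter (fun i => i < f i)).card : ℤ)
      - (((Finset.Ico a b).filter (fun i => f i < i)).card : ℤ) := by
  have h1 : openers n f ∩ Finset.Ico a b = (Finset.Ico a b).filter (fun i => i < f i) := by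
    ext x
    simp only [Finset.mem_inter, Finset.mem_filter, Finset.mem_Ico, mem_openers hf]
    constructor
    · rintro ⟨⟨h2, h3⟩, h4⟩; exact ⟨h4, h3⟩
    · rintro ⟨h4, h3⟩; exact ⟨⟨by omega, h3⟩, h4⟩
  have h2 : cnt (openers n f) b
      = cnt (openers n f) a + ((Finset.Ico a b).filter (fun i => i < f i)).card := by
    unfold cnt
    rw [← h1]
    have hr : Finset.range b = Finset.range a ∪ Finset.Ico a b := by
      rw [Finset.range_eq_Ico, Finset.range_eq_Ico, Finset.Ico_union_Ico_eq_Ico (by omega) hab]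
    rw [hr, Finset.inter_union_distrib_left, Finset.card_union_of_disjoint]
    apply Finset.disjoint_left.mpr
    intro x hx1 hx2
    simp only [Finset.mem_inter, Finset.mem_range, Finset.mem_Ico] at hx1 hx2
    omega
  have h3 := cd_card_filters hf (a := a) hb
  unfold hgt
  rw [h2]
  push_cast
  omega

lemma cd_interval {j i : ℕ} (hj : j < 2*n) (hjo : j < f j) (h1 : j < i) (h2 : i < f j) :
    j < f i ∧ f i < f j := by
  have hfj : f j < 2*n := cd_lt hf hj
  have hi : i < 2*n := by omega
  have hne1 : f i ≠ j := by
    intro h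
    have : f j = i := by rw [← h, cd_invol hf hi]
    omega
  have hne2 : f i ≠ f j := fun h => by have := cd_inj hf hi hj h; omega
  have hgt1 : ¬ f i < j := by
    intro h
    have hfi : f i < 2*n := cd_lt hf hi
    have := hf.2 (f i) j hfi hj
    rw [cd_invol hf hi] at this
    exact this ⟨h, h1, h2⟩
  have hgt2 : ¬ f j < f i := by
    intro h
    exact hf.2 j i hj hi ⟨h1, h2, h⟩
  omega

lemma cd_high {j t : ℕ} (hj : j < 2*n) (hjo : j < f j) (h1 : j < t) (h2 : t ≤ f j) :
    hgt (openers n f) j < hgt (openers n f) t := by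
  have hfj : f j < 2*n := cd_lt hf hj
  have hinj : ((Finset.Ico (j+1) t).filter (fun i => f i < i)).card
      ≤ ((Finset.Ico (j+1) t).filter (fun i => i < f i)).card := by
    apply Finset.card_le_card_of_injOn (fun c => f c)
    · intro c hc
      simp only [Finset.mem_coe, Finset.mem_filter, Finset.mem_Ico] at hc ⊢
      obtain ⟨⟨hc1, hc2⟩, hc3⟩ := hc
      have hcn : c < 2*n := by omega
      obtain ⟨hh1, hh2⟩ := cd_interval hf hj hjo (show j < c by omega) (show c < f j by omega)
      refine ⟨⟨by omega, by omega⟩, ?_⟩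
      rw [cd_invol hf hcn]
      omega
    · intro c1 hc1 c2 hc2 h
      simp only [Finset.coe_filter, Set.mem_setOf_eq, Finset.mem_Ico] at hc1 hc2
      exact cd_inj hf (by omega) (by omega) h
  have hdiff := cd_hgt_diff hf (a := j+1) (b := t) (by omega) (by omega)
  have hj1 : hgt (openers n f) (j+1) = hgt (openers n f) j + 1 :=
    hgt_succ_mem ((mem_openers hf).mpr ⟨hj, hjo⟩)
  omega

lemma cd_return {j : ℕ} (hj : j < 2*n) (hjo : j < f j) :
    hgt (openers n f) (f j + 1) = hgt (openers n f) j := by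
  have hfj : f j < 2*n := cd_lt hf hj
  -- on Ico (j+1) (f j): openers and closers are in bijection via f
  have hbij : ((Finset.Ico (j+1) (f j)).filter (fun i => i < f i)).card
      = ((Finset.Ico (j+1) (f j)).filter (fun i => f i < i)).card := by
    apply Finset.card_bij' (fun o _ => f o) (fun c _ => f c)
    · intro o ho
      simp only [Finset.mem_filter, Finset.mem_Ico] at ho ⊢
      obtain ⟨⟨h1, h2⟩, h3⟩ := ho
      obtain ⟨hh1, hh2⟩ := cd_interval hf hj hjo (show j < o by omega) (show o < f j by omega)
      refine ⟨⟨by omega, by omega⟩, ?_⟩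
      rw [cd_invol hf (by omega)]
      omega
    · intro c hc
      simp only [Finset.mem_filter, Finset.mem_Ico] at hc ⊢
      obtain ⟨⟨h1, h2⟩, h3⟩ := hc
      obtain ⟨hh1, hh2⟩ := cd_interval hf hj hjo (show j < c by omega) (show c < f j by omega)
      refine ⟨⟨by omega, by omega⟩, ?_⟩
      rw [cd_invol hf (by omega)]
      omega
    · intro o ho
      simp only [Finset.mem_filter, Finset.mem_Ico] at ho
      exact cd_invol hf (by omega)
    · intro c hc
      simp only [Finset.mem_filter, Finset.mem_Ico] at hc
      exact cd_invol hf (by omega)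
  -- extend to Ico (j+1) (f j + 1) : f j is a closer, not an opener
  have hop : (Finset.Ico (j+1) (f j + 1)).filter (fun i => i < f i)
      = (Finset.Ico (j+1) (f j)).filter (fun i => i < f i) := by
    ext x
    simp only [Finset.mem_filter, Finset.mem_Ico]
    constructor
    · rintro ⟨⟨h1, h2⟩, h3⟩
      have : x ≠ f j := by
        intro h
        subst h
        rw [cd_invol hf hj] at h3
        omega
      exact ⟨⟨h1, by omega⟩, h3⟩
    · rintro ⟨⟨h1, h2⟩, h3⟩
      exact ⟨⟨h1, by omega⟩, h3⟩
  have hcl : (Finset.Ico (j+1) (f j + 1)).filter (fun i => f i < i)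
      = insert (f j) ((Finset.Ico (j+1) (f j)).filter (fun i => f i < i)) := by
    ext x
    simp only [Finset.mem_filter, Finset.mem_Ico, Finset.mem_insert]
    constructor
    · rintro ⟨⟨h1, h2⟩, h3⟩
      by_cases hx : x = f j
      · exact Or.inl hx
      · exact Or.inr ⟨⟨h1, by omega⟩, h3⟩
    · rintro (rfl | ⟨⟨h1, h2⟩, h3⟩)
      · refine ⟨⟨by omega, by omega⟩, ?_⟩
        rw [cd_invol hf hj]
        omega
      · exact ⟨⟨h1, by omega⟩, h3⟩
  have hnotmem : f j ∉ (Finset.Ico (j+1) (f j)).filter (fun i => f i < i) := by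
    simp only [Finset.mem_filter, Finset.mem_Ico]
    rintro ⟨⟨_, h⟩, _⟩
    omega
  have hdiff := cd_hgt_diff hf (a := j+1) (b := f j + 1) (by omega) (by omega)
  rw [hop, hcl, Finset.card_insert_of_notMem hnotmem] at hdiff
  have hj1 : hgt (openers n f) (j+1) = hgt (openers n f) j + 1 :=
    hgt_succ_mem ((mem_openers hf).mpr ⟨hj, hjo⟩)
  omega

lemma cd_isBallot : IsBallot n (openers n f) := by
  refine ⟨Finset.filter_subset _ _, ?_, ?_⟩
  · -- card = n
    have hbij : ((Finset.Ico 0 (2*n)).filter (fun i => i < f i)).card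
        = ((Finset.Ico 0 (2*n)).filter (fun i => f i < i)).card := by
      apply Finset.card_bij' (fun o _ => f o) (fun c _ => f c)
      · intro o ho
        simp only [Finset.mem_filter, Finset.mem_Ico] at ho ⊢
        obtain ⟨⟨_, h2⟩, h3⟩ := ho
        have := cd_lt hf h2
        refine ⟨⟨by omega, by omega⟩, ?_⟩
        rw [cd_invol hf h2]
        omega
      · intro c hc
        simp only [Finset.mem_filter, Finset.mem_Ico] at hc ⊢
        obtain ⟨⟨_, h2⟩, h3⟩ := hc
        have := cd_lt hf h2
        refine ⟨⟨by omega, by omega⟩, ?_⟩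
        rw [cd_invol hf h2]
        omega
      · intro o ho
        simp only [Finset.mem_filter, Finset.mem_Ico] at ho
        exact cd_invol hf (by omega)
      · intro c hc
        simp only [Finset.mem_filter, Finset.mem_Ico] at hc
        exact cd_invol hf (by omega)
    have htot := cd_card_filters hf (a := 0) (b := 2*n) (le_refl _)
    have hopeq : openers n f = (Finset.Ico 0 (2*n)).filter (fun i => i < f i) := by
      unfold openers
      rw [Finset.range_eq_Ico]
    rw [hopeq]
    omega
  · -- ballot
    intro t ht
    have hinj : ((Finset.Ico 0 t).filter (fun i => f i < i)).card
        ≤ ((Finset.Ico 0 t).filter (fun i => i < f i)).card := by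
      apply Finset.card_le_card_of_injOn (fun c => f c)
      · intro c hc
        simp only [Finset.mem_coe, Finset.mem_filter, Finset.mem_Ico] at hc ⊢
        obtain ⟨⟨_, h2⟩, h3⟩ := hc
        refine ⟨⟨by omega, by omega⟩, ?_⟩
        rw [cd_invol hf (by omega)]
        omega
      · intro c1 hc1 c2 hc2 h
        simp only [Finset.coe_filter, Set.mem_setOf_eq, Finset.mem_Ico] at hc1 hc2
        exact cd_inj hf (by omega) (by omega) h
    have htot := cd_card_filters hf (a := 0) (b := t) ht
    have hcnteq : cnt (openers n f) t = ((Finset.Ico 0 t).filter (fun i => i < f i)).card := by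
      unfold cnt
      congr 1
      ext x
      simp only [Finset.mem_inter, mem_openers hf, Finset.mem_range, Finset.mem_filter,
        Finset.mem_Ico]
      constructor
      · rintro ⟨⟨h1, h2⟩, h3⟩; exact ⟨⟨by omega, h3⟩, h2⟩
      · rintro ⟨⟨_, h3⟩, h2⟩; exact ⟨⟨by omega, h2⟩, h3⟩
    omega

lemma cd_matchOf : matchOf n (openers n f) = f := by
  have hB := cd_isBallot hf
  funext i
  by_cases hi : i < 2*n
  · by_cases hio : i ∈ openers n f
    · rw [matchOf_mem hB hio]
      -- fret (openers n f) i = f i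
      obtain ⟨hi2n, hifi⟩ := (mem_openers hf).mp hio
      set S : Set ℕ := {s | i < s ∧ hgt (openers n f) s = hgt (openers n f) i} with hS
      have hmem : f i + 1 ∈ S := ⟨by omega, cd_return hf hi2n hifi⟩
      have hle : sInf S ≤ f i + 1 := Nat.sInf_le hmem
      have hIS : sInf S ∈ S := Nat.sInf_mem ⟨_, hmem⟩
      have heq : sInf S = f i + 1 := by
        rcases Nat.eq_or_lt_of_le hle with h | h
        · exact h
        · exfalso
          have := cd_high hf hi2n hifi hIS.1 (by omega : sInf S ≤ f i)
          have := hIS.2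
          omega
      unfold fret
      rw [← hS, heq]
      omega
    · rw [matchOf_not_mem hB hi hio]
      have hfi : f i < i := cd_closer_lt hf hi hio
      have hffi : f (f i) = i := cd_invol hf hi
      have hfio : f i ∈ openers n f := by
        rw [mem_openers hf]
        refine ⟨by omega, by omega⟩
      -- matchOf (openers) (f i) = fret (f i) = f (f i) = i, use lvis_fret
      have h1 : fret (openers n f) (f i) = i := by
        obtain ⟨hx, hy⟩ := (mem_openers hf).mp hfio
        set S : Set ℕ := {s | f i < s ∧ hgt (openers n f) s = hgt (openers n f) (f i)} with hS
        have hret := cd_return hf hx hy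
        rw [hffi] at hret
        have hmem : i + 1 ∈ S := ⟨by omega, hret⟩
        have hle : sInf S ≤ i + 1 := Nat.sInf_le hmem
        have hIS : sInf S ∈ S := Nat.sInf_mem ⟨_, hmem⟩
        have heq : sInf S = i + 1 := by
          rcases Nat.eq_or_lt_of_le hle with h | h
          · exact h
          · exfalso
            have hle2 : sInf S ≤ f (f i) := by
              rw [hffi]; omega
            have := cd_high hf hx hy hIS.1 hle2
            have := hIS.2
            omega
        unfold fret
        rw [← hS, heq]
        omega
      have := lvis_fret hB hfio
      rw [h1] at this
      rw [this]
  · unfold matchOf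
    rw [if_neg hi]
    exact (hf.1.2.2.2 i hi).symm

end CDtoBallot

/-! ### Euler class via the opener statistic -/

lemma cd_euler {n : ℕ} {f : ℕ → ℕ} (hf : IsCD n f) :
    eulerClass n f = 2 * (((openers n f).filter (fun i => Even i)).card : ℤ)
      - ((openers n f).card : ℤ) - 1 := by
  unfold eulerClass
  have h1 : ∑ i ∈ Finset.range (2*n),
      (if i < f i then (if Even i then (1:ℤ) else -1) else 0)
      = ∑ i ∈ openers n f, (if Even i then (1:ℤ) else -1) := by
    unfold openers
    rw [Finset.sum_filter]
  rw [h1]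
  have h2 : ∀ i ∈ openers n f, (if Even i then (1:ℤ) else -1)
      = (if Even i then (1:ℤ) else 0) - (if ¬ Even i then (1:ℤ) else 0) := by
    intro i _
    by_cases h : Even i <;> simp [h]
  rw [Finset.sum_congr rfl h2, Finset.sum_sub_distrib, Finset.sum_boole, Finset.sum_boole]
  have h3 := Finset.card_filter_add_card_filter_not
    (s := openers n f) (p := fun i => Even i)
  push_cast
  push_cast at h3
  omega

/-! ### Final arithmetic -/

lemma key_identity (n k : ℕ) (hn : 1 ≤ n) (hk : k ≤ n - 1) :
    (n : ℤ) * Oz (n-1) 0 ((k : ℤ)+1)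
      = (n.choose (k+1) : ℤ) * (n.choose k : ℤ) := by
  obtain ⟨m, rfl⟩ : ∃ m, n = m+1 := ⟨n-1, by omega⟩
  have hkm : k ≤ m := by omega
  have e0 : (m+1-1 : ℕ) = m := by omega
  rw [e0]
  unfold Oz
  have e1 : (k:ℤ)+1-1 = (k:ℤ) := by ring
  have e2 : (k:ℤ)+1-0-1 = (k:ℤ) := by ring
  have e3 : (k:ℤ)+1-0-2 = (k:ℤ)-1 := by ring
  rw [e1, e2, e3, ch_coe]
  have e4 : (k:ℤ)+1 = ((k+1 : ℕ) : ℤ) := by push_cast; ring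
  rw [e4, ch_coe]
  rcases Nat.eq_zero_or_pos k with rfl | hk1
  · -- k = 0
    rw [ch_neg (by norm_num : ((0:ℕ):ℤ) - 1 < 0)]
    simp [Nat.choose_one_right]
  · obtain ⟨j, rfl⟩ : ∃ j, k = j+1 := ⟨k-1, by omega⟩
    have e5 : ((j+1 : ℕ):ℤ) - 1 = ((j : ℕ) : ℤ) := by push_cast; ring
    rw [e5, ch_coe]
    rcases Nat.eq_or_lt_of_le hkm with h | h
    · -- k = m
      obtain rfl : m = j + 1 := h.symm
      have c1 : (j+1).choose (j+1) = 1 := Nat.choose_self _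
      have c2 : (j+1).choose (j+1+1) = 0 := Nat.choose_succ_self _
      have c3 : (j+1+1).choose (j+1+1) = 1 := Nat.choose_self _
      have c4 : (j+1+1).choose (j+1) = j+1+1 := Nat.choose_succ_self_right _
      rw [c1, c2, c3, c4]
      push_cast
      ring
    · -- j+1 < m, i.e. j+2 ≤ m : the generic case, prove in ℚ
      have hj2 : j + 2 ≤ m := by omega
      obtain ⟨d, rfl⟩ : ∃ d, m = j + 2 + d := ⟨m - (j+2), by omega⟩
      have hQ : ((j+2+d+1 : ℕ) : ℚ) * ((((j+2+d).choose (j+1) : ℕ) : ℚ)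
            * (((j+2+d).choose (j+1) : ℕ) : ℚ)
            - (((j+2+d).choose (j+2) : ℕ) : ℚ) * (((j+2+d).choose j : ℕ) : ℚ))
          = (((j+2+d+1).choose (j+2) : ℕ) : ℚ) * (((j+2+d+1).choose (j+1) : ℕ) : ℚ) := by
        set a : ℚ := ((j+2+d).choose j : ℚ) with ha
        set b : ℚ := ((j+2+d).choose (j+1) : ℚ) with hb
        set c : ℚ := ((j+2+d).choose (j+2) : ℚ) with hc
        have h1 : b * ((j:ℚ)+1) = a * ((d:ℚ)+2) := by
          have := Nat.choose_succ_right_eq (j+2+d) j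
          have he : j+2+d - j = d+2 := by omega
          rw [he] at this
          have := congrArg (fun x : ℕ => (x : ℚ)) this
          push_cast at this
          rw [ha, hb]
          linarith
        have h2 : c * ((j:ℚ)+2) = b * ((d:ℚ)+1) := by
          have := Nat.choose_succ_right_eq (j+2+d) (j+1)
          have he : j+2+d - (j+1) = d+1 := by omega
          rw [he] at this
          have := congrArg (fun x : ℕ => (x : ℚ)) this
          push_cast at this
          rw [hb, hc]
          linarith
        have hp1 : (((j+2+d+1).choose (j+1) : ℕ) : ℚ) = a + b := by
          have : (j+2+d+1).choose (j+1) = (j+2+d).choose j + (j+2+d).choose (j+1) :=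
            Nat.choose_succ_succ _ _
          rw [this]; push_cast; rw [ha, hb]
        have hp2 : (((j+2+d+1).choose (j+2) : ℕ) : ℚ) = b + c := by
          have : (j+2+d+1).choose (j+2) = (j+2+d).choose (j+1) + (j+2+d).choose (j+2) :=
            Nat.choose_succ_succ _ _
          rw [this]; push_cast; rw [hb, hc]
        rw [hp1, hp2]
        have hd0 : ((d:ℚ)+2) ≠ 0 := by positivity
        apply mul_left_cancel₀ hd0
        push_cast
        linear_combination (((j:ℚ)+2+d+1+1) * c + b) * h1 - b * ((j:ℚ)+2+d+1) * h2
      -- transfer from ℚ to ℤ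
      have hZ := hQ
      push_cast at hZ ⊢
      exact_mod_cast hZ

/-- The number of chord diagrams of `n` chords with relative euler class
`e = 2k - (n-1)` is the shifted Narayana number `N(n,k+1) = (1/n)·C(n,k+1)·C(n,k)`. -/
theorem stmt12 (n k : ℕ) (hn : 1 ≤ n) (hk : k ≤ n - 1) :
    {f : ℕ → ℕ | IsCD n f ∧ eulerClass n f = 2*(k:ℤ) - ((n:ℤ) - 1)}.ncard
      = n.choose (k+1) * n.choose k / n := by
  classical
  -- Step 1: replace the euler-class condition by the opener statistic
  have hseteq : {f : ℕ → ℕ | IsCD n f ∧ eulerClass n f = 2*(k:ℤ) - ((n:ℤ) - 1)}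
      = {f : ℕ → ℕ | IsCD n f ∧
          ((openers n f).filter (fun i => Even i)).card = k+1} := by
    ext f
    simp only [Set.mem_setOf_eq, and_congr_right_iff]
    intro hf
    rw [cd_euler hf]
    have hcard : (openers n f).card = n := (cd_isBallot hf).2.1
    rw [hcard]
    constructor
    · intro h; omega
    · intro h; rw [h]; push_cast; ring
  rw [hseteq]
  set S := {f : ℕ → ℕ | IsCD n f ∧ ((openers n f).filter (fun i => Even i)).card = k+1}
    with hSdef
  -- Step 2: the opener map is a bijection onto Slhp (2n) 0 (k+1)
  have himg : (fun f => openers n f) '' S = ↑(Slhp (2*n) 0 (k+1)) := by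
    ext O
    simp only [Set.mem_image, Finset.coe_sort_coe, Finset.mem_coe, mem_Slhp]
    constructor
    · rintro ⟨f, ⟨hf, hev⟩, rfl⟩
      have hB := cd_isBallot hf
      exact ⟨hB.1, hB.2.2, by rw [hB.2.1]; ring, hev⟩
    · rintro ⟨hsub, hbal, hcard, hev⟩
      have hB : IsBallot n O := ⟨hsub, by omega, hbal⟩
      refine ⟨matchOf n O, ⟨matchOf_isCD hB, ?_⟩, ?_⟩
      · have := matchOf_openers hB
        unfold openers
        rw [this, hev]
      · unfold openers
        exact matchOf_openers hB
  have hinj : Set.InjOn (fun f => openers n f) S := by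
    intro f1 hf1 f2 hf2 h
    simp only [hSdef, Set.mem_setOf_eq] at hf1 hf2
    have e1 : matchOf n (openers n f1) = f1 := cd_matchOf hf1.1
    have e2 : matchOf n (openers n f2) = f2 := cd_matchOf hf2.1
    simp only at h
    rw [← e1, ← e2, h]
  have hncard : S.ncard = (Slhp (2*n) 0 (k+1)).card := by
    rw [← Set.ncard_image_of_injOn hinj, himg, Set.ncard_coe_finset]
  rw [hncard]
  -- Step 3: arithmetic
  have hcount : ((Slhp (2*n) 0 (k+1)).card : ℤ) = Oz (n-1) 0 ((k : ℤ)+1) := by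
    rw [count_even n (k+1) hn]
    norm_num
  have hkey := key_identity n k hn hk
  have hmul : n.choose (k+1) * n.choose k = n * (Slhp (2*n) 0 (k+1)).card := by
    have : ((n.choose (k+1) * n.choose k : ℕ) : ℤ)
        = ((n * (Slhp (2*n) 0 (k+1)).card : ℕ) : ℤ) := by
      push_cast
      rw [hcount, ← hkey]
    exact_mod_cast this
  rw [hmul, Nat.mul_div_cancel_left _ (by omega : 0 < n)]
end

section
/- Define d_i for 0 ≤ i ≤ n_- - 1 on words in W(n_-, n_+) by deleting the (i+1)'th minus sign, and d_{n_-} by deleting the final symbol if it is a minus sign and returning 0 otherwise; extend linearly over Z_2 and set d = Σ_{i=0}^{n_-} d_i. Then d ∘ d = 0. -/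
/-- The boundary of a word `w` with `n₋` minus signs: the mod-2 sum over
`i = 0, …, n₋ - 1` of the word with the `(i+1)`'th minus sign deleted,
plus (term `i = n₋`) the word with the final symbol deleted if that symbol is
a minus sign (and `0` otherwise). -/
noncomputable def dWord (w : List Bool) : List Bool →₀ ZMod 2 :=
  (∑ i ∈ Finset.range (w.count false),
    Finsupp.single (w.eraseIdx ((minusPos w).getD i 0)) (1 : ZMod 2))
  + (if w.getLast? = some false then Finsupp.single w.dropLast (1 : ZMod 2) else 0)

/-- The boundary map `d = Σ dᵢ` on the free `ℤ/2` vector space on words. -/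
noncomputable def bd : (List Bool →₀ ZMod 2) →ₗ[ZMod 2] (List Bool →₀ ZMod 2) :=
  Finsupp.lift (List Bool →₀ ZMod 2) (ZMod 2) (List Bool) dWord


-- auxiliary
lemma minusPos_cons (a : Bool) (w : List Bool) :
    minusPos (a :: w) =
      (if a = false then [0] else []) ++ (minusPos w).map Nat.succ := by
  unfold minusPos
  rw [List.length_cons, List.range_succ_eq_map, List.filter_cons, List.filter_map]
  have : (fun i => decide ((a :: w).getD i true = false)) ∘ Nat.succ
      = fun i => decide (w.getD i true = false) := by
    funext i; simp
  rw [this]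
  by_cases h : a = false <;> simp [h]

lemma minusPos_length (w : List Bool) : (minusPos w).length = w.count false := by
  induction w with
  | nil => rfl
  | cons a w ih =>
    rw [minusPos_cons]
    by_cases h : a = false <;>
      simp [h, ih, List.count_cons]

lemma minusPos_nodup (w : List Bool) : (minusPos w).Nodup :=
  List.nodup_range.filter _

lemma sum_range_getD {M : Type*} [AddCommMonoid M] (l : List ℕ) (f : ℕ → M) :
    ∑ i ∈ Finset.range l.length, f (l.getD i 0) = (l.map f).sum := by
  induction l with
  | nil => simp
  | cons a l ih =>
    rw [List.length_cons, Finset.sum_range_succ']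
    simp only [List.getD_cons_succ, List.getD_cons_zero, ih, List.map_cons, List.sum_cons]
    exact add_comm _ _

def Sset (w : List Bool) : Finset ℕ :=
  (Finset.range w.length).filter (fun p => w.getD p true = false ∧ p + 1 ≠ w.length)

lemma mem_Sset {w : List Bool} {p : ℕ} :
    p ∈ Sset w ↔ p < w.length ∧ w.getD p true = false ∧ p + 1 ≠ w.length := by
  simp [Sset, Finset.mem_filter, Finset.mem_range, and_assoc]

noncomputable def D (w : List Bool) : List Bool →₀ ZMod 2 :=
  ∑ p ∈ Sset w, Finsupp.single (w.eraseIdx p) (1 : ZMod 2)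

lemma getD_eraseIdx (w : List Bool) (p q : ℕ) :
    (w.eraseIdx p).getD q true = if q < p then w.getD q true else w.getD (q + 1) true := by
  simp only [List.getD_eq_getElem?_getD, List.getElem?_eraseIdx]
  split <;> rfl

lemma single_add_single_self (x : List Bool) :
    Finsupp.single x (1 : ZMod 2) + Finsupp.single x (1 : ZMod 2) = 0 := by
  rw [← Finsupp.single_add]
  have h : (1 : ZMod 2) + 1 = 0 := by decide
  rw [h, Finsupp.single_zero]

lemma dWord_eq_D (w : List Bool) : dWord w = D w := by
  have hconv : (∑ i ∈ Finset.range (w.count false),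
      Finsupp.single (w.eraseIdx ((minusPos w).getD i 0)) (1 : ZMod 2))
      = ∑ p ∈ (minusPos w).toFinset, Finsupp.single (w.eraseIdx p) (1 : ZMod 2) := by
    rw [← minusPos_length]
    exact (sum_range_getD (minusPos w) (fun p => Finsupp.single (w.eraseIdx p) 1)).trans
      (List.sum_toFinset _ (minusPos_nodup w)).symm
  have hmem : ∀ p : ℕ, p ∈ (minusPos w).toFinset ↔ p < w.length ∧ w.getD p true = false := by
    intro p
    simp [minusPos, List.mem_filter, List.mem_range]
  unfold dWord D
  rw [hconv]
  by_cases h : w.getLast? = some false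
  · -- last symbol is a minus
    have hn : w.length ≠ 0 := by
      intro h0
      rw [List.length_eq_zero_iff] at h0
      subst h0; simp at h
    have hlast : w.getD (w.length - 1) true = false := by
      rw [List.getD_eq_getElem?_getD, ← List.getLast?_eq_getElem?, h]; rfl
    have hsplit : (minusPos w).toFinset = insert (w.length - 1) (Sset w) := by
      ext p
      rw [hmem, Finset.mem_insert, mem_Sset]
      constructor
      · rintro ⟨hp, hfalse⟩
        by_cases hp1 : p + 1 = w.length
        · left; omega
        · right; exact ⟨hp, hfalse, hp1⟩
      · rintro (rfl | ⟨hp, hfalse, _⟩)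
        · exact ⟨by omega, hlast⟩
        · exact ⟨hp, hfalse⟩
    have hnot : w.length - 1 ∉ Sset w := by
      rw [mem_Sset]
      rintro ⟨_, _, hne⟩
      omega
    rw [hsplit, Finset.sum_insert hnot, if_pos h]
    have hdrop : w.dropLast = w.eraseIdx (w.length - 1) :=
      List.dropLast_eq_eraseIdx (by omega)
    rw [hdrop, add_comm (Finsupp.single _ _), add_assoc, single_add_single_self, add_zero]
  · -- last symbol is not a minus
    have hsame : (minusPos w).toFinset = Sset w := by
      ext p
      rw [hmem, mem_Sset]
      constructor
      · rintro ⟨hp, hfalse⟩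
        refine ⟨hp, hfalse, ?_⟩
        intro hp1
        apply h
        rw [List.getLast?_eq_getElem?]
        have : p = w.length - 1 := by omega
        subst this
        have hlt : w.length - 1 < w.length := by omega
        rw [List.getElem?_eq_getElem hlt]
        rw [List.getD_eq_getElem?_getD, List.getElem?_eq_getElem hlt] at hfalse
        simp only [Option.getD_some] at hfalse
        rw [hfalse]
      · rintro ⟨hp, hfalse, _⟩
        exact ⟨hp, hfalse⟩
    rw [hsame, if_neg h, add_zero]

lemma eraseIdx_eraseIdx (w : List Bool) (p q : ℕ) (hqp : q < p) :
    (w.eraseIdx p).eraseIdx q = (w.eraseIdx q).eraseIdx (p - 1) := by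
  apply List.ext_getElem?
  intro j
  simp only [List.getElem?_eraseIdx]
  split_ifs <;> first | rfl | omega

lemma bd_single (x : List Bool) : bd (Finsupp.single x (1 : ZMod 2)) = dWord x := by
  simp [bd, Finsupp.lift_apply, Finsupp.sum_single_index]

lemma bd_dWord (w : List Bool) : bd (dWord w) = 0 := by
  rw [dWord_eq_D]
  unfold D
  rw [map_sum]
  simp only [bd_single, dWord_eq_D]
  unfold D
  rw [Finset.sum_sigma']
  apply Finset.sum_involution
    (g := fun (x : Σ _ : ℕ, ℕ) (_ : x ∈ (Sset w).sigma fun p => Sset (w.eraseIdx p)) =>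
      if x.2 < x.1 then (⟨x.2, x.1 - 1⟩ : Σ _ : ℕ, ℕ) else ⟨x.2 + 1, x.1⟩)
  · -- sum of pair is zero
    rintro ⟨p, q⟩ ha
    dsimp only
    rw [Finset.mem_sigma] at ha
    obtain ⟨hp, hq⟩ := ha
    by_cases hqp : q < p
    · simp only [if_pos hqp]
      rw [eraseIdx_eraseIdx w p q hqp]
      exact single_add_single_self _
    · simp only [if_neg hqp]
      rw [eraseIdx_eraseIdx w (q + 1) p (by omega)]
      simp only [Nat.add_sub_cancel]
      exact single_add_single_self _
  · -- no fixed points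
    rintro ⟨p, q⟩ ha _
    dsimp only
    by_cases hqp : q < p
    · rw [if_pos hqp]
      intro hcontra
      have h1 : q = p := congrArg Sigma.fst hcontra
      omega
    · rw [if_neg hqp]
      intro hcontra
      have h1 : q + 1 = p := congrArg Sigma.fst hcontra
      omega
  · -- g maps into the index set
    rintro ⟨p, q⟩ ha
    obtain ⟨hp, hq⟩ := Finset.mem_sigma.mp ha
    dsimp only at hp hq
    rw [mem_Sset] at hp hq
    obtain ⟨hp1, hp2, hp3⟩ := hp
    obtain ⟨hq1, hq2, hq3⟩ := hq
    rw [List.length_eraseIdx, if_pos hp1] at hq1 hq3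
    rw [getD_eraseIdx] at hq2
    dsimp only
    by_cases hqp : q < p
    · rw [if_pos hqp] at hq2 ⊢
      have h1 : q ∈ Sset w := by
        rw [mem_Sset]; exact ⟨by omega, hq2, by omega⟩
      have h2 : p - 1 ∈ Sset (w.eraseIdx q) := by
        rw [mem_Sset, List.length_eraseIdx, if_pos (by omega : q < w.length)]
        refine ⟨by omega, ?_, by omega⟩
        rw [getD_eraseIdx, if_neg (by omega)]
        have hpp : p - 1 + 1 = p := by omega
        rw [hpp]
        exact hp2
      exact Finset.mem_sigma.mpr ⟨h1, h2⟩
    · rw [if_neg hqp] at hq2 ⊢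
      have h1 : q + 1 ∈ Sset w := by
        rw [mem_Sset]; exact ⟨by omega, hq2, by omega⟩
      have h2 : p ∈ Sset (w.eraseIdx (q + 1)) := by
        rw [mem_Sset, List.length_eraseIdx, if_pos (by omega : q + 1 < w.length)]
        refine ⟨by omega, ?_, by omega⟩
        rw [getD_eraseIdx, if_pos (by omega)]
        exact hp2
      exact Finset.mem_sigma.mpr ⟨h1, h2⟩
  · -- involution
    rintro ⟨p, q⟩ ha
    dsimp only
    by_cases hqp : q < p
    · rw [if_pos hqp]
      dsimp only
      rw [if_neg (by omega : ¬ p - 1 < q)]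
      have h1 : p - 1 + 1 = p := by omega
      rw [h1]
    · rw [if_neg hqp]
      dsimp only
      rw [if_pos (by omega : p < q + 1)]
      rw [Nat.add_sub_cancel]

/-- The boundary map `d`, deleting minus signs as specified, squares to
zero. -/
theorem stmt18 : bd.comp bd = 0 := by
  apply Finsupp.lhom_ext
  intro a b
  have hb : (Finsupp.single a b : List Bool →₀ ZMod 2) = b • Finsupp.single a 1 := by
    rw [Finsupp.smul_single', mul_one]
  simp only [LinearMap.comp_apply, LinearMap.zero_apply, hb, map_smul, bd_single, bd_dWord,
    smul_zero]
end
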